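/- arXiv:1311.3143 — 9 statements merged into one kernel-verified Lean document; each statement's English description precedes it below -/
import Mathlib

section
/- Let R be a commutative ring, d ≥ 2, and let α_1,…,α_d be types. Let E_k : α_k → R for k = 1,…,d, let F : α_1 → R, and for each i = 2,…,d let A_i : α_{i-1} → R and B_i : α_i → R. Define the cascadic sum H : α_1 × ⋯ × α_d → R by H(x_1,…,x_d) = F(x_1)·∏_{k=2}^d E_k(x_k) + Σ_{i=2}^d (∏_{k=1}^{i-2} E_k(x_k))·A_i(x_{i-1})·B_i(x_i)·(∏_{k=i+1}^d E_k(x_k)). Define cores G_1(x_1) = [E_1(x_1), A_2(x_1), F(x_1)] (a 1×3 row matrix), G_i(x_i) = [[E_i(x_i), A_{i+1}(x_i), 0], [0, 0, B_i(x_i)], [0, 0, E_i(x_i)]] (a 3×3 matrix) for 2 ≤ i ≤ d−1, and G_d(x_d) = [0; B_d(x_d); E_d(x_d)] (a 3×1 column matrix). Then for all (x_1,…,x_d), H(x_1,…,x_d) equals the unique entry of the matrix product G_1(x_1)·G_2(x_2)⋯G_d(x_d). In particular, H admits a TT representation with all ranks equal to 3. -/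
set_option maxHeartbeats 1000000

open scoped BigOperators

def IsTTRep {R : Type*} [CommRing R] {d : ℕ} {α : Fin d → Type*}
    (f : (∀ i, α i) → R) (r : Fin (d + 1) → ℕ) : Prop :=
  r 0 = 1 ∧ r (Fin.last d) = 1 ∧
    ∃ G : ∀ i : Fin d, α i → Matrix (Fin (r i.castSucc)) (Fin (r i.succ)) R,
      ∀ x : ∀ i, α i,
        f x = ∑ β : ∀ j : Fin (d + 1), Fin (r j),
                ∏ i : Fin d, G i (x i) (β i.castSucc) (β i.succ)

lemma filter_prod_eq {R : Type*} [CommRing R] {N : ℕ} (g : Fin N → R) (e : ℕ → R)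
    (hge : ∀ k : Fin N, g k = e ↑k) (p : ℕ → Prop) [DecidablePred p] (s : Finset ℕ)
    (hs : ∀ k, k ∈ s ↔ k < N ∧ p k) :
    ∏ k ∈ Finset.univ.filter (fun k : Fin N => p ↑k), g k = ∏ k ∈ s, e k := by
  rw [Finset.prod_filter]
  rw [show (fun k : Fin N => if p ↑k then g k else 1)
      = fun k : Fin N => (fun m => if p m then e m else 1) ↑k from
    funext fun k => by rw [hge]]
  rw [Fin.prod_univ_eq_prod_range (fun m => if p m then e m else 1) N]
  rw [← Finset.prod_filter]
  refine Finset.prod_congr ?_ fun _ _ => rfl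
  ext k
  simp only [Finset.mem_filter, Finset.mem_range, hs]

lemma rowvec {R : Type*} [CommRing R] (e a b : ℕ → R) (f : R) : ∀ n : ℕ,
    !![e 0, a 0, f] *
      (List.ofFn (fun m : Fin n =>
        !![e ((m:ℕ)+1), a ((m:ℕ)+1), 0; 0, 0, b (m:ℕ); 0, 0, e ((m:ℕ)+1)])).prod
    = !![∏ k ∈ Finset.range (n+1), e k,
         (∏ k ∈ Finset.range n, e k) * a n,
         f * (∏ k ∈ Finset.Ico 1 (n+1), e k)
           + ∑ j ∈ Finset.range n,
               (∏ k ∈ Finset.range j, e k) * a j * b j * ∏ k ∈ Finset.Ico (j+2) (n+1), e k] := by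
  intro n
  induction n with
  | zero => simp
  | succ n ih =>
    rw [List.ofFn_succ', List.prod_concat, ← Matrix.mul_assoc]
    simp only [Fin.coe_castSucc, Fin.val_last]
    rw [ih]
    ext i j
    fin_cases i
    fin_cases j <;>
      simp [Matrix.mul_apply, Fin.sum_univ_succ, Finset.prod_range_succ, Finset.sum_range_succ,
        Finset.prod_Ico_succ_top (by omega : 1 ≤ n+1)]
    all_goals try ring
    have hsum : ∑ x ∈ Finset.range n,
          (∏ k ∈ Finset.range x, e k) * a x * b x * ∏ k ∈ Finset.Ico (2 + x) (2 + n), e k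
        = ∑ x ∈ Finset.range n,
          ((∏ k ∈ Finset.range x, e k) * a x * b x * ∏ k ∈ Finset.Ico (2 + x) (1 + n), e k) * e (1+n) := by
      refine Finset.sum_congr rfl fun x hx => ?_
      rw [show (2+n) = (1+n)+1 from by omega]
      rw [Finset.prod_Ico_succ_top (by simp at hx; omega)]
      ring
    rw [hsum, ← Finset.sum_mul]

lemma sum_swap3 {R : Type*} [CommRing R] {N : ℕ} (f : Fin N → Fin N → Fin N → R) :
    ∑ u, ∑ q, ∑ v, f u q v = ∑ v, ∑ q, ∑ u, f u q v := by
  rw [Finset.sum_comm]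
  refine (Finset.sum_congr rfl fun q _ => Finset.sum_comm).trans ?_
  rw [Finset.sum_comm]

lemma pathsum_uniform {R : Type*} [CommRing R] {N : ℕ} :
    ∀ (m : ℕ) (row : Fin N → R) (C : Fin m → Matrix (Fin N) (Fin N) R) (col : Fin N → R),
    ∑ γ : Fin (m+1) → Fin N,
      row (γ 0) * (∏ i : Fin m, C i (γ i.castSucc) (γ i.succ)) * col (γ (Fin.last m))
    = ∑ p, ∑ q, row p * (List.ofFn C).prod p q * col q := by
  intro m
  induction m with
  | zero =>
    intro row C col
    rw [← Equiv.sum_comp (Equiv.funUnique (Fin 1) (Fin N)).symm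
      (fun γ => row (γ 0) * (∏ i : Fin 0, C i (γ i.castSucc) (γ i.succ)) * col (γ (Fin.last 0)))]
    simp [Matrix.one_apply]
  | succ m ih =>
    intro row C col
    rw [← Equiv.sum_comp (Fin.consEquiv (fun _ : Fin (m+2) => Fin N))
      (fun γ => row (γ 0) * (∏ i : Fin (m+1), C i (γ i.castSucc) (γ i.succ)) * col (γ (Fin.last (m+1))))]
    rw [Fintype.sum_prod_type]
    have key : ∀ (v : Fin N) (γ' : Fin (m+1) → Fin N),
        (fun γ : Fin (m+2) → Fin N => row (γ 0) * (∏ i : Fin (m+1), C i (γ i.castSucc) (γ i.succ)) * col (γ (Fin.last (m+1))))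
          (Fin.consEquiv (fun _ : Fin (m+2) => Fin N) (v, γ'))
        = row v * (C 0 v (γ' 0) * ∏ i : Fin m, C i.succ (γ' i.castSucc) (γ' i.succ)) * col (γ' (Fin.last m)) := by
      intro v γ'
      simp only [Fin.consEquiv_apply, Fin.prod_univ_succ, Fin.cons_zero, Fin.castSucc_zero,
        Fin.cons_succ, ← Fin.succ_castSucc, ← Fin.succ_last]
    simp only [key]
    calc ∑ v, ∑ γ' : Fin (m+1) → Fin N,
          row v * (C 0 v (γ' 0) * ∏ i : Fin m, C i.succ (γ' i.castSucc) (γ' i.succ)) * col (γ' (Fin.last m))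
        = ∑ γ' : Fin (m+1) → Fin N,
            (∑ v, row v * C 0 v (γ' 0)) * (∏ i : Fin m, C i.succ (γ' i.castSucc) (γ' i.succ)) * col (γ' (Fin.last m)) := by
          rw [Finset.sum_comm]
          refine Finset.sum_congr rfl fun γ' _ => ?_
          rw [Finset.sum_mul, Finset.sum_mul]
          exact Finset.sum_congr rfl fun v _ => by ring
      _ = ∑ p, ∑ q, (∑ v, row v * C 0 v p) * (List.ofFn fun i => C i.succ).prod p q * col q :=
          ih (fun u => ∑ v, row v * C 0 v u) (fun i => C i.succ) col
      _ = ∑ p, ∑ q, row p * (List.ofFn C).prod p q * col q := by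
          rw [List.ofFn_succ, List.prod_cons]
          simp only [Matrix.mul_apply, Finset.sum_mul, Finset.mul_sum]
          rw [sum_swap3]
          refine Finset.sum_congr rfl fun p _ => Finset.sum_congr rfl fun q _ =>
            Finset.sum_congr rfl fun u _ => by ring

def ttCores {R : Type*} [CommRing R] {n : ℕ} {α : Fin (n + 2) → Type*}
    (E : ∀ k : Fin (n + 2), α k → R) (F : α 0 → R)
    (A : ∀ j : Fin (n + 1), α j.castSucc → R)
    (B : ∀ j : Fin (n + 1), α j.succ → R) :
    ∀ i : Fin (n+2), α i → Matrix
      (Fin (if ((i.castSucc : Fin (n+3)) : ℕ) = 0 ∨ ((i.castSucc : Fin (n+3)) : ℕ) = n + 2 then 1 else 3))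
      (Fin (if ((i.succ : Fin (n+3)) : ℕ) = 0 ∨ ((i.succ : Fin (n+3)) : ℕ) = n + 2 then 1 else 3)) R :=
  fun i => Fin.cases
    (motive := fun i : Fin (n+2) => α i → Matrix
      (Fin (if ((i.castSucc : Fin (n+3)) : ℕ) = 0 ∨ ((i.castSucc : Fin (n+3)) : ℕ) = n + 2 then 1 else 3))
      (Fin (if ((i.succ : Fin (n+3)) : ℕ) = 0 ∨ ((i.succ : Fin (n+3)) : ℕ) = n + 2 then 1 else 3)) R)
    (fun y => (!![E 0 y, A 0 y, F y]).submatrix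
      (Fin.cast (by simp)) (Fin.cast (by rw [if_neg] <;> simp <;> omega)))
    (fun j => Fin.lastCases
      (motive := fun j : Fin (n+1) => α j.succ → Matrix
        (Fin (if ((j.succ.castSucc : Fin (n+3)) : ℕ) = 0 ∨ ((j.succ.castSucc : Fin (n+3)) : ℕ) = n + 2 then 1 else 3))
        (Fin (if ((j.succ.succ : Fin (n+3)) : ℕ) = 0 ∨ ((j.succ.succ : Fin (n+3)) : ℕ) = n + 2 then 1 else 3)) R)
      (fun y => (!![(0:R); B (Fin.last n) y; E (Fin.last (n+1)) y]).submatrix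
        (Fin.cast (by rw [if_neg] <;> simp [Fin.last] <;> omega)) (Fin.cast (by rw [if_pos] <;> simp [Fin.last] <;> omega)))
      (fun k y => (!![E k.succ.castSucc y, A k.succ y, 0;
                      0, 0, B k.castSucc y;
                      0, 0, E k.succ.castSucc y]).submatrix
        (Fin.cast (by rw [if_neg] <;> simp <;> omega)) (Fin.cast (by rw [if_neg] <;> simp <;> omega)))
      j) i

def ttEquiv (n : ℕ) :
    (Fin (n+1) → Fin 3) ≃ (∀ j : Fin (n+3), Fin (if (j : ℕ) = 0 ∨ (j : ℕ) = n + 2 then 1 else 3)) where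
  toFun γ j := ⟨if h : (j : ℕ) = 0 ∨ (j : ℕ) = n + 2 then 0 else (γ ⟨(j : ℕ) - 1, by omega⟩).val, by
    split_ifs with h
    · omega
    · exact (γ _).isLt⟩
  invFun β t := ⟨(β t.succ.castSucc).val, by
    have h := (β t.succ.castSucc).isLt
    have h2 : (if ((t.succ.castSucc : Fin (n+3)) : ℕ) = 0 ∨ ((t.succ.castSucc : Fin (n+3)) : ℕ) = n + 2 then 1 else 3) = 3 :=
      if_neg (by simp <;> omega)
    omega⟩
  left_inv γ := by
    funext t
    apply Fin.ext
    show dite _ _ _ = _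
    rw [dif_neg (by simp <;> omega)]
    congr 1 <;> apply Fin.ext <;> simp
  right_inv β := by
    funext j
    apply Fin.ext
    show dite _ _ _ = _
    by_cases h : (j : ℕ) = 0 ∨ (j : ℕ) = n + 2
    · rw [dif_pos h]
      have hlt := (β j).isLt
      have h2 : (if (j : ℕ) = 0 ∨ (j : ℕ) = n + 2 then 1 else 3) = 1 := if_pos h
      omega
    · rw [dif_neg h]
      have hj : ((⟨(j : ℕ) - 1, by omega⟩ : Fin (n+1)).succ.castSucc : Fin (n+3)) = j := by
        apply Fin.ext; simp <;> omega
      show (β (⟨(j : ℕ) - 1, by omega⟩ : Fin (n+1)).succ.castSucc).val = (β j).val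
      exact congrArg (fun jj => (β jj).val) hj


/-- **Rank-3 TT decomposition of the cascadic sum** (Lemma 4.3 of the paper).
The dimension is `d = n + 2 ≥ 2`; positions are 0-based, and the pair terms
(indexed by `j : Fin (n+1)`) act on the adjacent positions `j.castSucc`, `j.succ`.
`H` equals the unique entry of the product of the explicit rank-3 cores, and in
particular admits a TT representation with all (interior) ranks equal to 3. -/
theorem cascadic_sum_rank_three {R : Type*} [CommRing R] (n : ℕ)
    (α : Fin (n + 2) → Type*)
    (E : ∀ k : Fin (n + 2), α k → R) (F : α 0 → R)
    (A : ∀ j : Fin (n + 1), α j.castSucc → R)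
    (B : ∀ j : Fin (n + 1), α j.succ → R)
    (H : (∀ i, α i) → R)
    (hH : ∀ x : ∀ i, α i,
      H x = F (x 0) *
              ∏ k ∈ Finset.univ.filter (fun k : Fin (n + 2) => 1 ≤ (k : ℕ)), E k (x k)
          + ∑ j : Fin (n + 1),
              (∏ k ∈ Finset.univ.filter (fun k : Fin (n + 2) => (k : ℕ) < (j : ℕ)), E k (x k))
              * A j (x j.castSucc) * B j (x j.succ)
              * ∏ k ∈ Finset.univ.filter (fun k : Fin (n + 2) => (j : ℕ) + 1 < (k : ℕ)),
                  E k (x k)) :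
    (∀ x : ∀ i, α i,
      H x = (!![E 0 (x 0), A 0 (x ((0 : Fin (n + 1)).castSucc)), F (x 0)] *
             (List.ofFn (fun m : Fin n =>
               !![E m.succ.castSucc (x m.succ.castSucc), A m.succ (x m.succ.castSucc), 0;
                  0, 0, B m.castSucc (x m.castSucc.succ);
                  0, 0, E m.succ.castSucc (x m.succ.castSucc)])).prod *
             !![(0 : R); B (Fin.last n) (x (Fin.last n).succ);
                E (Fin.last (n + 1)) (x (Fin.last (n + 1)))]) 0 0)
    ∧ IsTTRep H (fun j : Fin (n + 3) => if (j : ℕ) = 0 ∨ (j : ℕ) = n + 2 then 1 else 3) := by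
  classical
  have part1 : ∀ x : ∀ i, α i,
      H x = (!![E 0 (x 0), A 0 (x ((0 : Fin (n + 1)).castSucc)), F (x 0)] *
             (List.ofFn (fun m : Fin n =>
               !![E m.succ.castSucc (x m.succ.castSucc), A m.succ (x m.succ.castSucc), 0;
                  0, 0, B m.castSucc (x m.castSucc.succ);
                  0, 0, E m.succ.castSucc (x m.succ.castSucc)])).prod *
             !![(0 : R); B (Fin.last n) (x (Fin.last n).succ);
                E (Fin.last (n + 1)) (x (Fin.last (n + 1)))]) 0 0 := by
    intro x
    obtain ⟨e, hge⟩ : ∃ e : ℕ → R, ∀ k : Fin (n+2), e ↑k = E k (x k) :=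
      ⟨fun k => if h : k < n+2 then E ⟨k, h⟩ (x ⟨k, h⟩) else 0, fun k => dif_pos k.isLt⟩
    obtain ⟨a, hgA⟩ : ∃ a : ℕ → R, ∀ j : Fin (n+1), a ↑j = A j (x j.castSucc) :=
      ⟨fun j => if h : j < n+1 then A ⟨j, h⟩ (x ⟨j, by omega⟩) else 0, fun j => dif_pos j.isLt⟩
    obtain ⟨b, hgB⟩ : ∃ b : ℕ → R, ∀ j : Fin (n+1), b ↑j = B j (x j.succ) :=
      ⟨fun j => if h : j < n+1 then B ⟨j, h⟩ (x ⟨j+1, by omega⟩) else 0, fun j => dif_pos j.isLt⟩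
    have hfilter : ∀ (p : ℕ → Prop) [DecidablePred p] (s : Finset ℕ)
        (hs : ∀ k, k ∈ s ↔ k < n+2 ∧ p k),
        ∏ k ∈ Finset.univ.filter (fun k : Fin (n+2) => p ↑k), E k (x k) = ∏ k ∈ s, e k :=
      fun p _ s hs => filter_prod_eq _ e (fun k => (hge k).symm) p s hs
    rw [hH x]
    rw [hfilter (fun m => 1 ≤ m) (Finset.Ico 1 (n+2)) (by intro k; simp <;> omega)]
    have hsum : ∀ j : Fin (n+1),
        (∏ k ∈ Finset.univ.filter (fun k : Fin (n + 2) => (k : ℕ) < (j : ℕ)), E k (x k))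
              * A j (x j.castSucc) * B j (x j.succ)
              * ∏ k ∈ Finset.univ.filter (fun k : Fin (n + 2) => (j : ℕ) + 1 < (k : ℕ)), E k (x k)
        = (fun jj => (∏ k ∈ Finset.range jj, e k) * a jj * b jj
            * ∏ k ∈ Finset.Ico (jj+2) (n+2), e k) ↑j := by
      intro j
      have h2 := j.isLt
      rw [hfilter (fun m => m < ↑j) (Finset.range ↑j) (by intro k; simp <;> omega)]
      rw [hfilter (fun m => ↑j + 1 < m) (Finset.Ico (↑j+2) (n+2)) (by intro k; simp <;> omega)]
      rw [← hgA, ← hgB]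
    rw [Finset.sum_congr rfl (fun j _ => hsum j),
      Fin.sum_univ_eq_sum_range (fun jj => (∏ k ∈ Finset.range jj, e k) * a jj * b jj
            * ∏ k ∈ Finset.Ico (jj+2) (n+2), e k) (n+1)]
    -- rewrite the explicit matrices in terms of e, a, b
    have hrow : !![E 0 (x 0), A 0 (x ((0 : Fin (n + 1)).castSucc)), F (x 0)]
        = !![e 0, a 0, F (x 0)] := by rw [show e 0 = E 0 (x 0) from hge 0, show a 0 = A 0 (x ((0 : Fin (n + 1)).castSucc)) from hgA 0]
    have hmid : (fun m : Fin n =>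
               !![E m.succ.castSucc (x m.succ.castSucc), A m.succ (x m.succ.castSucc), 0;
                  0, 0, B m.castSucc (x m.castSucc.succ);
                  0, 0, E m.succ.castSucc (x m.succ.castSucc)])
        = fun m : Fin n => !![e ((m:ℕ)+1), a ((m:ℕ)+1), (0:R); 0, 0, b (m:ℕ); 0, 0, e ((m:ℕ)+1)] := by
      funext m
      rw [show e ((m:ℕ)+1) = E m.succ.castSucc (x m.succ.castSucc) from hge m.succ.castSucc,
          show a ((m:ℕ)+1) = A m.succ (x m.succ.castSucc) from hgA m.succ,
          show b (m:ℕ) = B m.castSucc (x m.castSucc.succ) from hgB m.castSucc]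
    have hcol : !![(0 : R); B (Fin.last n) (x (Fin.last n).succ);
                E (Fin.last (n + 1)) (x (Fin.last (n + 1)))]
        = !![(0:R); b n; e (n+1)] := by
      rw [show b n = B (Fin.last n) (x (Fin.last n).succ) from hgB (Fin.last n),
          show e (n+1) = E (Fin.last (n + 1)) (x (Fin.last (n + 1))) from hge (Fin.last (n+1))]
    rw [hrow, hmid, hcol, rowvec e a b (F (x 0)) n]
    -- final algebra
    have hmul : (!![∏ k ∈ Finset.range (n+1), e k,
         (∏ k ∈ Finset.range n, e k) * a n,
         F (x 0) * (∏ k ∈ Finset.Ico 1 (n+1), e k)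
           + ∑ j ∈ Finset.range n,
               (∏ k ∈ Finset.range j, e k) * a j * b j * ∏ k ∈ Finset.Ico (j+2) (n+1), e k] *
        !![(0:R); b n; e (n+1)]) 0 0
        = (∏ k ∈ Finset.range n, e k) * a n * b n
          + (F (x 0) * (∏ k ∈ Finset.Ico 1 (n+1), e k)
           + ∑ j ∈ Finset.range n,
               (∏ k ∈ Finset.range j, e k) * a j * b j * ∏ k ∈ Finset.Ico (j+2) (n+1), e k) * e (n+1) := by
      simp [Matrix.mul_apply, Fin.sum_univ_succ]
    rw [hmul]
    rw [Finset.sum_range_succ, Finset.prod_Ico_succ_top (by omega : 1 ≤ n+1),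
      Finset.Ico_self, Finset.prod_empty]
    have hsum2 : ∑ j ∈ Finset.range n,
          (∏ k ∈ Finset.range j, e k) * a j * b j * ∏ k ∈ Finset.Ico (j+2) (n+2), e k
        = ∑ j ∈ Finset.range n,
          ((∏ k ∈ Finset.range j, e k) * a j * b j * ∏ k ∈ Finset.Ico (j+2) (n+1), e k) * e (n+1) := by
      refine Finset.sum_congr rfl fun j hj => ?_
      rw [Finset.prod_Ico_succ_top (by simp at hj; omega : j+2 ≤ n+1)]
      ring
    rw [hsum2, ← Finset.sum_mul]
    ring
  refine ⟨part1, ?_, ?_, ttCores E F A B, fun x => ?_⟩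
  · exact if_pos (Or.inl rfl)
  · exact if_pos (Or.inr rfl)
  · -- part 2 main equation
    have key13 : ∀ (M : Matrix (Fin 1) (Fin 3) R) (p : Fin 1) (q q' : Fin 3),
        (q : ℕ) = (q' : ℕ) → M p q = M 0 q' := by
      intro M p q q' h
      rw [Subsingleton.elim p 0, Fin.ext h]
    have key33 : ∀ (M : Matrix (Fin 3) (Fin 3) R) (p p' q q' : Fin 3),
        (p : ℕ) = (p' : ℕ) → (q : ℕ) = (q' : ℕ) → M p q = M p' q' := by
      intro M p p' q q' hp hq
      rw [Fin.ext hp, Fin.ext hq]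
    have key31 : ∀ (M : Matrix (Fin 3) (Fin 1) R) (p p' : Fin 3) (q : Fin 1),
        (p : ℕ) = (p' : ℕ) → M p q = M p' 0 := by
      intro M p p' q hp
      rw [Subsingleton.elim q 0, Fin.ext hp]
    rw [part1 x]
    set rowM : Matrix (Fin 1) (Fin 3) R :=
      !![E 0 (x 0), A 0 (x ((0 : Fin (n + 1)).castSucc)), F (x 0)] with hrowM
    set C : Fin n → Matrix (Fin 3) (Fin 3) R := fun m =>
      !![E m.succ.castSucc (x m.succ.castSucc), A m.succ (x m.succ.castSucc), 0;
         0, 0, B m.castSucc (x m.castSucc.succ);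
         0, 0, E m.succ.castSucc (x m.succ.castSucc)] with hC
    set colM : Matrix (Fin 3) (Fin 1) R :=
      !![(0 : R); B (Fin.last n) (x (Fin.last n).succ);
         E (Fin.last (n + 1)) (x (Fin.last (n + 1)))] with hcolM
    have hcomp : ∀ γ : Fin (n+1) → Fin 3,
        rowM 0 (γ 0) * (∏ i : Fin n, C i (γ i.castSucc) (γ i.succ)) * colM (γ (Fin.last n)) 0
        = ∏ i : Fin (n+2), ttCores E F A B i (x i)
            ((ttEquiv n γ) i.castSucc) ((ttEquiv n γ) i.succ) := by
      intro γ
      have hβ : ∀ (j : Fin (n+3)), ¬((j:ℕ) = 0 ∨ (j:ℕ) = n+2) → ∀ (t : Fin (n+1)),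
          ((t:ℕ) + 1 = (j:ℕ)) → (((ttEquiv n γ) j) : ℕ) = (γ t : ℕ) := by
        intro j hne t ht
        show (dite _ _ _ : ℕ) = _
        rw [dif_neg hne]
        exact congrArg (fun s => ((γ s : Fin 3) : ℕ)) (Fin.ext (by simp <;> omega))
      have fac0 : ttCores E F A B 0 (x 0)
            ((ttEquiv n γ) (0 : Fin (n+3))) ((ttEquiv n γ) ((0 : Fin (n+2)).succ))
          = rowM 0 (γ 0) := by
        simp only [ttCores, Fin.cases_zero, Matrix.submatrix_apply]
        exact key13 _ _ _ _ (by
          exact hβ _ (by simp <;> omega) 0 (by simp))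
      have facmid : ∀ i : Fin n, ttCores E F A B (i.succ.castSucc) (x i.succ.castSucc)
            ((ttEquiv n γ) ((i.succ.castSucc : Fin (n+2)).castSucc))
            ((ttEquiv n γ) ((i.succ.castSucc : Fin (n+2)).succ))
          = C i (γ i.castSucc) (γ i.succ) := by
        intro i
        show ttCores E F A B (i.castSucc.succ) (x i.castSucc.succ)
            ((ttEquiv n γ) ((i.castSucc.succ : Fin (n+2)).castSucc))
            ((ttEquiv n γ) ((i.castSucc.succ : Fin (n+2)).succ))
          = C i (γ i.castSucc) (γ i.succ)
        simp only [ttCores, Fin.cases_succ, Fin.lastCases_castSucc, Matrix.submatrix_apply]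
        refine key33 _ _ _ _ _ ?_ ?_
        · rw [Fin.coe_cast]
          exact hβ _ (by simp <;> omega) i.castSucc (by simp)
        · rw [Fin.coe_cast]
          exact hβ _ (by simp <;> omega) i.succ (by simp)
      have faclast : ttCores E F A B (Fin.last (n+1)) (x (Fin.last (n+1)))
            ((ttEquiv n γ) ((Fin.last (n+1) : Fin (n+2)).castSucc))
            ((ttEquiv n γ) ((Fin.last (n+1) : Fin (n+2)).succ))
          = colM (γ (Fin.last n)) 0 := by
        show ttCores E F A B ((Fin.last n).succ) (x ((Fin.last n).succ))
            ((ttEquiv n γ) (((Fin.last n).succ : Fin (n+2)).castSucc))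
            ((ttEquiv n γ) (((Fin.last n).succ : Fin (n+2)).succ))
          = colM (γ (Fin.last n)) 0
        simp only [ttCores, Fin.cases_succ, Fin.lastCases_last, Matrix.submatrix_apply]
        refine key31 _ _ _ _ ?_
        rw [Fin.coe_cast]
        exact hβ _ (by simp [Fin.last] <;> omega) (Fin.last n) (by simp [Fin.last])
      rw [Fin.prod_univ_castSucc, Fin.prod_univ_succ]
      simp only [Fin.castSucc_zero]
      rw [fac0, faclast,
        Finset.prod_congr rfl (fun i (_ : i ∈ Finset.univ) => facmid i)]
    calc (rowM * (List.ofFn C).prod * colM) 0 0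
        = ∑ p, ∑ q, rowM 0 p * (List.ofFn C).prod p q * colM q 0 := by
          simp only [Matrix.mul_apply, Finset.sum_mul]
          rw [Finset.sum_comm]
      _ = ∑ γ : Fin (n+1) → Fin 3,
            rowM 0 (γ 0) * (∏ i : Fin n, C i (γ i.castSucc) (γ i.succ)) * colM (γ (Fin.last n)) 0 :=
          (pathsum_uniform n (fun p => rowM 0 p) C (fun q => colM q 0)).symm
      _ = ∑ β : ∀ j : Fin (n+3), Fin (if (j : ℕ) = 0 ∨ (j : ℕ) = n + 2 then 1 else 3),
            ∏ i : Fin (n+2), ttCores E F A B i (x i) (β i.castSucc) (β i.succ) :=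
          Fintype.sum_equiv (ttEquiv n) _ _ hcomp
end

section
/- Let K be a field, d ≥ 2, and let α_1,…,α_d be finite types. Let E_k : α_k → K for k = 1,…,d, let F : α_1 → K, and for each i = 2,…,d let A_i : α_{i-1} → K and B_i : α_i → K. Define the cascadic sum H : α_1 × ⋯ × α_d → K by H(x_1,…,x_d) = F(x_1)·∏_{k=2}^d E_k(x_k) + Σ_{i=2}^d (∏_{k=1}^{i-2} E_k(x_k))·A_i(x_{i-1})·B_i(x_i)·(∏_{k=i+1}^d E_k(x_k)). Then for every i ∈ {1,…,d}, the mode-i matricization of H — the matrix with rows indexed by α_i, columns indexed by ∏_{k≠i} α_k, and entry H(x_1,…,x_d) at position (x_i, (x_k)_{k≠i}) — has rank at most 3. (This is the Tucker rank-3 bound for the cascadic sum.) -/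
open scoped BigOperators

/-- The mode-`i` matricization of `f : α 1 × ⋯ × α d → K`: the matrix whose rows
are indexed by `α i`, whose columns are indexed by the product of the remaining
factors `α k` (`k ≠ i`), and whose `(a, y)` entry is the value of `f` at the
point assembled from `a` and `y`. -/
def modeMatricization {K : Type*} [Field K] {d : ℕ} {α : Fin d → Type*}
    (f : (∀ i, α i) → K) (i : Fin d) :
    Matrix (α i) (∀ k : {k : Fin d // k ≠ i}, α k.val) K :=
  fun a y => f (fun k => if h : k = i then cast (congrArg α h.symm) a else y ⟨k, h⟩)

namespace CascadicAux

def xpoint {d : ℕ} {α : Fin d → Type*} (i : Fin d) (a : α i)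
    (y : ∀ k : {k : Fin d // k ≠ i}, α k.val) : ∀ k, α k :=
  fun k => if h : k = i then cast (congrArg α h.symm) a else y ⟨k, h⟩

lemma xpoint_ne {d : ℕ} {α : Fin d → Type*} (i : Fin d) (a : α i)
    (y : ∀ k : {k : Fin d // k ≠ i}, α k.val) {k : Fin d} (h : k ≠ i) :
    xpoint i a y k = y ⟨k, h⟩ := dif_neg h

lemma xpoint_self {d : ℕ} {α : Fin d → Type*} (i : Fin d) (a : α i)
    (y : ∀ k : {k : Fin d // k ≠ i}, α k.val) :
    xpoint i a y i = a := by simp [xpoint]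

lemma xpoint_congr {d : ℕ} {α : Fin d → Type*} (i : Fin d) (a a' : α i)
    (y : ∀ k : {k : Fin d // k ≠ i}, α k.val) {k : Fin d} (h : k ≠ i) :
    xpoint i a y k = xpoint i a' y k := by
  rw [xpoint_ne i a y h, xpoint_ne i a' y h]

variable {K : Type*} [Field K]

lemma matrix_rank_le_three {m p : Type*} [Fintype m] [Fintype p] (M : Matrix m p K)
    (h : ∀ _ : m, ∃ u : Fin 3 → m → K, ∃ v : Fin 3 → p → K,
      ∀ a y, M a y = ∑ t, u t a * v t y) : M.rank ≤ 3 := by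
  cases isEmpty_or_nonempty m with
  | inl hm =>
      refine le_trans (Matrix.rank_le_card_height M) ?_
      simp
  | inr hm =>
      obtain ⟨u, v, huv⟩ := h (Classical.arbitrary m)
      have hM : M = (Matrix.of fun a t => u t a) * (Matrix.of fun t y => v t y) := by
        ext a y
        simpa [Matrix.mul_apply] using huv a y
      rw [hM]
      refine le_trans (Matrix.rank_mul_le_left _ _)
        (le_trans (Matrix.rank_le_card_width _) (by simp))

lemma sum_split_one {β M : Type*} [Fintype β] [DecidableEq β] [AddCommMonoid M]
    (c : β) (f : β → M) :
    ∑ j, f j = f c + ∑ j ∈ Finset.univ.filter (fun j => j ≠ c), f j := by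
  have key : ∀ j, f j = (if j = c then f j else 0) + (if j ≠ c then f j else 0) := by
    intro j; by_cases h : j = c <;> simp [h]
  rw [Finset.sum_congr rfl fun j _ => key j, Finset.sum_add_distrib,
    Finset.sum_ite_eq' Finset.univ c f, if_pos (Finset.mem_univ c), ← Finset.sum_filter]

lemma sum_split_two {β M : Type*} [Fintype β] [DecidableEq β] [AddCommMonoid M]
    (c1 c2 : β) (hne : c1 ≠ c2) (f : β → M) :
    ∑ j, f j = f c1 + f c2 +
      ∑ j ∈ Finset.univ.filter (fun j => j ≠ c1 ∧ j ≠ c2), f j := by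
  have key : ∀ j, f j = (if j = c1 then f j else 0) + (if j = c2 then f j else 0)
      + (if j ≠ c1 ∧ j ≠ c2 then f j else 0) := by
    intro j
    by_cases h1 : j = c1
    · subst h1; simp [hne]
    · by_cases h2 : j = c2
      · subst h2; simp [h1, Ne.symm hne]
      · simp [h1, h2]
  rw [Finset.sum_congr rfl fun j _ => key j, Finset.sum_add_distrib, Finset.sum_add_distrib,
    Finset.sum_ite_eq' Finset.univ c1 f, Finset.sum_ite_eq' Finset.univ c2 f,
    if_pos (Finset.mem_univ c1), if_pos (Finset.mem_univ c2), ← Finset.sum_filter]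

lemma prod_extract {d : ℕ} {α : Fin d → Type*} (E : ∀ k, α k → K) (i : Fin d) (a : α i)
    (x z : ∀ k, α k) (hxz : ∀ k, k ≠ i → x k = z k) (hxi : x i = a)
    (S : Finset (Fin d)) (hiS : i ∈ S) :
    ∏ k ∈ S, E k (x k) = E i a * ∏ k ∈ S.erase i, E k (z k) := by
  rw [← Finset.mul_prod_erase S _ hiS, hxi]
  exact congrArg _ (Finset.prod_congr rfl fun k hk => by
    rw [hxz k (Finset.mem_erase.1 hk).1])

lemma prod_skip {d : ℕ} {α : Fin d → Type*} (E : ∀ k, α k → K) (i : Fin d)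
    (x z : ∀ k, α k) (hxz : ∀ k, k ≠ i → x k = z k)
    (S : Finset (Fin d)) (hiS : i ∉ S) :
    ∏ k ∈ S, E k (x k) = ∏ k ∈ S.erase i, E k (z k) := by
  rw [Finset.erase_eq_of_notMem hiS]
  exact Finset.prod_congr rfl fun k hk => by rw [hxz k (fun he => hiS (he ▸ hk))]

variable {n : ℕ} {α : Fin (n + 2) → Type*}

/-- the "rest" rank-one column contribution of the `j`-th cascadic term -/
def restT (E : ∀ k : Fin (n + 2), α k → K)
    (A : ∀ j : Fin (n + 1), α j.castSucc → K) (B : ∀ j : Fin (n + 1), α j.succ → K)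
    (i : Fin (n + 2)) (z : ∀ k, α k) (j : Fin (n + 1)) : K :=
  (∏ k ∈ (Finset.univ.filter (fun k : Fin (n + 2) => (k : ℕ) < (j : ℕ))).erase i,
      E k (z k))
    * A j (z j.castSucc) * B j (z j.succ)
    * ∏ k ∈ (Finset.univ.filter (fun k : Fin (n + 2) => (j : ℕ) + 1 < (k : ℕ))).erase i,
        E k (z k)

lemma rest_eq (E : ∀ k : Fin (n + 2), α k → K)
    (A : ∀ j : Fin (n + 1), α j.castSucc → K) (B : ∀ j : Fin (n + 1), α j.succ → K)
    (i : Fin (n + 2)) (a a0 : α i) (y : ∀ k : {k : Fin (n + 2) // k ≠ i}, α k.val)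
    (j : Fin (n + 1)) (hor : (i : ℕ) < (j : ℕ) ∨ (j : ℕ) + 1 < (i : ℕ)) :
    (∏ k ∈ Finset.univ.filter (fun k : Fin (n + 2) => (k : ℕ) < (j : ℕ)),
        E k (xpoint i a y k))
      * A j (xpoint i a y j.castSucc) * B j (xpoint i a y j.succ)
      * (∏ k ∈ Finset.univ.filter (fun k : Fin (n + 2) => (j : ℕ) + 1 < (k : ℕ)),
          E k (xpoint i a y k))
    = E i a * restT E A B i (xpoint i a0 y) j := by
  have hxz : ∀ k, k ≠ i → xpoint i a y k = xpoint i a0 y k :=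
    fun k h => xpoint_congr i a a0 y h
  have hc : j.castSucc ≠ i := by
    rintro rfl; simp only [Fin.coe_castSucc] at hor; omega
  have hs : j.succ ≠ i := by
    rintro rfl; simp only [Fin.val_succ] at hor; omega
  rcases hor with hi | hi
  · rw [prod_extract E i a _ _ hxz (xpoint_self i a y)
        (Finset.univ.filter (fun k : Fin (n + 2) => (k : ℕ) < (j : ℕ)))
        (by simp only [Finset.mem_filter, Finset.mem_univ, true_and]; exact hi),
      prod_skip E i _ _ hxz
        (Finset.univ.filter (fun k : Fin (n + 2) => (j : ℕ) + 1 < (k : ℕ)))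
        (by simp only [Finset.mem_filter, Finset.mem_univ, true_and]; omega),
      hxz _ hc, hxz _ hs, restT]
    ring
  · rw [prod_extract E i a _ _ hxz (xpoint_self i a y)
        (Finset.univ.filter (fun k : Fin (n + 2) => (j : ℕ) + 1 < (k : ℕ)))
        (by simp only [Finset.mem_filter, Finset.mem_univ, true_and]; exact hi),
      prod_skip E i _ _ hxz
        (Finset.univ.filter (fun k : Fin (n + 2) => (k : ℕ) < (j : ℕ)))
        (by simp only [Finset.mem_filter, Finset.mem_univ, true_and]; omega),
      hxz _ hc, hxz _ hs, restT]
    ring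

end CascadicAux

open CascadicAux Finset

/-- **Tucker rank-3 bound for the cascadic sum** (Lemma 4.3 of the paper).
The dimension is `d = n + 2 ≥ 2`; positions are 0-based, and the pair terms
(indexed by `j : Fin (n+1)`) act on the adjacent positions `j.castSucc`, `j.succ`.
Every mode-`i` matricization of the cascadic sum `H` has rank at most 3. -/
theorem cascadic_sum_tucker_rank_le_three {K : Type*} [Field K] (n : ℕ)
    (α : Fin (n + 2) → Type*) [∀ i, Fintype (α i)]
    (E : ∀ k : Fin (n + 2), α k → K) (F : α 0 → K)
    (A : ∀ j : Fin (n + 1), α j.castSucc → K)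
    (B : ∀ j : Fin (n + 1), α j.succ → K)
    (H : (∀ i, α i) → K)
    (hH : ∀ x : ∀ i, α i,
      H x = F (x 0) *
              ∏ k ∈ Finset.univ.filter (fun k : Fin (n + 2) => 1 ≤ (k : ℕ)), E k (x k)
          + ∑ j : Fin (n + 1),
              (∏ k ∈ Finset.univ.filter (fun k : Fin (n + 2) => (k : ℕ) < (j : ℕ)), E k (x k))
              * A j (x j.castSucc) * B j (x j.succ)
              * ∏ k ∈ Finset.univ.filter (fun k : Fin (n + 2) => (j : ℕ) + 1 < (k : ℕ)),
                  E k (x k)) :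
    ∀ i : Fin (n + 2), (modeMatricization H i).rank ≤ 3 := by
  intro i
  induction i using Fin.cases with
  | zero =>
      apply matrix_rank_le_three
      intro a0
      refine ⟨![E 0, F, A 0],
        ![fun y => ∑ j ∈ Finset.univ.filter (fun j : Fin (n + 1) => j ≠ 0),
            restT E A B 0 (xpoint 0 a0 y) j,
          fun y => ∏ k ∈ (Finset.univ.filter (fun k : Fin (n + 2) => 1 ≤ (k : ℕ))).erase 0,
            E k (xpoint 0 a0 y k),
          fun y =>
            (∏ k ∈ (Finset.univ.filter
                (fun k : Fin (n + 2) => (k : ℕ) < ((0 : Fin (n + 1)) : ℕ))).erase 0,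
              E k (xpoint 0 a0 y k))
            * B 0 (xpoint 0 a0 y (0 : Fin (n + 1)).succ)
            * ∏ k ∈ (Finset.univ.filter
                (fun k : Fin (n + 2) => ((0 : Fin (n + 1)) : ℕ) + 1 < (k : ℕ))).erase 0,
              E k (xpoint 0 a0 y k)], ?_⟩
      intro a y
      show H (xpoint 0 a y) = _
      have hxz : ∀ k, k ≠ (0 : Fin (n + 2)) → xpoint 0 a y k = xpoint 0 a0 y k :=
        fun k h => xpoint_congr _ a a0 y h
      have hxi : xpoint (0 : Fin (n + 2)) a y 0 = a := xpoint_self _ a y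
      have hxi' : xpoint (0 : Fin (n + 2)) a y ((0 : Fin (n + 1)).castSucc) = a := hxi
      rw [hH, sum_split_one (0 : Fin (n + 1))]
      rw [hxi, hxi',
        prod_skip E 0 _ _ hxz
          (Finset.univ.filter (fun k : Fin (n + 2) => 1 ≤ (k : ℕ))) (by simp),
        prod_skip E 0 _ _ hxz
          (Finset.univ.filter (fun k : Fin (n + 2) => (k : ℕ) < ((0 : Fin (n + 1)) : ℕ)))
          (by simp),
        prod_skip E 0 _ _ hxz
          (Finset.univ.filter (fun k : Fin (n + 2) => ((0 : Fin (n + 1)) : ℕ) + 1 < (k : ℕ)))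
          (by simp),
        hxz ((0 : Fin (n + 1)).succ) (by simp [Fin.ext_iff]),
        Finset.sum_congr rfl (fun j hj => rest_eq E A B 0 a a0 y j (by
          have h1 := (Finset.mem_filter.1 hj).2
          have h2 : (j : ℕ) ≠ 0 := fun hv => h1 (Fin.ext (by simpa using hv))
          simp only [Fin.val_zero]
          omega))]
      simp only [Fin.sum_univ_three, Matrix.cons_val_zero, Matrix.cons_val_one,
        Matrix.head_cons, Matrix.cons_val_two, Matrix.tail_cons]
      rw [Finset.mul_sum]
      change _ = _ + _ + A 0 a * _
      ring
  | succ jj =>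
      induction jj using Fin.lastCases with
      | last =>
          apply matrix_rank_le_three
          intro a0
          refine ⟨![E (Fin.last n).succ, B (Fin.last n), fun _ => 0],
            ![fun y => F (xpoint (Fin.last n).succ a0 y 0) *
                (∏ k ∈ (Finset.univ.filter
                    (fun k : Fin (n + 2) => 1 ≤ (k : ℕ))).erase (Fin.last n).succ,
                  E k (xpoint (Fin.last n).succ a0 y k))
              + ∑ j ∈ Finset.univ.filter (fun j : Fin (n + 1) => j ≠ Fin.last n),
                  restT E A B (Fin.last n).succ (xpoint (Fin.last n).succ a0 y) j,
              fun y =>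
                (∏ k ∈ (Finset.univ.filter
                    (fun k : Fin (n + 2) => (k : ℕ) < ((Fin.last n : Fin (n + 1)) : ℕ))).erase
                      (Fin.last n).succ,
                  E k (xpoint (Fin.last n).succ a0 y k))
                * A (Fin.last n) (xpoint (Fin.last n).succ a0 y (Fin.last n).castSucc)
                * ∏ k ∈ (Finset.univ.filter
                    (fun k : Fin (n + 2) => ((Fin.last n : Fin (n + 1)) : ℕ) + 1 < (k : ℕ))).erase
                      (Fin.last n).succ,
                  E k (xpoint (Fin.last n).succ a0 y k),
              fun _ => 0], ?_⟩
          intro a y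
          show H (xpoint (Fin.last n).succ a y) = _
          have hxz : ∀ k, k ≠ (Fin.last n).succ →
              xpoint (Fin.last n).succ a y k = xpoint (Fin.last n).succ a0 y k :=
            fun k h => xpoint_congr _ a a0 y h
          have hxi : xpoint (Fin.last n).succ a y (Fin.last n).succ = a := xpoint_self _ a y
          rw [hH, sum_split_one (Fin.last n)]
          rw [hxi,
            prod_extract E (Fin.last n).succ a _ _ hxz hxi
              (Finset.univ.filter (fun k : Fin (n + 2) => 1 ≤ (k : ℕ)))
              (by simp),
            hxz 0 (by simp [Fin.ext_iff]),
            prod_skip E (Fin.last n).succ _ _ hxz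
              (Finset.univ.filter
                (fun k : Fin (n + 2) => (k : ℕ) < ((Fin.last n : Fin (n + 1)) : ℕ)))
              (by simp),
            prod_skip E (Fin.last n).succ _ _ hxz
              (Finset.univ.filter
                (fun k : Fin (n + 2) => ((Fin.last n : Fin (n + 1)) : ℕ) + 1 < (k : ℕ)))
              (by simp),
            hxz ((Fin.last n).castSucc) (by simp [Fin.ext_iff]),
            Finset.sum_congr rfl (fun j hj => rest_eq E A B (Fin.last n).succ a a0 y j (by
              have h1 := (Finset.mem_filter.1 hj).2
              have h2 : (j : ℕ) ≠ n := fun hv => h1 (Fin.ext (by simpa using hv))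
              have h3 : (j : ℕ) < n + 1 := j.isLt
              simp only [Fin.val_succ, Fin.val_last]
              omega))]
          simp only [Fin.sum_univ_three, Matrix.cons_val_zero, Matrix.cons_val_one,
            Matrix.head_cons, Matrix.cons_val_two, Matrix.tail_cons]
          rw [mul_add, Finset.mul_sum]
          ring
      | cast jj2 =>
          apply matrix_rank_le_three
          intro a0
          refine ⟨![E jj2.castSucc.succ, B jj2.castSucc, A jj2.succ],
            ![fun y => F (xpoint jj2.castSucc.succ a0 y 0) *
                (∏ k ∈ (Finset.univ.filter
                    (fun k : Fin (n + 2) => 1 ≤ (k : ℕ))).erase jj2.castSucc.succ,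
                  E k (xpoint jj2.castSucc.succ a0 y k))
              + ∑ j ∈ Finset.univ.filter
                  (fun j : Fin (n + 1) => j ≠ jj2.castSucc ∧ j ≠ jj2.succ),
                  restT E A B jj2.castSucc.succ (xpoint jj2.castSucc.succ a0 y) j,
              fun y =>
                (∏ k ∈ (Finset.univ.filter
                    (fun k : Fin (n + 2) => (k : ℕ) < ((jj2.castSucc : Fin (n + 1)) : ℕ))).erase
                      jj2.castSucc.succ,
                  E k (xpoint jj2.castSucc.succ a0 y k))
                * A jj2.castSucc (xpoint jj2.castSucc.succ a0 y jj2.castSucc.castSucc)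
                * ∏ k ∈ (Finset.univ.filter
                    (fun k : Fin (n + 2) =>
                      ((jj2.castSucc : Fin (n + 1)) : ℕ) + 1 < (k : ℕ))).erase
                      jj2.castSucc.succ,
                  E k (xpoint jj2.castSucc.succ a0 y k),
              fun y =>
                (∏ k ∈ (Finset.univ.filter
                    (fun k : Fin (n + 2) => (k : ℕ) < ((jj2.succ : Fin (n + 1)) : ℕ))).erase
                      jj2.castSucc.succ,
                  E k (xpoint jj2.castSucc.succ a0 y k))
                * B jj2.succ (xpoint jj2.castSucc.succ a0 y jj2.succ.succ)
                * ∏ k ∈ (Finset.univ.filter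
                    (fun k : Fin (n + 2) =>
                      ((jj2.succ : Fin (n + 1)) : ℕ) + 1 < (k : ℕ))).erase
                      jj2.castSucc.succ,
                  E k (xpoint jj2.castSucc.succ a0 y k)], ?_⟩
          intro a y
          show H (xpoint jj2.castSucc.succ a y) = _
          have hxz : ∀ k, k ≠ jj2.castSucc.succ →
              xpoint jj2.castSucc.succ a y k = xpoint jj2.castSucc.succ a0 y k :=
            fun k h => xpoint_congr _ a a0 y h
          have hxi : xpoint jj2.castSucc.succ a y jj2.castSucc.succ = a := xpoint_self _ a y
          have hxi2 : xpoint jj2.castSucc.succ a y jj2.succ.castSucc = a := hxi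
          rw [hH, sum_split_two jj2.castSucc jj2.succ (Fin.castSucc_lt_succ : jj2.castSucc < jj2.succ).ne]
          rw [hxi, hxi2,
            prod_extract E jj2.castSucc.succ a _ _ hxz hxi
              (Finset.univ.filter (fun k : Fin (n + 2) => 1 ≤ (k : ℕ)))
              (by simp),
            hxz 0 (by simp [Fin.ext_iff]),
            prod_skip E jj2.castSucc.succ _ _ hxz
              (Finset.univ.filter
                (fun k : Fin (n + 2) => (k : ℕ) < ((jj2.castSucc : Fin (n + 1)) : ℕ)))
              (by simp),
            prod_skip E jj2.castSucc.succ _ _ hxz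
              (Finset.univ.filter
                (fun k : Fin (n + 2) => ((jj2.castSucc : Fin (n + 1)) : ℕ) + 1 < (k : ℕ)))
              (by simp),
            prod_skip E jj2.castSucc.succ _ _ hxz
              (Finset.univ.filter
                (fun k : Fin (n + 2) => (k : ℕ) < ((jj2.succ : Fin (n + 1)) : ℕ)))
              (by simp),
            prod_skip E jj2.castSucc.succ _ _ hxz
              (Finset.univ.filter
                (fun k : Fin (n + 2) => ((jj2.succ : Fin (n + 1)) : ℕ) + 1 < (k : ℕ)))
              (by simp),
            hxz (jj2.castSucc.castSucc) (by simp [Fin.ext_iff]),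
            hxz (jj2.succ.succ) (by simp [Fin.ext_iff]),
            Finset.sum_congr rfl (fun j hj => rest_eq E A B jj2.castSucc.succ a a0 y j (by
              have h1 := (Finset.mem_filter.1 hj).2
              have h2 : (j : ℕ) ≠ (jj2 : ℕ) := fun hv => h1.1 (Fin.ext (by simpa using hv))
              have h3 : (j : ℕ) ≠ (jj2 : ℕ) + 1 := fun hv => h1.2 (Fin.ext (by simpa using hv))
              simp only [Fin.val_succ, Fin.coe_castSucc]
              omega))]
          simp only [Fin.sum_univ_three, Matrix.cons_val_zero, Matrix.cons_val_one,
            Matrix.head_cons, Matrix.cons_val_two, Matrix.tail_cons]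
          rw [mul_add, Finset.mul_sum]
          ring
end

section
/- Let d ≥ 2 and let j_x, j_y, j_z, λ ∈ ℂ. Let P_x = [[0,1],[1,0]], P_y = [[0,−i],[i,0]], P_z = [[1,0],[0,−1]] be the Pauli matrices in Matrix (Fin 2) (Fin 2) ℂ, and let I denote the 2×2 identity. Define the Heisenberg (XYZ) Hamiltonian entrywise as the function h : (Fin 2 × Fin 2)^d → ℂ given by h((x_1,x'_1),…,(x_d,x'_d)) = Σ_{μ∈{x,y,z}} j_μ · Σ_{i=2}^d (∏_{k=1}^{i-2} I(x_k,x'_k)) · P_μ(x_{i-1},x'_{i-1}) · P_μ(x_i,x'_i) · (∏_{k=i+1}^d I(x_k,x'_k)) + λ · Σ_{i=1}^d (∏_{k=1}^{i-1} I(x_k,x'_k)) · P_x(x_i,x'_i) · (∏_{k=i+1}^d I(x_k,x'_k)). Then h admits a TT representation with all ranks at most 7. -/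
open scoped BigOperators

noncomputable def pauliX : Matrix (Fin 2) (Fin 2) ℂ := !![0, 1; 1, 0]
noncomputable def pauliY : Matrix (Fin 2) (Fin 2) ℂ := !![0, -Complex.I; Complex.I, 0]
noncomputable def pauliZ : Matrix (Fin 2) (Fin 2) ℂ := !![1, 0; 0, -1]

/-- The nearest-neighbour interaction sum
`Σ_{i=2}^d I ⊗ ⋯ ⊗ P ⊗ P ⊗ ⋯ ⊗ I`, written entrywise on the grouped index
`x : Fin (n+2) → Fin 2 × Fin 2` (0-based: the pair indexed by `m : Fin (n+1)`
acts on positions `m.castSucc`, `m.succ`). -/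
noncomputable def nnSum (n : ℕ) (P : Matrix (Fin 2) (Fin 2) ℂ)
    (x : Fin (n + 2) → Fin 2 × Fin 2) : ℂ :=
  ∑ m : Fin (n + 1),
    (∏ k ∈ Finset.univ.filter (fun k : Fin (n + 2) => (k : ℕ) < (m : ℕ)),
        (1 : Matrix (Fin 2) (Fin 2) ℂ) (x k).1 (x k).2)
    * P (x m.castSucc).1 (x m.castSucc).2 * P (x m.succ).1 (x m.succ).2
    * ∏ k ∈ Finset.univ.filter (fun k : Fin (n + 2) => (m : ℕ) + 1 < (k : ℕ)),
        (1 : Matrix (Fin 2) (Fin 2) ℂ) (x k).1 (x k).2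

/-- The one-site sum `Σ_{i=1}^d I ⊗ ⋯ ⊗ P ⊗ ⋯ ⊗ I`, entrywise on the grouped
index `x : Fin (n+2) → Fin 2 × Fin 2`. -/
noncomputable def siteSum (n : ℕ) (P : Matrix (Fin 2) (Fin 2) ℂ)
    (x : Fin (n + 2) → Fin 2 × Fin 2) : ℂ :=
  ∑ i : Fin (n + 2),
    (∏ k ∈ Finset.univ.filter (fun k : Fin (n + 2) => (k : ℕ) < (i : ℕ)),
        (1 : Matrix (Fin 2) (Fin 2) ℂ) (x k).1 (x k).2)
    * P (x i).1 (x i).2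
    * ∏ k ∈ Finset.univ.filter (fun k : Fin (n + 2) => (i : ℕ) < (k : ℕ)),
        (1 : Matrix (Fin 2) (Fin 2) ℂ) (x k).1 (x k).2


namespace HeisenbergTT

noncomputable def delta (p : Fin 2 × Fin 2) : ℂ := if p.1 = p.2 then 1 else 0

noncomputable def Wfun (jx jy jz lam : ℂ) (p : Fin 2 × Fin 2) : ℕ → ℕ → ℂ
  | 0, 0 => delta p
  | 1, 0 => pauliX p.1 p.2
  | 2, 0 => pauliY p.1 p.2
  | 3, 0 => pauliZ p.1 p.2
  | 4, 0 => lam * pauliX p.1 p.2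
  | 4, 1 => jx * pauliX p.1 p.2
  | 4, 2 => jy * pauliY p.1 p.2
  | 4, 3 => jz * pauliZ p.1 p.2
  | 4, 4 => delta p
  | _, _ => 0

noncomputable def uvec (jx jy jz lam : ℂ) (y : ℕ → Fin 2 × Fin 2) : ℕ → Fin 5 → ℂ
  | 0 => fun b => if b = 4 then 1 else 0
  | s + 1 => fun b =>
      ∑ a : Fin 5, uvec jx jy jz lam y s a * Wfun jx jy jz lam (y s) (a : ℕ) (b : ℕ)

noncomputable def nnP (P : Matrix (Fin 2) (Fin 2) ℂ) (y : ℕ → Fin 2 × Fin 2) (s : ℕ) : ℂ :=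
  ∑ i ∈ Finset.range (s - 1),
    (∏ k ∈ Finset.range i, delta (y k)) * P (y i).1 (y i).2 * P (y (i+1)).1 (y (i+1)).2
      * ∏ k ∈ Finset.Ico (i+2) s, delta (y k)

noncomputable def ssP (P : Matrix (Fin 2) (Fin 2) ℂ) (y : ℕ → Fin 2 × Fin 2) (s : ℕ) : ℂ :=
  ∑ i ∈ Finset.range s,
    (∏ k ∈ Finset.range i, delta (y k)) * P (y i).1 (y i).2
      * ∏ k ∈ Finset.Ico (i+1) s, delta (y k)

lemma nnP_succ_succ (P : Matrix (Fin 2) (Fin 2) ℂ) (y : ℕ → Fin 2 × Fin 2) (s : ℕ) :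
    nnP P y (s+2) = nnP P y (s+1) * delta (y (s+1))
      + (∏ k ∈ Finset.range s, delta (y k)) * P (y s).1 (y s).2 * P (y (s+1)).1 (y (s+1)).2 := by
  unfold nnP
  have h1 : s + 2 - 1 = s + 1 := rfl
  have h2 : s + 1 - 1 = s := rfl
  rw [h1, h2, Finset.sum_range_succ, Finset.Ico_self, Finset.prod_empty, mul_one,
    Finset.sum_mul]
  congr 1
  refine Finset.sum_congr rfl fun i hi => ?_
  have hi' : i < s := Finset.mem_range.mp hi
  rw [Finset.prod_Ico_succ_top (by omega)]
  ring

lemma ssP_succ (P : Matrix (Fin 2) (Fin 2) ℂ) (y : ℕ → Fin 2 × Fin 2) (s : ℕ) :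
    ssP P y (s+1) = ssP P y s * delta (y s)
      + (∏ k ∈ Finset.range s, delta (y k)) * P (y s).1 (y s).2 := by
  unfold ssP
  rw [Finset.sum_range_succ, Finset.Ico_self, Finset.prod_empty, mul_one, Finset.sum_mul]
  congr 1
  refine Finset.sum_congr rfl fun i hi => ?_
  have hi' : i < s := Finset.mem_range.mp hi
  rw [Finset.prod_Ico_succ_top (by omega)]
  ring

lemma uvec_four (jx jy jz lam : ℂ) (y : ℕ → Fin 2 × Fin 2) (s : ℕ) :
    uvec jx jy jz lam y s 4 = ∏ k ∈ Finset.range s, delta (y k) := by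
  induction s with
  | zero => simp [uvec]
  | succ t ih =>
    rw [show uvec jx jy jz lam y (t+1) 4
        = ∑ a : Fin 5, uvec jx jy jz lam y t a * Wfun jx jy jz lam (y t) (a : ℕ) ((4:Fin 5):ℕ)
        from rfl]
    rw [Fin.sum_univ_five]
    rw [show Wfun jx jy jz lam (y t) ((0:Fin 5):ℕ) ((4:Fin 5):ℕ) = 0 from rfl,
      show Wfun jx jy jz lam (y t) ((1:Fin 5):ℕ) ((4:Fin 5):ℕ) = 0 from rfl,
      show Wfun jx jy jz lam (y t) ((2:Fin 5):ℕ) ((4:Fin 5):ℕ) = 0 from rfl,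
      show Wfun jx jy jz lam (y t) ((3:Fin 5):ℕ) ((4:Fin 5):ℕ) = 0 from rfl,
      show Wfun jx jy jz lam (y t) ((4:Fin 5):ℕ) ((4:Fin 5):ℕ) = delta (y t) from rfl, ih,
      Finset.prod_range_succ]
    ring

lemma uvec_one (jx jy jz lam : ℂ) (y : ℕ → Fin 2 × Fin 2) (s : ℕ) :
    uvec jx jy jz lam y (s+1) 1
      = jx * ((∏ k ∈ Finset.range s, delta (y k)) * pauliX (y s).1 (y s).2) := by
  rw [show uvec jx jy jz lam y (s+1) 1
      = ∑ a : Fin 5, uvec jx jy jz lam y s a * Wfun jx jy jz lam (y s) (a : ℕ) ((1:Fin 5):ℕ)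
      from rfl]
  rw [Fin.sum_univ_five]
  rw [show Wfun jx jy jz lam (y s) ((0:Fin 5):ℕ) ((1:Fin 5):ℕ) = 0 from rfl,
    show Wfun jx jy jz lam (y s) ((1:Fin 5):ℕ) ((1:Fin 5):ℕ) = 0 from rfl,
    show Wfun jx jy jz lam (y s) ((2:Fin 5):ℕ) ((1:Fin 5):ℕ) = 0 from rfl,
    show Wfun jx jy jz lam (y s) ((3:Fin 5):ℕ) ((1:Fin 5):ℕ) = 0 from rfl,
    show Wfun jx jy jz lam (y s) ((4:Fin 5):ℕ) ((1:Fin 5):ℕ) = jx * pauliX (y s).1 (y s).2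
      from rfl, uvec_four]
  ring

lemma uvec_two (jx jy jz lam : ℂ) (y : ℕ → Fin 2 × Fin 2) (s : ℕ) :
    uvec jx jy jz lam y (s+1) 2
      = jy * ((∏ k ∈ Finset.range s, delta (y k)) * pauliY (y s).1 (y s).2) := by
  rw [show uvec jx jy jz lam y (s+1) 2
      = ∑ a : Fin 5, uvec jx jy jz lam y s a * Wfun jx jy jz lam (y s) (a : ℕ) ((2:Fin 5):ℕ)
      from rfl]
  rw [Fin.sum_univ_five]
  rw [show Wfun jx jy jz lam (y s) ((0:Fin 5):ℕ) ((2:Fin 5):ℕ) = 0 from rfl,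
    show Wfun jx jy jz lam (y s) ((1:Fin 5):ℕ) ((2:Fin 5):ℕ) = 0 from rfl,
    show Wfun jx jy jz lam (y s) ((2:Fin 5):ℕ) ((2:Fin 5):ℕ) = 0 from rfl,
    show Wfun jx jy jz lam (y s) ((3:Fin 5):ℕ) ((2:Fin 5):ℕ) = 0 from rfl,
    show Wfun jx jy jz lam (y s) ((4:Fin 5):ℕ) ((2:Fin 5):ℕ) = jy * pauliY (y s).1 (y s).2
      from rfl, uvec_four]
  ring

lemma uvec_three (jx jy jz lam : ℂ) (y : ℕ → Fin 2 × Fin 2) (s : ℕ) :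
    uvec jx jy jz lam y (s+1) 3
      = jz * ((∏ k ∈ Finset.range s, delta (y k)) * pauliZ (y s).1 (y s).2) := by
  rw [show uvec jx jy jz lam y (s+1) 3
      = ∑ a : Fin 5, uvec jx jy jz lam y s a * Wfun jx jy jz lam (y s) (a : ℕ) ((3:Fin 5):ℕ)
      from rfl]
  rw [Fin.sum_univ_five]
  rw [show Wfun jx jy jz lam (y s) ((0:Fin 5):ℕ) ((3:Fin 5):ℕ) = 0 from rfl,
    show Wfun jx jy jz lam (y s) ((1:Fin 5):ℕ) ((3:Fin 5):ℕ) = 0 from rfl,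
    show Wfun jx jy jz lam (y s) ((2:Fin 5):ℕ) ((3:Fin 5):ℕ) = 0 from rfl,
    show Wfun jx jy jz lam (y s) ((3:Fin 5):ℕ) ((3:Fin 5):ℕ) = 0 from rfl,
    show Wfun jx jy jz lam (y s) ((4:Fin 5):ℕ) ((3:Fin 5):ℕ) = jz * pauliZ (y s).1 (y s).2
      from rfl, uvec_four]
  ring

lemma uvec_zero (jx jy jz lam : ℂ) (y : ℕ → Fin 2 × Fin 2) (s : ℕ) :
    uvec jx jy jz lam y s 0
      = jx * nnP pauliX y s + jy * nnP pauliY y s + jz * nnP pauliZ y s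
        + lam * ssP pauliX y s := by
  induction s with
  | zero => simp [uvec, nnP, ssP]
  | succ t ih =>
    have expand : uvec jx jy jz lam y (t+1) 0
        = uvec jx jy jz lam y t 0 * delta (y t)
          + uvec jx jy jz lam y t 1 * pauliX (y t).1 (y t).2
          + uvec jx jy jz lam y t 2 * pauliY (y t).1 (y t).2
          + uvec jx jy jz lam y t 3 * pauliZ (y t).1 (y t).2
          + uvec jx jy jz lam y t 4 * (lam * pauliX (y t).1 (y t).2) := by
      rw [show uvec jx jy jz lam y (t+1) 0
          = ∑ a : Fin 5, uvec jx jy jz lam y t a * Wfun jx jy jz lam (y t) (a : ℕ) ((0:Fin 5):ℕ)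
          from rfl]
      rw [Fin.sum_univ_five]
      rw [show Wfun jx jy jz lam (y t) ((0:Fin 5):ℕ) ((0:Fin 5):ℕ) = delta (y t) from rfl,
        show Wfun jx jy jz lam (y t) ((1:Fin 5):ℕ) ((0:Fin 5):ℕ) = pauliX (y t).1 (y t).2
          from rfl,
        show Wfun jx jy jz lam (y t) ((2:Fin 5):ℕ) ((0:Fin 5):ℕ) = pauliY (y t).1 (y t).2
          from rfl,
        show Wfun jx jy jz lam (y t) ((3:Fin 5):ℕ) ((0:Fin 5):ℕ) = pauliZ (y t).1 (y t).2
          from rfl,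
        show Wfun jx jy jz lam (y t) ((4:Fin 5):ℕ) ((0:Fin 5):ℕ) = lam * pauliX (y t).1 (y t).2
          from rfl]
    cases t with
    | zero =>
      rw [expand]
      simp [uvec, nnP, ssP]
    | succ m =>
      rw [expand, ih, uvec_one, uvec_two, uvec_three, uvec_four,
        nnP_succ_succ pauliX y m, nnP_succ_succ pauliY y m, nnP_succ_succ pauliZ y m,
        ssP_succ pauliX y (m+1)]
      ring

lemma path_sum (jx jy jz lam : ℂ) (y : ℕ → Fin 2 × Fin 2) :
    ∀ (s : ℕ) (b : Fin 5),
      (∑ γ : Fin (s+1) → Fin 5,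
        if γ 0 = 4 ∧ γ (Fin.last s) = b then
          ∏ i : Fin s, Wfun jx jy jz lam (y (i : ℕ)) ((γ i.castSucc : Fin 5) : ℕ)
            ((γ i.succ : Fin 5) : ℕ)
        else 0) = uvec jx jy jz lam y s b := by
  intro s
  induction s with
  | zero =>
    intro b
    rw [← Equiv.sum_comp (Equiv.funUnique (Fin 1) (Fin 5)).symm]
    rw [show uvec jx jy jz lam y 0 b = if b = 4 then 1 else 0 from rfl]
    by_cases hb : b = 4
    · subst hb
      rw [if_pos rfl, Finset.sum_eq_single (4 : Fin 5)]
      · rw [if_pos ⟨rfl, rfl⟩]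
        simp
      · intro c _ hc
        rw [if_neg]
        rintro ⟨h1, _⟩
        exact hc h1
      · simp
    · rw [if_neg hb]
      apply Finset.sum_eq_zero
      intro c _
      rw [if_neg]
      rintro ⟨h1, h2⟩
      exact hb (h1.symm.trans h2).symm
  | succ t ih =>
    intro b
    rw [← Equiv.sum_comp (Fin.snocEquiv (fun _ : Fin (t+2) => Fin 5)), Fintype.sum_prod_type]
    have keyval : ∀ (c : Fin 5) (γ' : Fin (t+1) → Fin 5),
        (if (Fin.snocEquiv (fun _ : Fin (t+2) => Fin 5)) (c, γ') 0 = 4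
            ∧ (Fin.snocEquiv (fun _ : Fin (t+2) => Fin 5)) (c, γ') (Fin.last (t+1)) = b then
          ∏ i : Fin (t+1), Wfun jx jy jz lam (y (i : ℕ))
            (((Fin.snocEquiv (fun _ : Fin (t+2) => Fin 5)) (c, γ') i.castSucc : Fin 5) : ℕ)
            (((Fin.snocEquiv (fun _ : Fin (t+2) => Fin 5)) (c, γ') i.succ : Fin 5) : ℕ)
        else 0)
        = if c = b then
            (if γ' 0 = 4 then
              (∏ i : Fin t, Wfun jx jy jz lam (y (i : ℕ)) ((γ' i.castSucc : Fin 5) : ℕ)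
                ((γ' i.succ : Fin 5) : ℕ))
                * Wfun jx jy jz lam (y t) ((γ' (Fin.last t) : Fin 5) : ℕ) ((c : Fin 5) : ℕ)
            else 0)
          else 0 := by
      intro c γ'
      have heq : ∀ j : Fin (t+2),
          (Fin.snocEquiv (fun _ : Fin (t+2) => Fin 5)) (c, γ') j
            = (Fin.snoc γ' c : Fin (t+2) → Fin 5) j := fun j => rfl
      simp only [heq]
      have e0 : (Fin.snoc γ' c : Fin (t+2) → Fin 5) 0 = γ' 0 := by
        rw [show (0 : Fin (t+2)) = Fin.castSucc 0 from rfl, Fin.snoc_castSucc]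
      have elast : (Fin.snoc γ' c : Fin (t+2) → Fin 5) (Fin.last (t+1)) = c :=
        Fin.snoc_last _ _
      rw [e0, elast, Fin.prod_univ_castSucc (n := t)]
      have hprod : ∀ i : Fin t,
          Wfun jx jy jz lam (y ((i.castSucc : Fin (t+1)) : ℕ))
            (((Fin.snoc γ' c : Fin (t+2) → Fin 5) i.castSucc.castSucc : Fin 5) : ℕ)
            (((Fin.snoc γ' c : Fin (t+2) → Fin 5) i.castSucc.succ : Fin 5) : ℕ)
          = Wfun jx jy jz lam (y (i : ℕ)) ((γ' i.castSucc : Fin 5) : ℕ)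
            ((γ' i.succ : Fin 5) : ℕ) := by
        intro i
        rw [Fin.succ_castSucc, Fin.snoc_castSucc, Fin.snoc_castSucc, Fin.coe_castSucc]
      have hlast :
          Wfun jx jy jz lam (y (((Fin.last t) : Fin (t+1)) : ℕ))
            (((Fin.snoc γ' c : Fin (t+2) → Fin 5) (Fin.last t).castSucc : Fin 5) : ℕ)
            (((Fin.snoc γ' c : Fin (t+2) → Fin 5) (Fin.last t).succ : Fin 5) : ℕ)
          = Wfun jx jy jz lam (y t) ((γ' (Fin.last t) : Fin 5) : ℕ) ((c : Fin 5) : ℕ) := by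
        rw [Fin.succ_last, Fin.snoc_castSucc, Fin.snoc_last, Fin.val_last]
      rw [Finset.prod_congr rfl (fun i _ => hprod i), hlast]
      by_cases hc : c = b <;> by_cases h4 : γ' 0 = 4 <;> simp [hc, h4]
    calc
      (∑ c : Fin 5, ∑ γ' : Fin (t+1) → Fin 5,
          if (Fin.snocEquiv (fun _ : Fin (t+2) => Fin 5)) (c, γ') 0 = 4
              ∧ (Fin.snocEquiv (fun _ : Fin (t+2) => Fin 5)) (c, γ') (Fin.last (t+1)) = b then
            ∏ i : Fin (t+1), Wfun jx jy jz lam (y (i : ℕ))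
              (((Fin.snocEquiv (fun _ : Fin (t+2) => Fin 5)) (c, γ') i.castSucc : Fin 5) : ℕ)
              (((Fin.snocEquiv (fun _ : Fin (t+2) => Fin 5)) (c, γ') i.succ : Fin 5) : ℕ)
          else 0)
        = ∑ c : Fin 5, ∑ γ' : Fin (t+1) → Fin 5,
            if c = b then
              (if γ' 0 = 4 then
                (∏ i : Fin t, Wfun jx jy jz lam (y (i : ℕ)) ((γ' i.castSucc : Fin 5) : ℕ)
                  ((γ' i.succ : Fin 5) : ℕ))
                  * Wfun jx jy jz lam (y t) ((γ' (Fin.last t) : Fin 5) : ℕ) ((c : Fin 5) : ℕ)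
              else 0)
            else 0 :=
        Finset.sum_congr rfl fun c _ => Finset.sum_congr rfl fun γ' _ => keyval c γ'
      _ = ∑ γ' : Fin (t+1) → Fin 5,
            if γ' 0 = 4 then
              (∏ i : Fin t, Wfun jx jy jz lam (y (i : ℕ)) ((γ' i.castSucc : Fin 5) : ℕ)
                ((γ' i.succ : Fin 5) : ℕ))
                * Wfun jx jy jz lam (y t) ((γ' (Fin.last t) : Fin 5) : ℕ) ((b : Fin 5) : ℕ)
            else 0 := by
        rw [Finset.sum_comm]
        refine Finset.sum_congr rfl fun γ' _ => ?_
        simp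
      _ = ∑ γ' : Fin (t+1) → Fin 5, ∑ a : Fin 5,
            if γ' 0 = 4 ∧ γ' (Fin.last t) = a then
              (∏ i : Fin t, Wfun jx jy jz lam (y (i : ℕ)) ((γ' i.castSucc : Fin 5) : ℕ)
                ((γ' i.succ : Fin 5) : ℕ))
                * Wfun jx jy jz lam (y t) ((a : Fin 5) : ℕ) ((b : Fin 5) : ℕ)
            else 0 := by
        refine Finset.sum_congr rfl fun γ' _ => ?_
        by_cases h4 : γ' 0 = 4 <;> simp [h4]
      _ = ∑ a : Fin 5, ∑ γ' : Fin (t+1) → Fin 5,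
            if γ' 0 = 4 ∧ γ' (Fin.last t) = a then
              (∏ i : Fin t, Wfun jx jy jz lam (y (i : ℕ)) ((γ' i.castSucc : Fin 5) : ℕ)
                ((γ' i.succ : Fin 5) : ℕ))
                * Wfun jx jy jz lam (y t) ((a : Fin 5) : ℕ) ((b : Fin 5) : ℕ)
            else 0 := Finset.sum_comm
      _ = ∑ a : Fin 5,
            (∑ γ' : Fin (t+1) → Fin 5,
              if γ' 0 = 4 ∧ γ' (Fin.last t) = a then
                ∏ i : Fin t, Wfun jx jy jz lam (y (i : ℕ)) ((γ' i.castSucc : Fin 5) : ℕ)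
                  ((γ' i.succ : Fin 5) : ℕ)
              else 0) * Wfun jx jy jz lam (y t) ((a : Fin 5) : ℕ) ((b : Fin 5) : ℕ) := by
        refine Finset.sum_congr rfl fun a _ => ?_
        rw [Finset.sum_mul]
        refine Finset.sum_congr rfl fun γ' _ => ?_
        rw [ite_mul, zero_mul]
      _ = ∑ a : Fin 5, uvec jx jy jz lam y t a
            * Wfun jx jy jz lam (y t) ((a : Fin 5) : ℕ) ((b : Fin 5) : ℕ) := by
        refine Finset.sum_congr rfl fun a _ => ?_
        rw [ih a]
      _ = uvec jx jy jz lam y (t+1) b := rfl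

def rfun (n : ℕ) (j : Fin (n+3)) : ℕ :=
  if (j : ℕ) = 0 then 1 else if (j : ℕ) = n+2 then 1 else 5

lemma rfun_pos (n : ℕ) (j : Fin (n+3)) : 0 < rfun n j := by
  unfold rfun
  split
  · norm_num
  split <;> norm_num

noncomputable def Gcore (n : ℕ) (jx jy jz lam : ℂ) (i : Fin (n+2)) (p : Fin 2 × Fin 2) :
    Matrix (Fin (rfun n i.castSucc)) (Fin (rfun n i.succ)) ℂ :=
  Matrix.of fun a b =>
    Wfun jx jy jz lam p (if (i : ℕ) = 0 then 4 else (a : ℕ))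
      (if (i : ℕ) = n+1 then 0 else (b : ℕ))

def Phi (n : ℕ) (β : ∀ j : Fin (n+3), Fin (rfun n j)) (j : Fin (n+3)) : Fin 5 :=
  if h : (j : ℕ) = 0 then 4 else if h2 : (j : ℕ) = n+2 then 0
  else ⟨(β j : ℕ), by
    have h3 := (β j).isLt
    have h4 : rfun n j = 5 := by unfold rfun; rw [if_neg h, if_neg h2]
    omega⟩

def Psi (n : ℕ) (γ : Fin (n+3) → Fin 5) (j : Fin (n+3)) : Fin (rfun n j) :=
  ⟨(γ j : ℕ) % rfun n j, Nat.mod_lt _ (rfun_pos n j)⟩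

lemma tt_sum_eq (n : ℕ) (jx jy jz lam : ℂ) (x : Fin (n+2) → Fin 2 × Fin 2)
    (y : ℕ → Fin 2 × Fin 2) (hy : ∀ i : Fin (n+2), y (i : ℕ) = x i) :
    (∑ β : ∀ j : Fin (n+3), Fin (rfun n j),
        ∏ i : Fin (n+2), Gcore n jx jy jz lam i (x i) (β i.castSucc) (β i.succ))
      = ∑ γ : Fin (n+2+1) → Fin 5,
          if γ 0 = 4 ∧ γ (Fin.last (n+2)) = 0 then
            ∏ i : Fin (n+2), Wfun jx jy jz lam (y (i : ℕ)) ((γ i.castSucc : Fin 5) : ℕ)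
              ((γ i.succ : Fin 5) : ℕ)
          else 0 := by
  classical
  rw [← Finset.sum_filter]
  refine Finset.sum_nbij' (Phi n) (Psi n) ?_ ?_ ?_ ?_ ?_
  · intro β _
    simp only [Finset.mem_filter, Finset.mem_univ, true_and]
    constructor
    · simp [Phi]
    · simp [Phi, Fin.val_last]
  · intro γ _
    exact Finset.mem_univ _
  · intro β _
    funext j
    apply Fin.ext
    show ((Phi n β j : Fin 5) : ℕ) % rfun n j = (β j : ℕ)
    have hmod : ((Phi n β j : Fin 5) : ℕ) % rfun n j < rfun n j :=
      Nat.mod_lt _ (rfun_pos n j)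
    by_cases h : (j : ℕ) = 0
    · have hr : rfun n j = 1 := by simp [rfun, h]
      have hb := (β j).isLt
      omega
    · by_cases h2 : (j : ℕ) = n+2
      · have hr : rfun n j = 1 := by simp [rfun, h, h2]
        have hb := (β j).isLt
        omega
      · have hr : rfun n j = 5 := by simp [rfun, h, h2]
        have hb := (β j).isLt
        have hv : ((Phi n β j : Fin 5) : ℕ) = (β j : ℕ) := by
          simp only [Phi, dif_neg h, dif_neg h2]
        rw [hv]
        exact Nat.mod_eq_of_lt hb
  · intro γ hγ
    have hmem := (Finset.mem_filter.mp hγ).2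
    obtain ⟨h0, hl⟩ := hmem
    funext j
    apply Fin.ext
    by_cases h : (j : ℕ) = 0
    · have hj0 : j = 0 := Fin.ext h
      have hv : ((Phi n (Psi n γ) j : Fin 5) : ℕ) = 4 := by
        simp only [Phi, dif_pos h]
        rfl
      rw [hv, hj0, h0]
      rfl
    · by_cases h2 : (j : ℕ) = n+2
      · have hjl : j = Fin.last (n+2) := Fin.ext (by rw [h2, Fin.val_last])
        have hv : ((Phi n (Psi n γ) j : Fin 5) : ℕ) = 0 := by
          simp only [Phi, dif_neg h, dif_pos h2]
          rfl
        rw [hv, hjl, hl]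
        rfl
      · have hr : rfun n j = 5 := by simp [rfun, h, h2]
        have hv : ((Phi n (Psi n γ) j : Fin 5) : ℕ) = (γ j : ℕ) % rfun n j := by
          simp only [Phi, dif_neg h, dif_neg h2, Psi]
        rw [hv, hr]
        exact Nat.mod_eq_of_lt (γ j).isLt
  · intro β _
    refine Finset.prod_congr rfl fun i _ => ?_
    have hilt := i.isLt
    have ha : (if (i : ℕ) = 0 then 4 else ((β i.castSucc) : ℕ))
        = ((Phi n β i.castSucc : Fin 5) : ℕ) := by
      by_cases h : (i : ℕ) = 0
      · have hc : ((i.castSucc : Fin (n+3)) : ℕ) = 0 := by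
          rw [Fin.coe_castSucc, h]
        simp only [Phi, hc, if_pos h, dif_pos]
        rfl
      · have hc : ¬ ((i.castSucc : Fin (n+3)) : ℕ) = 0 := by
          rw [Fin.coe_castSucc]; exact h
        have hc2 : ¬ ((i.castSucc : Fin (n+3)) : ℕ) = n+2 := by
          rw [Fin.coe_castSucc]
          omega
        simp only [Phi, if_neg h, dif_neg hc, dif_neg hc2]
    have hb : (if (i : ℕ) = n+1 then 0 else ((β i.succ) : ℕ))
        = ((Phi n β i.succ : Fin 5) : ℕ) := by
      by_cases h : (i : ℕ) = n+1
      · have hc : ((i.succ : Fin (n+3)) : ℕ) = n+2 := by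
          rw [Fin.val_succ, h]
        have hc0 : ¬ ((i.succ : Fin (n+3)) : ℕ) = 0 := by
          rw [Fin.val_succ]; omega
        simp only [Phi, if_pos h, dif_neg hc0, dif_pos hc]
        rfl
      · have hc0 : ¬ ((i.succ : Fin (n+3)) : ℕ) = 0 := by
          rw [Fin.val_succ]; omega
        have hc2 : ¬ ((i.succ : Fin (n+3)) : ℕ) = n+2 := by
          rw [Fin.val_succ]
          omega
        simp only [Phi, if_neg h, dif_neg hc0, dif_neg hc2]
    show (Matrix.of fun a b => Wfun jx jy jz lam (x i) (if (i : ℕ) = 0 then 4 else (a : ℕ))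
        (if (i : ℕ) = n+1 then 0 else (b : ℕ))) (β i.castSucc) (β i.succ)
      = Wfun jx jy jz lam (y (i : ℕ)) ((Phi n β i.castSucc : Fin 5) : ℕ)
        ((Phi n β i.succ : Fin 5) : ℕ)
    rw [Matrix.of_apply, hy i, ha, hb]

lemma prod_filter_lt (N i : ℕ) (hN : 0 < N) (hi : i ≤ N) (g : ℕ → ℂ) :
    (∏ k ∈ Finset.univ.filter (fun k : Fin N => (k : ℕ) < i), g (k : ℕ))
      = ∏ k ∈ Finset.range i, g k := by
  refine Finset.prod_nbij' (fun k : Fin N => (k : ℕ))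
    (fun m => (⟨m % N, Nat.mod_lt _ hN⟩ : Fin N)) ?_ ?_ ?_ ?_ ?_
  · intro a ha
    simp only [Finset.mem_filter, Finset.mem_univ, true_and] at ha
    show (a : ℕ) ∈ Finset.range i
    exact Finset.mem_range.mpr ha
  · intro m hm
    have hm' := Finset.mem_range.mp hm
    simp only [Finset.mem_filter, Finset.mem_univ, true_and]
    show (m % N) < i
    rw [Nat.mod_eq_of_lt (by omega)]
    omega
  · intro a _
    apply Fin.ext
    show (a : ℕ) % N = (a : ℕ)
    exact Nat.mod_eq_of_lt a.isLt
  · intro m hm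
    have hm' := Finset.mem_range.mp hm
    show m % N = m
    exact Nat.mod_eq_of_lt (by omega)
  · intro a _
    rfl

lemma prod_filter_gt (N j : ℕ) (hN : 0 < N) (g : ℕ → ℂ) :
    (∏ k ∈ Finset.univ.filter (fun k : Fin N => j < (k : ℕ)), g (k : ℕ))
      = ∏ k ∈ Finset.Ico (j+1) N, g k := by
  refine Finset.prod_nbij' (fun k : Fin N => (k : ℕ))
    (fun m => (⟨m % N, Nat.mod_lt _ hN⟩ : Fin N)) ?_ ?_ ?_ ?_ ?_
  · intro a ha
    simp only [Finset.mem_filter, Finset.mem_univ, true_and] at ha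
    show (a : ℕ) ∈ Finset.Ico (j+1) N
    have := a.isLt
    exact Finset.mem_Ico.mpr ⟨by omega, a.isLt⟩
  · intro m hm
    have hm' := Finset.mem_Ico.mp hm
    simp only [Finset.mem_filter, Finset.mem_univ, true_and]
    show j < m % N
    rw [Nat.mod_eq_of_lt (by omega)]
    omega
  · intro a _
    apply Fin.ext
    show (a : ℕ) % N = (a : ℕ)
    exact Nat.mod_eq_of_lt a.isLt
  · intro m hm
    have hm' := Finset.mem_Ico.mp hm
    show m % N = m
    exact Nat.mod_eq_of_lt (by omega)
  · intro a _
    rfl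

lemma nnSum_eq (n : ℕ) (P : Matrix (Fin 2) (Fin 2) ℂ) (x : Fin (n+2) → Fin 2 × Fin 2)
    (y : ℕ → Fin 2 × Fin 2) (hy : ∀ i : Fin (n+2), y (i : ℕ) = x i) :
    nnSum n P x = nnP P y (n+2) := by
  unfold nnSum nnP
  rw [show n + 2 - 1 = n + 1 from rfl]
  rw [← Fin.sum_univ_eq_sum_range (fun i : ℕ =>
    (∏ k ∈ Finset.range i, delta (y k)) * P (y i).1 (y i).2 * P (y (i+1)).1 (y (i+1)).2
      * ∏ k ∈ Finset.Ico (i+2) (n+2), delta (y k)) (n+1)]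
  refine Finset.sum_congr rfl fun m _ => ?_
  have hmlt := m.isLt
  have hone : ∀ k : Fin (n+2),
      (1 : Matrix (Fin 2) (Fin 2) ℂ) (x k).1 (x k).2 = delta (y (k : ℕ)) := by
    intro k
    rw [hy k, Matrix.one_apply, delta]
  have hpre : (∏ k ∈ Finset.univ.filter (fun k : Fin (n+2) => (k : ℕ) < (m : ℕ)),
      (1 : Matrix (Fin 2) (Fin 2) ℂ) (x k).1 (x k).2)
      = ∏ k ∈ Finset.range (m : ℕ), delta (y k) := by
    rw [Finset.prod_congr rfl fun k _ => hone k]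
    exact prod_filter_lt (n+2) (m : ℕ) (by omega) (by omega) (fun k => delta (y k))
  have hsuf : (∏ k ∈ Finset.univ.filter (fun k : Fin (n+2) => (m : ℕ) + 1 < (k : ℕ)),
      (1 : Matrix (Fin 2) (Fin 2) ℂ) (x k).1 (x k).2)
      = ∏ k ∈ Finset.Ico ((m : ℕ)+2) (n+2), delta (y k) := by
    rw [Finset.prod_congr rfl fun k _ => hone k]
    exact prod_filter_gt (n+2) ((m : ℕ)+1) (by omega) (fun k => delta (y k))
  have h1 : x m.castSucc = y (m : ℕ) := by rw [← hy m.castSucc, Fin.coe_castSucc]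
  have h2 : x m.succ = y ((m : ℕ)+1) := by rw [← hy m.succ, Fin.val_succ]
  show (∏ k ∈ Finset.univ.filter (fun k : Fin (n+2) => (k : ℕ) < (m : ℕ)),
      (1 : Matrix (Fin 2) (Fin 2) ℂ) (x k).1 (x k).2)
      * P (x m.castSucc).1 (x m.castSucc).2 * P (x m.succ).1 (x m.succ).2
      * ∏ k ∈ Finset.univ.filter (fun k : Fin (n+2) => (m : ℕ) + 1 < (k : ℕ)),
          (1 : Matrix (Fin 2) (Fin 2) ℂ) (x k).1 (x k).2
    = (∏ k ∈ Finset.range (m : ℕ), delta (y k)) * P (y (m : ℕ)).1 (y (m : ℕ)).2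
      * P (y ((m : ℕ)+1)).1 (y ((m : ℕ)+1)).2
      * ∏ k ∈ Finset.Ico ((m : ℕ)+2) (n+2), delta (y k)
  rw [hpre, hsuf, h1, h2]

lemma siteSum_eq (n : ℕ) (P : Matrix (Fin 2) (Fin 2) ℂ) (x : Fin (n+2) → Fin 2 × Fin 2)
    (y : ℕ → Fin 2 × Fin 2) (hy : ∀ i : Fin (n+2), y (i : ℕ) = x i) :
    siteSum n P x = ssP P y (n+2) := by
  unfold siteSum ssP
  rw [← Fin.sum_univ_eq_sum_range (fun i : ℕ =>
    (∏ k ∈ Finset.range i, delta (y k)) * P (y i).1 (y i).2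
      * ∏ k ∈ Finset.Ico (i+1) (n+2), delta (y k)) (n+2)]
  refine Finset.sum_congr rfl fun m _ => ?_
  have hmlt := m.isLt
  have hone : ∀ k : Fin (n+2),
      (1 : Matrix (Fin 2) (Fin 2) ℂ) (x k).1 (x k).2 = delta (y (k : ℕ)) := by
    intro k
    rw [hy k, Matrix.one_apply, delta]
  have hpre : (∏ k ∈ Finset.univ.filter (fun k : Fin (n+2) => (k : ℕ) < (m : ℕ)),
      (1 : Matrix (Fin 2) (Fin 2) ℂ) (x k).1 (x k).2)
      = ∏ k ∈ Finset.range (m : ℕ), delta (y k) := by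
    rw [Finset.prod_congr rfl fun k _ => hone k]
    exact prod_filter_lt (n+2) (m : ℕ) (by omega) (by omega) (fun k => delta (y k))
  have hsuf : (∏ k ∈ Finset.univ.filter (fun k : Fin (n+2) => (m : ℕ) < (k : ℕ)),
      (1 : Matrix (Fin 2) (Fin 2) ℂ) (x k).1 (x k).2)
      = ∏ k ∈ Finset.Ico ((m : ℕ)+1) (n+2), delta (y k) := by
    rw [Finset.prod_congr rfl fun k _ => hone k]
    exact prod_filter_gt (n+2) (m : ℕ) (by omega) (fun k => delta (y k))
  have h1 : x m = y (m : ℕ) := (hy m).symm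
  show (∏ k ∈ Finset.univ.filter (fun k : Fin (n+2) => (k : ℕ) < (m : ℕ)),
      (1 : Matrix (Fin 2) (Fin 2) ℂ) (x k).1 (x k).2)
      * P (x m).1 (x m).2
      * ∏ k ∈ Finset.univ.filter (fun k : Fin (n+2) => (m : ℕ) < (k : ℕ)),
          (1 : Matrix (Fin 2) (Fin 2) ℂ) (x k).1 (x k).2
    = (∏ k ∈ Finset.range (m : ℕ), delta (y k)) * P (y (m : ℕ)).1 (y (m : ℕ)).2
      * ∏ k ∈ Finset.Ico ((m : ℕ)+1) (n+2), delta (y k)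
  rw [hpre, hsuf, h1]

end HeisenbergTT



/-- **The Heisenberg (XYZ) Hamiltonian admits a rank-7 TT representation**
(Lemma 4.5 of the paper). The number of spins is `d = n + 2 ≥ 2`. -/
theorem heisenberg_XYZ_tt_rank_le_seven (n : ℕ) (jx jy jz lam : ℂ) :
    ∃ r : Fin (n + 3) → ℕ, (∀ j, r j ≤ 7) ∧
      IsTTRep (fun x : Fin (n + 2) → Fin 2 × Fin 2 =>
        jx * nnSum n pauliX x + jy * nnSum n pauliY x + jz * nnSum n pauliZ x
          + lam * siteSum n pauliX x) r := by
  classical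
  refine ⟨HeisenbergTT.rfun n, ?_, ?_, ?_, HeisenbergTT.Gcore n jx jy jz lam, ?_⟩
  · intro j
    unfold HeisenbergTT.rfun
    split
    · norm_num
    split <;> norm_num
  · simp [HeisenbergTT.rfun]
  · simp [HeisenbergTT.rfun, Fin.val_last]
  · intro x
    have hy : ∀ i : Fin (n+2),
        (fun k : ℕ => x ⟨k % (n+2), Nat.mod_lt _ (by omega)⟩) (i : ℕ) = x i := by
      intro i
      show x ⟨(i : ℕ) % (n+2), _⟩ = x i
      congr 1
      exact Fin.ext (Nat.mod_eq_of_lt i.isLt)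
    set y : ℕ → Fin 2 × Fin 2 := fun k : ℕ => x ⟨k % (n+2), Nat.mod_lt _ (by omega)⟩
    have e1 := HeisenbergTT.tt_sum_eq n jx jy jz lam x y hy
    have e2 := HeisenbergTT.path_sum jx jy jz lam y (n+2) 0
    have e3 := HeisenbergTT.uvec_zero jx jy jz lam y (n+2)
    have e4 : jx * nnSum n pauliX x + jy * nnSum n pauliY x + jz * nnSum n pauliZ x
        + lam * siteSum n pauliX x
        = jx * HeisenbergTT.nnP pauliX y (n+2) + jy * HeisenbergTT.nnP pauliY y (n+2)
          + jz * HeisenbergTT.nnP pauliZ y (n+2)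
          + lam * HeisenbergTT.ssP pauliX y (n+2) := by
      rw [HeisenbergTT.nnSum_eq n pauliX x y hy, HeisenbergTT.nnSum_eq n pauliY x y hy,
        HeisenbergTT.nnSum_eq n pauliZ x y hy, HeisenbergTT.siteSum_eq n pauliX x y hy]
    exact e4.trans (e3.symm.trans (e2.symm.trans e1.symm))
end

section
/- Let d ≥ 2 and let j_z, λ ∈ ℂ. Let P_x = [[0,1],[1,0]] and P_z = [[1,0],[0,−1]] be Pauli matrices in Matrix (Fin 2) (Fin 2) ℂ, and let I denote the 2×2 identity. Define the Ising (ZZ) Hamiltonian entrywise as h : (Fin 2 × Fin 2)^d → ℂ, h((x_1,x'_1),…,(x_d,x'_d)) = j_z · Σ_{i=2}^d (∏_{k=1}^{i-2} I(x_k,x'_k)) · P_z(x_{i-1},x'_{i-1}) · P_z(x_i,x'_i) · (∏_{k=i+1}^d I(x_k,x'_k)) + λ · Σ_{i=1}^d (∏_{k=1}^{i-1} I(x_k,x'_k)) · P_x(x_i,x'_i) · (∏_{k=i+1}^d I(x_k,x'_k)). Then h admits a TT representation with all ranks at most 5. -/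
open scoped BigOperators

noncomputable section IsingAux

noncomputable def Idm (p : Fin 2 × Fin 2) : ℂ := (1 : Matrix (Fin 2) (Fin 2) ℂ) p.1 p.2
noncomputable def Zm (p : Fin 2 × Fin 2) : ℂ := pauliZ p.1 p.2
noncomputable def Xm (p : Fin 2 × Fin 2) : ℂ := pauliX p.1 p.2

noncomputable def Wc (jz lam : ℂ) (p : Fin 2 × Fin 2) : Matrix (Fin 3) (Fin 3) ℂ :=
  !![Idm p, Zm p, lam * Xm p; 0, 0, jz * Zm p; 0, 0, Idm p]

def rk (n : ℕ) : Fin (n+3) → ℕ := fun j => if (j : ℕ) = 0 ∨ (j : ℕ) = n+2 then 1 else 3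

lemma rk_le3 (n : ℕ) (j : Fin (n+3)) : rk n j ≤ 3 := by
  unfold rk; split <;> omega

lemma rk_interior (n : ℕ) (j : Fin (n+3)) (h : ¬((j : ℕ) = 0 ∨ (j : ℕ) = n+2)) :
    rk n j = 3 := by
  unfold rk; rw [if_neg h]

lemma rk_boundary (n : ℕ) (j : Fin (n+3)) (h : (j : ℕ) = 0 ∨ (j : ℕ) = n+2) :
    rk n j = 1 := by
  unfold rk; rw [if_pos h]

noncomputable def emb (n : ℕ) (j : Fin (n+3)) (a : Fin (rk n j)) : Fin 3 :=
  if (j : ℕ) = n+2 then 2 else ⟨a.val, lt_of_lt_of_le a.isLt (rk_le3 n j)⟩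

noncomputable def Gc (n : ℕ) (jz lam : ℂ) (i : Fin (n+2)) (p : Fin 2 × Fin 2) :
    Matrix (Fin (rk n i.castSucc)) (Fin (rk n i.succ)) ℂ :=
  Matrix.of fun a b => Wc jz lam p (emb n i.castSucc a) (emb n i.succ b)

def Phi (n : ℕ) : (Fin (n+1) → Fin 3) ≃ (∀ j : Fin (n+3), Fin (rk n j)) where
  toFun γ j :=
    if h : (j : ℕ) = 0 ∨ (j : ℕ) = n+2 then
      ⟨0, by rw [rk_boundary n j h]; omega⟩
    else
      ⟨(γ ⟨(j : ℕ) - 1, by have := j.isLt; omega⟩).val,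
        by rw [rk_interior n j h]; exact (γ _).isLt⟩
  invFun β k :=
    ⟨(β ⟨(k : ℕ) + 1, by have := k.isLt; omega⟩).val,
      lt_of_lt_of_le (β _).isLt
        (le_of_eq (rk_interior n _ (by have := k.isLt; simp; omega)))⟩
  left_inv γ := by
    funext k
    apply Fin.ext
    have h : ¬(((k : ℕ) + 1 : ℕ) = 0 ∨ ((k : ℕ) + 1 : ℕ) = n+2) := by
      have := k.isLt; omega
    show (dite _ _ _ : Fin _).val = _
    rw [dif_neg h]
    show (γ ⟨(k : ℕ) + 1 - 1, _⟩).val = (γ k).val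
    have hk : (⟨(k : ℕ) + 1 - 1, by have := k.isLt; omega⟩ : Fin (n+1)) = k :=
      Fin.ext (by simp)
    rw [hk]
  right_inv β := by
    funext j
    by_cases h : (j : ℕ) = 0 ∨ (j : ℕ) = n+2
    · apply Fin.ext
      show (dite _ _ _ : Fin _).val = _
      rw [dif_pos h]
      have h2 : (β j).val < 1 :=
        lt_of_lt_of_le (β j).isLt (le_of_eq (rk_boundary n j h))
      show (0 : ℕ) = ((β j) : ℕ)
      omega
    · apply Fin.ext
      show (dite _ _ _ : Fin _).val = _
      rw [dif_neg h]
      show (β ⟨(j : ℕ) - 1 + 1, _⟩).val = (β j).val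
      have hj : (⟨(j : ℕ) - 1 + 1, by have := j.isLt; omega⟩ : Fin (n+3)) = j :=
        Fin.ext (by simp; omega)
      rw [hj]

lemma emb_Phi (n : ℕ) (γ : Fin (n+1) → Fin 3) (j : Fin (n+3)) :
    emb n j (Phi n γ j)
      = (Fin.cons 0 (Fin.snoc γ 2) : Fin (n+3) → Fin 3) j := by
  by_cases h2 : (j : ℕ) = n+2
  · have hj : j = Fin.succ (Fin.last (n+1)) := Fin.ext (by simp [h2])
    rw [hj, Fin.cons_succ, Fin.snoc_last]
    show (if _ then _ else _ : Fin 3) = 2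
    rw [if_pos (by simp)]
  · by_cases h0 : (j : ℕ) = 0
    · have hj : j = 0 := Fin.ext h0
      rw [hj, Fin.cons_zero]
      apply Fin.ext
      show (if _ then _ else _ : Fin 3).val = (0 : Fin 3).val
      rw [if_neg (by omega)]
      show ((Phi n γ 0).val : ℕ) = 0
      show (dite _ _ _ : Fin _).val = 0
      rw [dif_pos (Or.inl (show ((0 : Fin (n+3)) : ℕ) = 0 from rfl))]
    · set k : Fin (n+1) := ⟨(j : ℕ) - 1, by have := j.isLt; omega⟩ with hk
      have hj : j = Fin.succ k.castSucc := Fin.ext (by simp [hk]; omega)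
      rw [hj, Fin.cons_succ, Fin.snoc_castSucc]
      apply Fin.ext
      show (if _ then _ else _ : Fin 3).val = (γ k).val
      rw [if_neg (by simp [hk]; omega)]
      show (Phi n γ (Fin.succ k.castSucc)).val = (γ k).val
      show (dite _ _ _ : Fin _).val = (γ k).val
      rw [dif_neg (by simp [hk]; omega)]
      show (γ ⟨((Fin.succ k.castSucc : Fin (n+3)) : ℕ) - 1, _⟩).val = (γ k).val
      have : (⟨((Fin.succ k.castSucc : Fin (n+3)) : ℕ) - 1,
          by simp only [Fin.val_succ, Fin.coe_castSucc]; omega⟩ :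
          Fin (n+1)) = k := Fin.ext (by simp)
      rw [this]

end IsingAux

noncomputable def Bmat (M : ℕ → Matrix (Fin 3) (Fin 3) ℂ) : ℕ → Matrix (Fin 3) (Fin 3) ℂ
  | 0 => 1
  | t+1 => Bmat M t * M t

lemma chain_sum (M : ℕ → Matrix (Fin 3) (Fin 3) ℂ) : ∀ (d : ℕ) (a b : Fin 3),
    (∑ γ : Fin (d+1) → Fin 3, ∏ i : Fin (d+2),
      M i.val ((Fin.cons a (Fin.snoc γ b) : Fin (d+3) → Fin 3) i.castSucc)
              ((Fin.cons a (Fin.snoc γ b) : Fin (d+3) → Fin 3) i.succ))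
    = Bmat M (d+2) a b := by
  intro d
  induction d with
  | zero =>
    intro a b
    rw [Fintype.sum_equiv (Equiv.funUnique (Fin 1) (Fin 3)) _
      (fun c : Fin 3 => M 0 a c * M 1 c b) (fun γ => ?_)]
    · show _ = Bmat M 2 a b
      rw [show Bmat M 2 = Bmat M 1 * M 1 from rfl, show Bmat M 1 = Bmat M 0 * M 0 from rfl,
        show Bmat M 0 = 1 from rfl, Matrix.one_mul, Matrix.mul_apply]
    · rw [Fin.prod_univ_two,
        show ((0:Fin 2).castSucc) = (0:Fin 3) from rfl, Fin.cons_zero,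
        show ((0:Fin 2).succ) = Fin.succ ((0:Fin 1).castSucc) from rfl, Fin.cons_succ,
        Fin.snoc_castSucc,
        show ((1:Fin 2).castSucc) = Fin.succ ((0:Fin 1).castSucc) from rfl, Fin.cons_succ,
        Fin.snoc_castSucc,
        show ((1:Fin 2).succ) = Fin.succ (Fin.last 1) from rfl, Fin.cons_succ, Fin.snoc_last]
      rfl
  | succ d ih =>
    intro a b
    have key : ∀ p : (Fin 3 × (Fin (d+1) → Fin 3)),
        (∏ i : Fin (d+1+2),
          M i.val ((Fin.cons a (Fin.snoc (Fin.snoc p.2 p.1) b) : Fin (d+4) → Fin 3) i.castSucc)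
                  ((Fin.cons a (Fin.snoc (Fin.snoc p.2 p.1) b) : Fin (d+4) → Fin 3) i.succ))
        = (∏ i : Fin (d+2),
            M i.val ((Fin.cons a (Fin.snoc p.2 p.1) : Fin (d+3) → Fin 3) i.castSucc)
                    ((Fin.cons a (Fin.snoc p.2 p.1) : Fin (d+3) → Fin 3) i.succ))
            * M (d+2) p.1 b := by
      intro p
      have h1 : ∀ j : Fin (d+3),
          (Fin.cons a (Fin.snoc (Fin.snoc p.2 p.1) b) : Fin (d+4) → Fin 3) j.castSucc
          = (Fin.cons a (Fin.snoc p.2 p.1) : Fin (d+3) → Fin 3) j := by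
        intro j
        induction j using Fin.cases with
        | zero => simp
        | succ j' =>
          rw [← Fin.succ_castSucc, Fin.cons_succ, Fin.cons_succ, Fin.snoc_castSucc]
      rw [Fin.prod_univ_castSucc]
      congr 1
      · apply Finset.prod_congr rfl
        intro i _
        rw [show (Fin.castSucc i).succ = Fin.castSucc i.succ from (Fin.succ_castSucc _).symm,
          h1, h1, Fin.coe_castSucc]
      · rw [h1, Fin.cons_succ, Fin.snoc_last, Fin.val_last,
          show Fin.last (d+2) = Fin.succ (Fin.last (d+1)) from rfl, Fin.cons_succ, Fin.snoc_last]
    calc (∑ γ : Fin (d+2) → Fin 3, ∏ i : Fin (d+3),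
          M i.val ((Fin.cons a (Fin.snoc γ b) : Fin (d+4) → Fin 3) i.castSucc)
                  ((Fin.cons a (Fin.snoc γ b) : Fin (d+4) → Fin 3) i.succ))
        = ∑ p : Fin 3 × (Fin (d+1) → Fin 3),
            (∏ i : Fin (d+2),
              M i.val ((Fin.cons a (Fin.snoc p.2 p.1) : Fin (d+3) → Fin 3) i.castSucc)
                      ((Fin.cons a (Fin.snoc p.2 p.1) : Fin (d+3) → Fin 3) i.succ))
              * M (d+2) p.1 b := by
          refine (Fintype.sum_equiv (Fin.snocEquiv (fun _ : Fin (d+2) => Fin 3)) _ _ ?_).symm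
          intro p
          exact (key p).symm
      _ = Bmat M (d+3) a b := by
          rw [Fintype.sum_prod_type]
          simp only [← Finset.sum_mul]
          rw [show Bmat M (d+3) = Bmat M (d+2) * M (d+2) from rfl, Matrix.mul_apply]
          exact Finset.sum_congr rfl (fun g _ => by rw [ih a g])

noncomputable def Aprod (y : ℕ → Fin 2 × Fin 2) (t : ℕ) : ℂ :=
  ∏ k ∈ Finset.range t, Idm (y k)

noncomputable def S1 (y : ℕ → Fin 2 × Fin 2) (t : ℕ) : ℂ :=
  ∑ i ∈ Finset.range t,
    (∏ k ∈ Finset.range i, Idm (y k)) * Xm (y i) * ∏ k ∈ Finset.Ico (i+1) t, Idm (y k)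

noncomputable def S2 (y : ℕ → Fin 2 × Fin 2) (t : ℕ) : ℂ :=
  ∑ m ∈ Finset.range (t-1),
    (∏ k ∈ Finset.range m, Idm (y k)) * Zm (y m) * Zm (y (m+1))
      * ∏ k ∈ Finset.Ico (m+2) t, Idm (y k)

lemma row_inv (jz lam : ℂ) (y : ℕ → Fin 2 × Fin 2) (t : ℕ) :
    Bmat (fun k => Wc jz lam (y k)) t 0 0 = Aprod y t
    ∧ Bmat (fun k => Wc jz lam (y k)) t 0 1
        = (if t = 0 then 0 else Aprod y (t-1) * Zm (y (t-1)))
    ∧ Bmat (fun k => Wc jz lam (y k)) t 0 2 = lam * S1 y t + jz * S2 y t := by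
  induction t with
  | zero =>
    refine ⟨?_, ?_, ?_⟩ <;> simp [Bmat, Aprod, S1, S2, Matrix.one_apply]
  | succ t ih =>
    obtain ⟨h0, h1, h2⟩ := ih
    have e0 : Bmat (fun k => Wc jz lam (y k)) (t+1) 0 0
        = Bmat (fun k => Wc jz lam (y k)) t 0 0 * Idm (y t) := by
      rw [show Bmat (fun k => Wc jz lam (y k)) (t+1)
          = Bmat (fun k => Wc jz lam (y k)) t * Wc jz lam (y t) from rfl, Matrix.mul_apply,
        Fin.sum_univ_three,
        show Wc jz lam (y t) 0 0 = Idm (y t) from rfl,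
        show Wc jz lam (y t) 1 0 = 0 from rfl,
        show Wc jz lam (y t) 2 0 = 0 from rfl]
      ring
    have e1 : Bmat (fun k => Wc jz lam (y k)) (t+1) 0 1
        = Bmat (fun k => Wc jz lam (y k)) t 0 0 * Zm (y t) := by
      rw [show Bmat (fun k => Wc jz lam (y k)) (t+1)
          = Bmat (fun k => Wc jz lam (y k)) t * Wc jz lam (y t) from rfl, Matrix.mul_apply,
        Fin.sum_univ_three,
        show Wc jz lam (y t) 0 1 = Zm (y t) from rfl,
        show Wc jz lam (y t) 1 1 = 0 from rfl,
        show Wc jz lam (y t) 2 1 = 0 from rfl]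
      ring
    have e2 : Bmat (fun k => Wc jz lam (y k)) (t+1) 0 2
        = Bmat (fun k => Wc jz lam (y k)) t 0 0 * (lam * Xm (y t))
          + Bmat (fun k => Wc jz lam (y k)) t 0 1 * (jz * Zm (y t))
          + Bmat (fun k => Wc jz lam (y k)) t 0 2 * Idm (y t) := by
      rw [show Bmat (fun k => Wc jz lam (y k)) (t+1)
          = Bmat (fun k => Wc jz lam (y k)) t * Wc jz lam (y t) from rfl, Matrix.mul_apply,
        Fin.sum_univ_three,
        show Wc jz lam (y t) 0 2 = lam * Xm (y t) from rfl,
        show Wc jz lam (y t) 1 2 = jz * Zm (y t) from rfl,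
        show Wc jz lam (y t) 2 2 = Idm (y t) from rfl]
    have hA : Aprod y (t+1) = Aprod y t * Idm (y t) := Finset.prod_range_succ _ _
    have hS1 : S1 y (t+1) = S1 y t * Idm (y t) + Aprod y t * Xm (y t) := by
      rw [S1, Finset.sum_range_succ]
      congr 1
      · rw [S1, Finset.sum_mul]
        refine Finset.sum_congr rfl (fun i hi => ?_)
        rw [Finset.mem_range] at hi
        rw [Finset.prod_Ico_succ_top (by omega)]
        ring
      · rw [Aprod, Finset.Ico_self, Finset.prod_empty, mul_one]
    have hS2 : S2 y (t+1) = S2 y t * Idm (y t)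
        + (if t = 0 then 0 else Aprod y (t-1) * Zm (y (t-1))) * Zm (y t) := by
      rcases Nat.eq_zero_or_pos t with ht | ht
      · subst ht
        simp [S2]
      · obtain ⟨s, rfl⟩ : ∃ s, t = s + 1 := ⟨t - 1, by omega⟩
        rw [S2, show (s+1+1)-1 = s+1 from rfl, Finset.sum_range_succ]
        congr 1
        · rw [S2, show (s+1)-1 = s from rfl, Finset.sum_mul]
          refine Finset.sum_congr rfl (fun m hm => ?_)
          rw [Finset.mem_range] at hm
          rw [Finset.prod_Ico_succ_top (by omega)]
          ring
        · rw [if_neg (Nat.succ_ne_zero s), Nat.add_sub_cancel,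
            show Finset.Ico (s+2) (s+1+1) = ∅ from Finset.Ico_eq_empty (by omega),
            Finset.prod_empty, mul_one]
          rfl
    refine ⟨by rw [e0, h0, hA], by rw [e1, h0]; simp, ?_⟩
    rw [e2, h0, h1, h2, hS1, hS2]
    ring

lemma prod_filter_lt (d m : ℕ) (hm : m ≤ d) (g : ℕ → ℂ) :
    (∏ k ∈ Finset.univ.filter (fun k : Fin d => (k:ℕ) < m), g k.val)
      = ∏ k ∈ Finset.range m, g k := by
  refine Finset.prod_bij' (fun k _ => k.val) (fun k hk => ⟨k, ?_⟩) ?_ ?_ ?_ ?_ ?_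
  · rw [Finset.mem_range] at hk; omega
  · intro a ha; rw [Finset.mem_filter] at ha; rw [Finset.mem_range]; exact ha.2
  · intro a ha; rw [Finset.mem_range] at ha
    simp only [Finset.mem_filter, Finset.mem_univ, true_and]; exact ha
  · intro a ha; rfl
  · intro a ha; rfl
  · intro a ha; rfl

lemma prod_filter_gt (d m : ℕ) (g : ℕ → ℂ) :
    (∏ k ∈ Finset.univ.filter (fun k : Fin d => m < (k:ℕ)), g k.val)
      = ∏ k ∈ Finset.Ico (m+1) d, g k := by
  refine Finset.prod_bij' (fun k _ => k.val) (fun k hk => ⟨k, ?_⟩) ?_ ?_ ?_ ?_ ?_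
  · rw [Finset.mem_Ico] at hk; omega
  · intro a ha; rw [Finset.mem_filter] at ha; rw [Finset.mem_Ico]
    exact ⟨ha.2, a.isLt⟩
  · intro a ha; rw [Finset.mem_Ico] at ha
    simp only [Finset.mem_filter, Finset.mem_univ, true_and]; omega
  · intro a ha; rfl
  · intro a ha; rfl
  · intro a ha; rfl


/-- **The Ising (ZZ) Hamiltonian admits a rank-5 TT representation**
(Lemma 4.5 of the paper). The number of spins is `d = n + 2 ≥ 2`. -/
theorem ising_ZZ_tt_rank_le_five (n : ℕ) (jz lam : ℂ) :
    ∃ r : Fin (n + 3) → ℕ, (∀ j, r j ≤ 5) ∧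
      IsTTRep (fun x : Fin (n + 2) → Fin 2 × Fin 2 =>
        jz * nnSum n pauliZ x
          + lam * siteSum n pauliX x) r := by
  refine ⟨rk n, fun j => le_trans (rk_le3 n j) (by omega), ?_, ?_, Gc n jz lam, ?_⟩
  · exact rk_boundary n 0 (Or.inl rfl)
  · exact rk_boundary n (Fin.last (n+2)) (Or.inr (by simp))
  · intro x
    set x' : ℕ → Fin 2 × Fin 2 := fun m => if h : m < n+2 then x ⟨m, h⟩ else (0, 0)
      with hx'def
    have hx' : ∀ k : Fin (n+2), x' (k : ℕ) = x k := by
      intro k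
      simp only [hx'def]
      rw [dif_pos k.isLt]
    have hpath : (∑ β : ∀ j : Fin (n+3), Fin (rk n j),
          ∏ i : Fin (n+2), Gc n jz lam i (x i) (β i.castSucc) (β i.succ))
        = Bmat (fun k => Wc jz lam (x' k)) (n+2) 0 2 := by
      rw [← chain_sum (fun k => Wc jz lam (x' k)) n 0 2]
      refine (Fintype.sum_equiv (Phi n) _ _ ?_).symm
      intro γ
      refine Finset.prod_congr rfl (fun i _ => ?_)
      calc Wc jz lam (x' (i : ℕ))
            ((Fin.cons 0 (Fin.snoc γ 2) : Fin (n+3) → Fin 3) i.castSucc)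
            ((Fin.cons 0 (Fin.snoc γ 2) : Fin (n+3) → Fin 3) i.succ)
          = Wc jz lam (x i) (emb n i.castSucc (Phi n γ i.castSucc))
              (emb n i.succ (Phi n γ i.succ)) := by
            rw [hx' i, emb_Phi, emb_Phi]
        _ = Gc n jz lam i (x i) (Phi n γ i.castSucc) (Phi n γ i.succ) := rfl
    have hB := (row_inv jz lam x' (n+2)).2.2
    have hsite : siteSum n pauliX x = S1 x' (n+2) := by
      rw [siteSum, S1, ← Fin.sum_univ_eq_sum_range
        (fun i => (∏ k ∈ Finset.range i, Idm (x' k)) * Xm (x' i)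
          * ∏ k ∈ Finset.Ico (i+1) (n+2), Idm (x' k)) (n+2)]
      refine Finset.sum_congr rfl (fun i _ => ?_)
      rw [← prod_filter_lt (n+2) (i : ℕ) (le_of_lt i.isLt) (fun k => Idm (x' k)),
        ← prod_filter_gt (n+2) (i : ℕ) (fun k => Idm (x' k))]
      congr 1
      · congr 1
        · refine Finset.prod_congr rfl (fun k _ => ?_)
          rw [hx' k]
          rfl
        · show pauliX (x i).1 (x i).2 = Xm (x' (i : ℕ))
          rw [hx' i]
          rfl
      · refine Finset.prod_congr rfl (fun k _ => ?_)
        rw [hx' k]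
        rfl
    have hnn : nnSum n pauliZ x = S2 x' (n+2) := by
      rw [nnSum, S2, show (n+2)-1 = n+1 from rfl, ← Fin.sum_univ_eq_sum_range
        (fun m => (∏ k ∈ Finset.range m, Idm (x' k)) * Zm (x' m) * Zm (x' (m+1))
          * ∏ k ∈ Finset.Ico (m+2) (n+2), Idm (x' k)) (n+1)]
      refine Finset.sum_congr rfl (fun m _ => ?_)
      rw [← prod_filter_lt (n+2) (m : ℕ) (by omega) (fun k => Idm (x' k)),
        show (m : ℕ) + 2 = ((m : ℕ) + 1) + 1 from rfl,
        ← prod_filter_gt (n+2) ((m : ℕ) + 1) (fun k => Idm (x' k))]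
      congr 1
      · congr 1
        · congr 1
          · refine Finset.prod_congr rfl (fun k _ => ?_)
            rw [hx' k]
            rfl
          · show pauliZ (x m.castSucc).1 (x m.castSucc).2 = Zm (x' (m : ℕ))
            rw [show ((m : ℕ)) = ((m.castSucc : Fin (n+2)) : ℕ) from rfl, hx' m.castSucc]
            rfl
        · show pauliZ (x m.succ).1 (x m.succ).2 = Zm (x' ((m : ℕ) + 1))
          rw [show ((m : ℕ) + 1) = ((m.succ : Fin (n+2)) : ℕ) from rfl, hx' m.succ]
          rfl
      · refine Finset.prod_congr rfl (fun k _ => ?_)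
        rw [hx' k]
        rfl
    show jz * nnSum n pauliZ x + lam * siteSum n pauliX x = _
    rw [hnn, hsite, hpath, hB]
    ring
end

section
/- Let d ≥ 2 and let j_x, j_y, λ ∈ ℂ. Let P_x = [[0,1],[1,0]], P_y = [[0,−i],[i,0]] be Pauli matrices in Matrix (Fin 2) (Fin 2) ℂ, and let I denote the 2×2 identity. Define the Heisenberg (XY) Hamiltonian entrywise as h : (Fin 2 × Fin 2)^d → ℂ, h((x_1,x'_1),…,(x_d,x'_d)) = Σ_{μ∈{x,y}} j_μ · Σ_{i=2}^d (∏_{k=1}^{i-2} I(x_k,x'_k)) · P_μ(x_{i-1},x'_{i-1}) · P_μ(x_i,x'_i) · (∏_{k=i+1}^d I(x_k,x'_k)) + λ · Σ_{i=1}^d (∏_{k=1}^{i-1} I(x_k,x'_k)) · P_x(x_i,x'_i) · (∏_{k=i+1}^d I(x_k,x'_k)). Then h admits a TT representation with all ranks at most 6. -/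
open scoped BigOperators

namespace TTaux

abbrev σ := Fin 2 × Fin 2

noncomputable def Id2 (x : σ) : ℂ := (1 : Matrix (Fin 2) (Fin 2) ℂ) x.1 x.2
noncomputable def pE (P : Matrix (Fin 2) (Fin 2) ℂ) (x : σ) : ℂ := P x.1 x.2

noncomputable def core (jx jy lam : ℂ) (x : σ) : Matrix (Fin 4) (Fin 4) ℂ :=
  !![Id2 x, pE pauliX x, pE pauliY x, lam * pE pauliX x;
     0, 0, 0, jx * pE pauliX x;
     0, 0, 0, jy * pE pauliY x;
     0, 0, 0, Id2 x]

noncomputable def V (jx jy lam : ℂ) : (m : ℕ) → (Fin (m+1) → σ) → Fin 4 → ℂ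
  | 0, x => fun a => core jx jy lam (x 0) a 3
  | m+1, x => Matrix.mulVec (core jx jy lam (x 0)) (V jx jy lam m (fun i => x i.succ))

noncomputable def Ham (jx jy lam : ℂ) : (m : ℕ) → (Fin (m+1) → σ) → ℂ
  | 0, x => lam * pE pauliX (x 0)
  | m+1, x => Id2 (x 0) * Ham jx jy lam m (fun i => x i.succ)
      + jx * (pE pauliX (x 0) * pE pauliX (x 1) * ∏ k : Fin m, Id2 (x k.succ.succ))
      + jy * (pE pauliY (x 0) * pE pauliY (x 1) * ∏ k : Fin m, Id2 (x k.succ.succ))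
      + lam * (pE pauliX (x 0) * ∏ k : Fin (m+1), Id2 (x k.succ))

lemma core_entries (jx jy lam : ℂ) (x : σ) :
    core jx jy lam x 0 0 = Id2 x ∧ core jx jy lam x 0 1 = pE pauliX x ∧
    core jx jy lam x 0 2 = pE pauliY x ∧ core jx jy lam x 0 3 = lam * pE pauliX x ∧
    core jx jy lam x 1 3 = jx * pE pauliX x ∧ core jx jy lam x 2 3 = jy * pE pauliY x ∧
    core jx jy lam x 3 3 = Id2 x ∧ core jx jy lam x 1 0 = 0 := by
  refine ⟨?_, ?_, ?_, ?_, ?_, ?_, ?_, ?_⟩ <;> simp [core]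

lemma Vspec (jx jy lam : ℂ) : ∀ (m : ℕ) (x : Fin (m+1) → σ),
    V jx jy lam m x = ![Ham jx jy lam m x,
      jx * (pE pauliX (x 0) * ∏ k : Fin m, Id2 (x k.succ)),
      jy * (pE pauliY (x 0) * ∏ k : Fin m, Id2 (x k.succ)),
      ∏ k : Fin (m+1), Id2 (x k)] := by
  intro m
  induction m with
  | zero =>
    intro x
    funext a
    fin_cases a <;> simp [V, Ham, core]
  | succ m ih =>
    intro x
    funext a
    have hV : V jx jy lam (m+1) x = Matrix.mulVec (core jx jy lam (x 0)) (V jx jy lam m (fun i => x i.succ)) := rfl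
    rw [hV, ih]
    fin_cases a <;>
      simp [Matrix.mulVec, dotProduct, Fin.sum_univ_four, core, Ham,
        Fin.prod_univ_succ, mul_comm, mul_assoc, mul_left_comm] <;> ring

noncomputable def colU {N : ℕ} : (d : ℕ) → (Fin d → Matrix (Fin N) (Fin N) ℂ) → (Fin N → ℂ) → Fin N → ℂ
  | 0, _, v => v
  | d+1, M, v => Matrix.mulVec (M 0) (colU d (fun i => M i.succ) v)

lemma sumU {N : ℕ} : ∀ (d : ℕ) (M : Fin d → Matrix (Fin N) (Fin N) ℂ) (w v : Fin N → ℂ),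
    ∑ β : Fin (d+1) → Fin N,
      w (β 0) * (∏ i : Fin d, M i (β i.castSucc) (β i.succ)) * v (β (Fin.last d))
    = ∑ a, w a * colU d M v a := by
  intro d
  induction d with
  | zero =>
    intro M w v
    rw [← Equiv.sum_comp (Equiv.funUnique (Fin 1) (Fin N)).symm]
    simp [colU]
  | succ d ih =>
    intro M w v
    rw [← Equiv.sum_comp (Fin.consEquiv (fun _ : Fin (d+2) => Fin N))]
    rw [Fintype.sum_prod_type]
    have key : ∀ (a : Fin N) (g : Fin (d+1) → Fin N),
        (w ((Fin.consEquiv (fun _ : Fin (d+2) => Fin N)) (a, g) 0)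
          * (∏ i : Fin (d+1), M i (((Fin.consEquiv (fun _ : Fin (d+2) => Fin N)) (a, g)) i.castSucc)
              (((Fin.consEquiv (fun _ : Fin (d+2) => Fin N)) (a, g)) i.succ))
          * v (((Fin.consEquiv (fun _ : Fin (d+2) => Fin N)) (a, g)) (Fin.last (d+1))))
        = (w a * M 0 a (g 0)) * ((∏ i : Fin d, M i.succ (g i.castSucc) (g i.succ)) * v (g (Fin.last d))) := by
      intro a g
      have h1 : ∀ i : Fin (d+1), (Fin.cons a g : ∀ _ : Fin (d+2), Fin N) i.succ = g i := fun i => rfl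
      have hprod : (∏ i : Fin (d+1), M i ((Fin.cons a g : ∀ _ : Fin (d+2), Fin N) i.castSucc)
          ((Fin.cons a g : ∀ _ : Fin (d+2), Fin N) i.succ))
          = M 0 a (g 0) * ∏ i : Fin d, M i.succ (g i.castSucc) (g i.succ) := by
        rw [Fin.prod_univ_succ]
        congr 1
      have hlast : (Fin.cons a g : ∀ _ : Fin (d+2), Fin N) (Fin.last (d+1)) = g (Fin.last d) := by
        rw [← Fin.succ_last]; exact h1 _
      simp only [Fin.consEquiv_apply, hprod, hlast, Fin.cons_zero]
      ring
    simp only [key]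
    rw [Finset.sum_comm]
    have : ∀ g : Fin (d+1) → Fin N,
        ∑ a : Fin N, (w a * M 0 a (g 0)) * ((∏ i : Fin d, M i.succ (g i.castSucc) (g i.succ)) * v (g (Fin.last d)))
        = (∑ a : Fin N, w a * M 0 a (g 0)) * (∏ i : Fin d, M i.succ (g i.castSucc) (g i.succ)) * v (g (Fin.last d)) := by
      intro g; rw [Finset.sum_mul, Finset.sum_mul]
      exact Finset.sum_congr rfl (fun a _ => by ring)
    simp only [this]
    rw [ih (fun i => M i.succ) (fun b => ∑ a, w a * M 0 a b) v]
    simp only [colU, Matrix.mulVec, dotProduct, Finset.sum_mul, Finset.mul_sum]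
    rw [Finset.sum_comm]
    exact Finset.sum_congr rfl (fun a _ => Finset.sum_congr rfl (fun b _ => by ring))

lemma colU_eq_V (jx jy lam : ℂ) : ∀ (m : ℕ) (y : Fin (m+1) → σ),
    colU m (fun i => core jx jy lam (y i.castSucc)) (fun a => core jx jy lam (y (Fin.last m)) a 3)
      = V jx jy lam m y := by
  intro m
  induction m with
  | zero => intro y; rfl
  | succ m ih =>
    intro y
    show Matrix.mulVec (core jx jy lam (y 0))
        (colU m (fun i => core jx jy lam (y i.succ.castSucc))
          (fun a => core jx jy lam (y (Fin.last (m+1))) a 3))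
      = Matrix.mulVec (core jx jy lam (y 0)) (V jx jy lam m (fun i => y i.succ))
    exact congrArg _ (ih fun i => y i.succ)


lemma prod_filter_val_succ {n : ℕ} (p : ℕ → Prop) [DecidablePred p] (f : Fin (n+1) → ℂ) :
    ∏ k ∈ Finset.univ.filter (fun k : Fin (n+1) => p (k : ℕ)), f k
      = (if p 0 then f 0 else 1)
        * ∏ k ∈ Finset.univ.filter (fun k : Fin n => p ((k : ℕ)+1)), f k.succ := by
  rw [Finset.prod_filter, Finset.prod_filter, Fin.prod_univ_succ]
  simp [Fin.val_succ]
  by_cases h : p 0 <;> simp [h]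

lemma nnSum_zero (P : Matrix (Fin 2) (Fin 2) ℂ) (x : Fin 2 → σ) :
    nnSum 0 P x = pE P (x 0) * pE P (x 1) := by
  simp [nnSum, pE, prod_filter_val_succ, Finset.filter_eq_empty_iff]

lemma siteSum_zero (P : Matrix (Fin 2) (Fin 2) ℂ) (x : Fin 2 → σ) :
    siteSum 0 P x = pE P (x 0) * Id2 (x 1) + Id2 (x 0) * pE P (x 1) := by
  simp [siteSum, pE, Id2, Fin.sum_univ_two, Finset.prod_filter, Fin.prod_univ_two]

lemma nnSum_succ (n : ℕ) (P : Matrix (Fin 2) (Fin 2) ℂ) (x : Fin (n+3) → σ) :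
    nnSum (n+1) P x
      = pE P (x 0) * pE P (x 1) * (∏ k : Fin (n+1), Id2 (x k.succ.succ))
        + Id2 (x 0) * nnSum n P (fun i => x i.succ) := by
  rw [nnSum, Fin.sum_univ_succ]
  congr 1
  · -- m = 0 term
    have e1 : (Finset.univ.filter (fun k : Fin (n+3) => (k : ℕ) < ((0 : Fin (n+2)) : ℕ))) = ∅ := by
      simp
    have e2 : ∏ k ∈ Finset.univ.filter (fun k : Fin (n+3) => ((0 : Fin (n+2)) : ℕ) + 1 < (k : ℕ)),
          (1 : Matrix (Fin 2) (Fin 2) ℂ) (x k).1 (x k).2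
        = ∏ k : Fin (n+1), (1 : Matrix (Fin 2) (Fin 2) ℂ) (x k.succ.succ).1 (x k.succ.succ).2 := by
      rw [Finset.prod_filter, Fin.prod_univ_succ, Fin.prod_univ_succ]
      simp [Nat.succ_lt_succ_iff]
    rw [e1, e2]
    simp [pE, Id2]
  · rw [nnSum, Finset.mul_sum]
    refine Finset.sum_congr rfl (fun m _ => ?_)
    have e1 : ∏ k ∈ Finset.univ.filter (fun k : Fin (n+3) => (k : ℕ) < ((m.succ : Fin (n+2)) : ℕ)),
          (1 : Matrix (Fin 2) (Fin 2) ℂ) (x k).1 (x k).2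
        = (1 : Matrix (Fin 2) (Fin 2) ℂ) (x 0).1 (x 0).2
          * ∏ k ∈ Finset.univ.filter (fun k : Fin (n+2) => (k : ℕ) < (m : ℕ)),
              (1 : Matrix (Fin 2) (Fin 2) ℂ) (x k.succ).1 (x k.succ).2 := by
      rw [prod_filter_val_succ (p := fun t => t < ((m.succ : Fin (n+2)) : ℕ))]
      rw [if_pos (by simp)]
      congr 1
      rw [Finset.prod_filter, Finset.prod_filter]
      refine Finset.prod_congr rfl (fun k _ => ?_)
      have : ((k : ℕ) + 1 < ((m.succ : Fin (n+2)) : ℕ)) ↔ ((k : ℕ) < (m : ℕ)) := by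
        simp [Fin.val_succ]
      simp only [this]
    have e2 : ∏ k ∈ Finset.univ.filter (fun k : Fin (n+3) => ((m.succ : Fin (n+2)) : ℕ) + 1 < (k : ℕ)),
          (1 : Matrix (Fin 2) (Fin 2) ℂ) (x k).1 (x k).2
        = ∏ k ∈ Finset.univ.filter (fun k : Fin (n+2) => (m : ℕ) + 1 < (k : ℕ)),
              (1 : Matrix (Fin 2) (Fin 2) ℂ) (x k.succ).1 (x k.succ).2 := by
      rw [prod_filter_val_succ (p := fun t => ((m.succ : Fin (n+2)) : ℕ) + 1 < t)]
      rw [if_neg (by simp)]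
      rw [one_mul, Finset.prod_filter, Finset.prod_filter]
      refine Finset.prod_congr rfl (fun k _ => ?_)
      have : (((m.succ : Fin (n+2)) : ℕ) + 1 < (k : ℕ) + 1) ↔ ((m : ℕ) + 1 < (k : ℕ)) := by
        simp [Fin.val_succ]
      simp only [this]
    rw [e1, e2]
    simp only [← Fin.succ_castSucc, Id2]
    ring



lemma siteSum_succ (n : ℕ) (P : Matrix (Fin 2) (Fin 2) ℂ) (x : Fin (n+3) → σ) :
    siteSum (n+1) P x
      = pE P (x 0) * (∏ k : Fin (n+2), Id2 (x k.succ))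
        + Id2 (x 0) * siteSum n P (fun i => x i.succ) := by
  rw [siteSum, Fin.sum_univ_succ]
  congr 1
  · -- i = 0 term
    have e1 : (Finset.univ.filter (fun k : Fin (n+3) => (k : ℕ) < ((0 : Fin (n+3)) : ℕ))) = ∅ := by
      simp
    have e2 : ∏ k ∈ Finset.univ.filter (fun k : Fin (n+3) => ((0 : Fin (n+3)) : ℕ) < (k : ℕ)),
          (1 : Matrix (Fin 2) (Fin 2) ℂ) (x k).1 (x k).2
        = ∏ k : Fin (n+2), (1 : Matrix (Fin 2) (Fin 2) ℂ) (x k.succ).1 (x k.succ).2 := by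
      rw [Finset.prod_filter, Fin.prod_univ_succ]
      simp
    rw [e1, e2]
    simp [pE, Id2]
  · rw [siteSum, Finset.mul_sum]
    refine Finset.sum_congr rfl (fun i _ => ?_)
    have e1 : ∏ k ∈ Finset.univ.filter (fun k : Fin (n+3) => (k : ℕ) < ((i.succ : Fin (n+3)) : ℕ)),
          (1 : Matrix (Fin 2) (Fin 2) ℂ) (x k).1 (x k).2
        = (1 : Matrix (Fin 2) (Fin 2) ℂ) (x 0).1 (x 0).2
          * ∏ k ∈ Finset.univ.filter (fun k : Fin (n+2) => (k : ℕ) < (i : ℕ)),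
              (1 : Matrix (Fin 2) (Fin 2) ℂ) (x k.succ).1 (x k.succ).2 := by
      rw [prod_filter_val_succ (p := fun t => t < ((i.succ : Fin (n+3)) : ℕ))]
      rw [if_pos (by simp)]
      congr 1
      rw [Finset.prod_filter, Finset.prod_filter]
      refine Finset.prod_congr rfl (fun k _ => ?_)
      have : ((k : ℕ) + 1 < ((i.succ : Fin (n+3)) : ℕ)) ↔ ((k : ℕ) < (i : ℕ)) := by
        simp [Fin.val_succ]
      simp only [this]
    have e2 : ∏ k ∈ Finset.univ.filter (fun k : Fin (n+3) => ((i.succ : Fin (n+3)) : ℕ) < (k : ℕ)),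
          (1 : Matrix (Fin 2) (Fin 2) ℂ) (x k).1 (x k).2
        = ∏ k ∈ Finset.univ.filter (fun k : Fin (n+2) => (i : ℕ) < (k : ℕ)),
              (1 : Matrix (Fin 2) (Fin 2) ℂ) (x k.succ).1 (x k.succ).2 := by
      rw [prod_filter_val_succ (p := fun t => ((i.succ : Fin (n+3)) : ℕ) < t)]
      rw [if_neg (by simp)]
      rw [one_mul, Finset.prod_filter, Finset.prod_filter]
      refine Finset.prod_congr rfl (fun k _ => ?_)
      have : (((i.succ : Fin (n+3)) : ℕ) < (k : ℕ) + 1) ↔ ((i : ℕ) < (k : ℕ)) := by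
        simp [Fin.val_succ]
      simp only [this]
    rw [e1, e2]
    simp only [Id2]
    ring



lemma Ham_eq (jx jy lam : ℂ) : ∀ (n : ℕ) (x : Fin (n+2) → σ),
    Ham jx jy lam (n+1) x
      = jx * nnSum n pauliX x + jy * nnSum n pauliY x + lam * siteSum n pauliX x := by
  intro n
  induction n with
  | zero =>
    intro x
    rw [nnSum_zero, nnSum_zero, siteSum_zero]
    simp only [Ham]
    simp [Fin.prod_univ_one]
    ring
  | succ n ih =>
    intro x
    have hunfold : Ham jx jy lam (n+1+1) x
        = Id2 (x 0) * Ham jx jy lam (n+1) (fun i => x i.succ)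
          + jx * (pE pauliX (x 0) * pE pauliX (x 1) * ∏ k : Fin (n+1), Id2 (x k.succ.succ))
          + jy * (pE pauliY (x 0) * pE pauliY (x 1) * ∏ k : Fin (n+1), Id2 (x k.succ.succ))
          + lam * (pE pauliX (x 0) * ∏ k : Fin (n+2), Id2 (x k.succ)) := rfl
    rw [hunfold, ih (fun i => x i.succ), nnSum_succ, nnSum_succ, siteSum_succ]
    ring

noncomputable def rk (n : ℕ) : Fin (n+3) → ℕ :=
  fun j => if (j : ℕ) = 0 ∨ (j : ℕ) = n + 2 then 1 else 4

lemma rk_pos (n : ℕ) (j : Fin (n+3)) (h : (j : ℕ) = 0 ∨ (j : ℕ) = n + 2) : 0 < rk n j := by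
  simp only [rk]; rw [if_pos h]; norm_num

lemma rk_four (n : ℕ) (j : Fin (n+3)) (h : ¬((j : ℕ) = 0 ∨ (j : ℕ) = n + 2)) : rk n j = 4 := by
  simp only [rk]; rw [if_neg h]

def pad {m : ℕ} (b : Fin m) : Fin 4 := ⟨(b : ℕ) % 4, Nat.mod_lt _ (by norm_num)⟩

noncomputable def Gcore (jx jy lam : ℂ) (n : ℕ) (i : Fin (n+2)) (s : σ) :
    Matrix (Fin (rk n i.castSucc)) (Fin (rk n i.succ)) ℂ :=
  Matrix.of fun a b =>
    if (i : ℕ) = 0 then core jx jy lam s 0 (pad b)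
    else if (i : ℕ) = n + 1 then core jx jy lam s (pad a) 3
    else core jx jy lam s (pad a) (pad b)

noncomputable def φf (n : ℕ) (g : Fin (n+1) → Fin 4) : ∀ j : Fin (n+3), Fin (rk n j) :=
  fun j =>
    if h : (j : ℕ) = 0 ∨ (j : ℕ) = n + 2 then
      ⟨0, rk_pos n j h⟩
    else
      ⟨g ⟨(j : ℕ) - 1, by have := j.isLt; omega⟩, by rw [rk_four n j h]; exact (g _).isLt⟩

lemma pad_φf (n : ℕ) (g : Fin (n+1) → Fin 4) (j : Fin (n+3)) (k : Fin (n+1))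
    (hk : (k : ℕ) + 1 = (j : ℕ)) : pad (φf n g j) = g k := by
  have h : ¬((j : ℕ) = 0 ∨ (j : ℕ) = n + 2) := by have := k.isLt; omega
  apply Fin.ext
  simp only [φf, dif_neg h, pad]
  have hidx : (⟨(j : ℕ) - 1, by have := j.isLt; omega⟩ : Fin (n+1)) = k := by
    apply Fin.ext; simp; omega
  rw [hidx]
  exact Nat.mod_eq_of_lt (g k).isLt

noncomputable def pathEquiv (n : ℕ) : (Fin (n+1) → Fin 4) ≃ (∀ j : Fin (n+3), Fin (rk n j)) where
  toFun := φf n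
  invFun := fun β k => pad (β ⟨(k : ℕ) + 1, by have := k.isLt; omega⟩)
  left_inv := by
    intro g
    funext k
    exact pad_φf n g ⟨(k : ℕ) + 1, by have := k.isLt; omega⟩ k rfl
  right_inv := by
    intro β
    funext j
    by_cases h : (j : ℕ) = 0 ∨ (j : ℕ) = n + 2
    · apply Fin.ext
      simp only [φf, dif_pos h]
      have hlt := (β j).isLt
      have h1 : rk n j = 1 := by simp only [rk]; rw [if_pos h]
      omega
    · apply Fin.ext
      simp only [φf, dif_neg h]
      have hj : (⟨((⟨(j : ℕ) - 1, by have := j.isLt; omega⟩ : Fin (n+1)) : ℕ) + 1,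
          by have := j.isLt; omega⟩ : Fin (n+3)) = j := by
        apply Fin.ext; simp; omega
      show ((pad (β _)) : ℕ) = _
      rw [hj]
      have hlt := (β j).isLt
      have h4 := rk_four n j h
      simp only [pad]
      exact Nat.mod_eq_of_lt (by omega)

lemma prod_Gcore (jx jy lam : ℂ) (n : ℕ) (x : Fin (n+2) → σ) (g : Fin (n+1) → Fin 4) :
    (∏ i : Fin (n+2), Gcore jx jy lam n i (x i) (φf n g i.castSucc) (φf n g i.succ))
      = core jx jy lam (x 0) 0 (g 0)
        * (∏ i : Fin n, core jx jy lam (x i.succ.castSucc) (g i.castSucc) (g i.succ))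
        * core jx jy lam (x (Fin.last (n+1))) (g (Fin.last n)) 3 := by
  rw [Fin.prod_univ_succ, Fin.prod_univ_castSucc]
  have hA : Gcore jx jy lam n 0 (x 0) (φf n g (0 : Fin (n+2)).castSucc) (φf n g (0 : Fin (n+2)).succ)
      = core jx jy lam (x 0) 0 (g 0) := by
    simp only [Gcore, Matrix.of_apply]
    rw [if_pos (by simp)]
    congr 1
    exact pad_φf n g (0 : Fin (n+2)).succ 0 (by simp)
  have hB : ∀ i : Fin n,
      Gcore jx jy lam n (i.castSucc.succ) (x i.castSucc.succ)
          (φf n g (i.castSucc.succ : Fin (n+2)).castSucc) (φf n g (i.castSucc.succ : Fin (n+2)).succ)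
        = core jx jy lam (x i.succ.castSucc) (g i.castSucc) (g i.succ) := by
    intro i
    simp only [Gcore, Matrix.of_apply]
    rw [if_neg (by simp), if_neg (by have := i.isLt; simp; omega)]
    have e1 : pad (φf n g (i.castSucc.succ : Fin (n+2)).castSucc) = g i.castSucc :=
      pad_φf n g _ i.castSucc (by simp)
    have e2 : pad (φf n g (i.castSucc.succ : Fin (n+2)).succ) = g i.succ :=
      pad_φf n g _ i.succ (by simp)
    rw [e1, e2]
    exact congrArg (fun t => core jx jy lam (x t) (g i.castSucc) (g i.succ)) (Fin.succ_castSucc i)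
  have hC : Gcore jx jy lam n ((Fin.last n).succ) (x (Fin.last n).succ)
        (φf n g ((Fin.last n).succ : Fin (n+2)).castSucc) (φf n g ((Fin.last n).succ : Fin (n+2)).succ)
      = core jx jy lam (x (Fin.last (n+1))) (g (Fin.last n)) 3 := by
    simp only [Gcore, Matrix.of_apply]
    rw [if_neg (by simp), if_pos (by simp)]
    have e1 : pad (φf n g ((Fin.last n).succ : Fin (n+2)).castSucc) = g (Fin.last n) :=
      pad_φf n g _ (Fin.last n) (by simp)
    rw [e1]
    exact congrArg (fun t => core jx jy lam (x t) (g (Fin.last n)) 3) (Fin.succ_last n)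
  rw [hA]
  rw [show (∏ i : Fin n, Gcore jx jy lam n (i.castSucc.succ) (x i.castSucc.succ)
      (φf n g (i.castSucc.succ : Fin (n+2)).castSucc) (φf n g (i.castSucc.succ : Fin (n+2)).succ))
      = ∏ i : Fin n, core jx jy lam (x i.succ.castSucc) (g i.castSucc) (g i.succ) from
    Finset.prod_congr rfl (fun i _ => hB i)]
  rw [hC]
  ring

end TTaux

set_option maxHeartbeats 1000000

/-- **The Heisenberg (XY) Hamiltonian admits a rank-6 TT representation**
(Lemma 4.5 of the paper). The number of spins is `d = n + 2 ≥ 2`. -/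
theorem heisenberg_XY_tt_rank_le_six (n : ℕ) (jx jy lam : ℂ) :
    ∃ r : Fin (n + 3) → ℕ, (∀ j, r j ≤ 6) ∧
      IsTTRep (fun x : Fin (n + 2) → Fin 2 × Fin 2 =>
        jx * nnSum n pauliX x + jy * nnSum n pauliY x
          + lam * siteSum n pauliX x) r := by
  classical
  refine ⟨TTaux.rk n, fun j => ?_, ?_, ?_, fun i => TTaux.Gcore jx jy lam n i, fun x => ?_⟩
  · simp only [TTaux.rk]; split <;> norm_num
  · simp [TTaux.rk]
  · simp [TTaux.rk]
  · calc jx * nnSum n pauliX x + jy * nnSum n pauliY x + lam * siteSum n pauliX x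
        = TTaux.Ham jx jy lam (n+1) x := (TTaux.Ham_eq jx jy lam n x).symm
      _ = TTaux.V jx jy lam (n+1) x 0 := by rw [TTaux.Vspec]; simp
      _ = ∑ a : Fin 4, TTaux.core jx jy lam (x 0) 0 a * TTaux.V jx jy lam n (fun i => x i.succ) a := by
          show Matrix.mulVec _ _ 0 = _
          simp [Matrix.mulVec, dotProduct]
      _ = ∑ a : Fin 4, TTaux.core jx jy lam (x 0) 0 a
            * TTaux.colU n (fun i => TTaux.core jx jy lam (x i.succ.castSucc))
                (fun a => TTaux.core jx jy lam (x (Fin.last (n+1))) a 3) a := by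
          rw [show TTaux.colU n (fun i => TTaux.core jx jy lam (x i.succ.castSucc))
                (fun a => TTaux.core jx jy lam (x (Fin.last (n+1))) a 3)
              = TTaux.V jx jy lam n (fun i => x i.succ) from
            TTaux.colU_eq_V jx jy lam n (fun i => x i.succ)]
      _ = ∑ g : Fin (n+1) → Fin 4,
            TTaux.core jx jy lam (x 0) 0 (g 0)
              * (∏ i : Fin n, TTaux.core jx jy lam (x i.succ.castSucc) (g i.castSucc) (g i.succ))
              * TTaux.core jx jy lam (x (Fin.last (n+1))) (g (Fin.last n)) 3 :=
          (TTaux.sumU n _ _ _).symm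
      _ = ∑ g : Fin (n+1) → Fin 4, ∏ i : Fin (n+2),
            TTaux.Gcore jx jy lam n i (x i) (TTaux.φf n g i.castSucc) (TTaux.φf n g i.succ) :=
          (Finset.sum_congr rfl (fun g _ => (TTaux.prod_Gcore jx jy lam n x g))).symm
      _ = ∑ β : ∀ j : Fin (n+3), Fin (TTaux.rk n j), ∏ i : Fin (n+2),
            TTaux.Gcore jx jy lam n i (x i) (β i.castSucc) (β i.succ) := by
          rw [← Equiv.sum_comp (TTaux.pathEquiv n)
            (fun β : ∀ j : Fin (n+3), Fin (TTaux.rk n j) => ∏ i : Fin (n+2),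
              TTaux.Gcore jx jy lam n i (x i) (β i.castSucc) (β i.succ))]
          exact Finset.sum_congr rfl (fun g _ => rfl)
end

section
/- Let K be a field, d ≥ 2, and N_1,…,N_d ∈ ℕ positive. For each m = 1,…,M let z^m ∈ ℤ^d be a stoichiometric vector and let w^m : Fin N_1 × ⋯ × Fin N_d → K be a propensity function admitting a TT representation with ranks (1, ρ^m_1, …, ρ^m_{d-1}, 1). Define the truncated CME operator A as the function on grouped indices, A((x_1,x'_1),…,(x_d,x'_d)) = Σ_{m=1}^M ( ∏_{i=1}^d [ (x'_i : ℤ) = (x_i : ℤ) + z^m_i ] − ∏_{i=1}^d [ x_i = x'_i ] ) · w^m(x'_1,…,x'_d), where [P] denotes 1 if P holds and 0 otherwise. Then A admits a TT representation (on the index types α_i = Fin N_i × Fin N_i) whose i-th rank is at most Σ_{m=1}^M 2 ρ^m_i for each i = 1,…,d−1. -/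
open scoped BigOperators

lemma blockSum {R : Type*} [CommRing R] {d : ℕ} {α : Fin d → Type*}
    {ι : Type*} [Fintype ι] [DecidableEq ι]
    (β : ι → Fin (d+1) → Type) [∀ m j, Fintype (β m j)]
    (f : ι → ((∀ i, α i) → R))
    (G : ∀ m (i : Fin d), α i → β m i.castSucc → β m i.succ → R)
    (hf : ∀ m x, f m x = ∑ b : ∀ j, β m j, ∏ i, G m i (x i) (b i.castSucc) (b i.succ)) :
    ∃ H : ∀ i : Fin d, α i → ((Σ m, β m i.castSucc) → (Σ m, β m i.succ) → R),
      ∀ x, (∑ m, f m x)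
        = ∑ b : ∀ j, Σ m, β m j, ∏ i, H i (x i) (b i.castSucc) (b i.succ) := by
  classical
  refine ⟨fun i xi a b =>
    if h : a.1 = b.1 then
      G b.1 i xi (cast (congrArg (fun m => β m i.castSucc) h) a.2) b.2 else 0,
    fun x => ?_⟩
  have hsum : (∑ b : ∀ j, Σ m, β m j, ∏ i : Fin d,
        (fun (a : Σ m, β m i.castSucc) (b' : Σ m, β m i.succ) =>
          if h : a.1 = b'.1 then
            G b'.1 i (x i) (cast (congrArg (fun m => β m i.castSucc) h) a.2) b'.2 else 0)
          (b i.castSucc) (b i.succ))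
      = ∑ s : Σ P : Fin (d+1) → ι, ∀ j, β (P j) j, ∏ i : Fin d,
          (if h : s.1 i.castSucc = s.1 i.succ then
            G (s.1 i.succ) i (x i)
              (cast (congrArg (fun m => β m i.castSucc) h) (s.2 i.castSucc)) (s.2 i.succ)
          else 0) :=
    Fintype.sum_equiv ⟨fun b => ⟨fun j => (b j).1, fun j => (b j).2⟩,
      fun s j => ⟨s.1 j, s.2 j⟩, fun b => rfl, fun s => rfl⟩ _ _ (fun b => rfl)
  rw [hsum]
  rw [← Finset.univ_sigma_univ, Finset.sum_sigma]
  -- now : ∑ P, ∑ c, ∏ ...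
  set F : (Fin (d+1) → ι) → R := fun P => ∑ c : ∀ j, β (P j) j, ∏ i : Fin d,
      (if h : P i.castSucc = P i.succ then
        G (P i.succ) i (x i)
          (cast (congrArg (fun m => β m i.castSucc) h) (c i.castSucc)) (c i.succ)
      else 0) with hF
  have hker : ∀ P : Fin (d+1) → ι, (∀ i : Fin d, P i.castSucc = P i.succ) →
      P = fun _ => P 0 := by
    intro P h
    funext j
    induction j using Fin.induction with
    | zero => rfl
    | succ i ih => rw [← h i]; exact ih
  have hvanish : ∀ P : Fin (d+1) → ι,
      P ∉ Finset.univ.image (fun m => (fun _ => m : Fin (d+1) → ι)) → F P = 0 := by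
    intro P hP
    have : ¬ ∀ i : Fin d, P i.castSucc = P i.succ := by
      intro hall
      exact hP (Finset.mem_image.mpr ⟨P 0, Finset.mem_univ _, (hker P hall).symm⟩)
    push_neg at this
    obtain ⟨i, hi⟩ := this
    refine Finset.sum_eq_zero fun c _ => ?_
    exact Finset.prod_eq_zero (Finset.mem_univ i) (dif_neg hi)
  have hsub : (∑ P : Fin (d+1) → ι, F P)
      = ∑ P ∈ Finset.univ.image (fun m => (fun _ => m : Fin (d+1) → ι)), F P :=
    (Finset.sum_subset (Finset.subset_univ _) (fun P _ hP => hvanish P hP)).symm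
  have himg : (∑ P ∈ Finset.univ.image (fun m => (fun _ => m : Fin (d+1) → ι)), F P)
      = ∑ m : ι, F (fun _ => m) := by
    refine Finset.sum_image ?_
    intro m _ m' _ h
    exact congrFun h 0
  have hconst : ∀ m : ι, F (fun _ => m) = f m x := by
    intro m
    rw [hf m x, hF]
    refine Finset.sum_congr rfl fun c _ => Finset.prod_congr rfl fun i _ => ?_
    rw [dif_pos rfl]; rfl
  calc ∑ m, f m x = ∑ m : ι, F (fun _ => m) := by
        refine Finset.sum_congr rfl fun m _ => (hconst m).symm
    _ = _ := by rw [← himg, ← hsub]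

universe u

abbrev BdP (d : ℕ) (j : Fin (d+1)) : Prop := (j : ℕ) = 0 ∨ (j : ℕ) = d

def BC (d : ℕ) (β : Fin (d+1) → Type u) (j : Fin (d+1)) : Type u :=
  {u : Option (β j) // u = none ↔ BdP d j}

noncomputable instance {d : ℕ} {β : Fin (d+1) → Type u} [∀ j, Fintype (β j)] (j : Fin (d+1)) :
    Fintype (BC d β j) :=
  @Subtype.fintype _ _ (fun _ => Classical.propDecidable _) _

lemma card_BC_bd {d : ℕ} {β : Fin (d+1) → Type u} [∀ j, Fintype (β j)]
    {j : Fin (d+1)} (hj : BdP d j) : Fintype.card (BC d β j) = 1 :=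
  Fintype.card_eq_one_iff.mpr
    ⟨⟨none, iff_of_true rfl hj⟩, fun y => Subtype.ext (y.2.mpr hj)⟩

lemma card_BC_int {d : ℕ} {β : Fin (d+1) → Type u} [∀ j, Fintype (β j)]
    {j : Fin (d+1)} (hj : ¬ BdP d j) : Fintype.card (BC d β j) = Fintype.card (β j) := by
  refine Fintype.card_congr
    { toFun := fun u => Option.get u.1 ?_
      invFun := fun v => ⟨some v, iff_of_false (by simp) hj⟩
      left_inv := fun u => Subtype.ext (Option.some_get _)
      right_inv := fun v => Option.get_some _ _ }
  rcases hq : u.1 with _ | v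
  · exact absurd (u.2.mp hq) hj
  · simp

def idx0 (d : ℕ) (hd : 2 ≤ d) : Fin d := ⟨0, by omega⟩
def idx1 (d : ℕ) (hd : 2 ≤ d) : Fin d := ⟨d - 1, by omega⟩

variable {d : ℕ} {β : Fin (d+1) → Type u}

def vv (uu : ∀ j, BC d β j) (j : Fin (d+1)) (h : ¬ BdP d j) : β j :=
  Option.get (uu j).1 (by
    rcases hq : (uu j).1 with _ | v
    · exact absurd ((uu j).2.mp hq) h
    · simp)

lemma vv_some (uu : ∀ j, BC d β j) (j : Fin (d+1)) (h : ¬ BdP d j) :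
    (uu j).1 = some (vv uu j h) := (Option.some_get _).symm

def extFun (hd : 2 ≤ d) (uu : ∀ j, BC d β j)
    (a : β ((idx0 d hd).castSucc)) (bl : β ((idx1 d hd).succ)) : ∀ j, β j := fun j =>
  if h : (j : ℕ) = 0 then
    cast (congrArg β (show (idx0 d hd).castSucc = j from Fin.ext (by simp [idx0, h]))) a
  else if h' : (j : ℕ) = d then
    cast (congrArg β (show (idx1 d hd).succ = j from Fin.ext (by simp [idx1, h']; omega))) bl
  else vv uu j (not_or.mpr ⟨h, h'⟩)

def phiFun (b : ∀ j, β j) : ∀ j, BC d β j := fun j =>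
  if h : BdP d j then ⟨none, iff_of_true rfl h⟩
  else ⟨some (b j), iff_of_false (by simp) h⟩

lemma ext_at0 (hd : 2 ≤ d) (uu : ∀ j, BC d β j) (a : β ((idx0 d hd).castSucc))
    (bl : β ((idx1 d hd).succ)) : extFun hd uu a bl ((idx0 d hd).castSucc) = a := by
  rw [extFun, dif_pos (show (((idx0 d hd).castSucc : Fin (d+1)) : ℕ) = 0 by simp [idx0])]
  exact cast_eq _ a

lemma ext_atLast (hd : 2 ≤ d) (uu : ∀ j, BC d β j) (a : β ((idx0 d hd).castSucc))
    (bl : β ((idx1 d hd).succ)) : extFun hd uu a bl ((idx1 d hd).succ) = bl := by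
  have h0 : ¬ (((idx1 d hd).succ : Fin (d+1)) : ℕ) = 0 := by simp [idx1]
  have h1 : (((idx1 d hd).succ : Fin (d+1)) : ℕ) = d := by simp [idx1]; omega
  rw [extFun, dif_neg h0, dif_pos h1]
  exact cast_eq _ bl

lemma ext_int (hd : 2 ≤ d) (uu : ∀ j, BC d β j) (a : β ((idx0 d hd).castSucc))
    (bl : β ((idx1 d hd).succ)) (j : Fin (d+1)) (h : ¬ BdP d j) :
    extFun hd uu a bl j = vv uu j h := by
  obtain ⟨h1, h2⟩ := not_or.mp h
  rw [extFun, dif_neg h1, dif_neg h2]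

lemma ext_phi (hd : 2 ≤ d) (b : ∀ j, β j) :
    extFun hd (phiFun b) (b ((idx0 d hd).castSucc)) (b ((idx1 d hd).succ)) = b := by
  funext j
  by_cases h : (j : ℕ) = 0
  · have e : (idx0 d hd).castSucc = j := Fin.ext (by simp [idx0, h])
    subst e
    exact ext_at0 hd _ _ _
  · by_cases h' : (j : ℕ) = d
    · have e : (idx1 d hd).succ = j := Fin.ext (by simp [idx1, h']; omega)
      subst e
      exact ext_atLast hd _ _ _
    · rw [ext_int hd _ _ _ j (not_or.mpr ⟨h, h'⟩)]
      simp [vv, phiFun, (not_or.mpr ⟨h, h'⟩ : ¬ BdP d j)]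

lemma phi_ext (hd : 2 ≤ d) (uu : ∀ j, BC d β j) (a : β ((idx0 d hd).castSucc))
    (bl : β ((idx1 d hd).succ)) : phiFun (extFun hd uu a bl) = uu := by
  funext j
  apply Subtype.ext
  by_cases h : BdP d j
  · simp only [phiFun, h, ↓reduceDIte]
    exact ((uu j).2.mpr h).symm
  · simp only [phiFun, h, ↓reduceDIte]
    show some (extFun hd uu a bl j) = (uu j).1
    rw [ext_int hd uu a bl j h]
    exact (vv_some uu j h).symm

def evOpt {R : Type*} [CommRing R] {γ : Type u} [Fintype γ] (u : Option γ) (g : γ → R) : R :=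
  u.elim (∑ A, g A) g

lemma evOpt_none {R : Type*} [CommRing R] {γ : Type u} [Fintype γ] {u : Option γ}
    (h : u = none) (g : γ → R) : evOpt u g = ∑ A, g A := by rw [evOpt, h]; rfl

lemma evOpt_some {R : Type*} [CommRing R] {γ : Type u} [Fintype γ] {u : Option γ} {v : γ}
    (h : u = some v) (g : γ → R) : evOpt u g = g v := by rw [evOpt, h]; rfl

lemma compress {R : Type*} [CommRing R] (hd : 2 ≤ d) {α : Fin d → Type*}
    [∀ j, Fintype (β j)]
    (G : ∀ i : Fin d, α i → β i.castSucc → β i.succ → R)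
    (f : (∀ i, α i) → R)
    (hf : ∀ x, f x = ∑ b : ∀ j, β j, ∏ i, G i (x i) (b i.castSucc) (b i.succ)) :
    ∃ H : ∀ i : Fin d, α i → BC d β i.castSucc → BC d β i.succ → R,
      ∀ x, f x = ∑ uu : ∀ j, BC d β j, ∏ i, H i (x i) (uu i.castSucc) (uu i.succ) := by
  classical
  refine ⟨fun i xi a b => evOpt a.1 (fun A => evOpt b.1 (fun B => G i xi A B)), fun x => ?_⟩
  set i0 := idx0 d hd with hi0def
  set i1 := idx1 d hd with hi1def
  have hi01 : i1 ≠ i0 := by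
    simp only [hi0def, hi1def, idx0, idx1, ne_eq, Fin.ext_iff]
    omega
  have hb0 : BdP d (i0.castSucc) := Or.inl (by simp [hi0def, idx0])
  have hbl : BdP d (i1.succ) := Or.inr (by simp [hi1def, idx1]; omega)
  have hint_s0 : ¬ BdP d (i0.succ) := by
    simp only [BdP, not_or, Fin.val_succ, hi0def, idx0]
    omega
  have hint_c1 : ¬ BdP d (i1.castSucc) := by
    simp only [BdP, not_or, Fin.coe_castSucc, hi1def, idx1]
    omega
  have hc : ∀ i : Fin d, i ≠ i0 → ¬ BdP d i.castSucc := by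
    intro i hi
    simp only [BdP, not_or, Fin.coe_castSucc]
    refine ⟨fun hz => hi ?_, by omega⟩
    simp [hi0def, idx0, Fin.ext_iff, hz]
  have hs : ∀ i : Fin d, i ≠ i1 → ¬ BdP d i.succ := by
    intro i hi
    simp only [BdP, not_or, Fin.val_succ]
    refine ⟨by omega, fun hz => hi ?_⟩
    simp only [hi1def, idx1, Fin.ext_iff]
    omega
  have hmem1 : i1 ∈ Finset.univ.erase i0 := Finset.mem_erase.mpr ⟨hi01, Finset.mem_univ _⟩
  have hsplit : ∀ g : Fin d → R,
      ∏ i, g i = g i0 * (g i1 * ∏ i ∈ (Finset.univ.erase i0).erase i1, g i) := by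
    intro g
    rw [← Finset.mul_prod_erase _ _ (Finset.mem_univ i0), ← Finset.mul_prod_erase _ _ hmem1]
  have key : ∀ uu : ∀ j, BC d β j,
      (∑ p : β (i0.castSucc) × β (i1.succ),
        ∏ i, G i (x i) (extFun hd uu p.1 p.2 i.castSucc) (extFun hd uu p.1 p.2 i.succ))
      = ∏ i, evOpt (uu i.castSucc).1 fun A => evOpt (uu i.succ).1 fun B => G i (x i) A B := by
    intro uu
    set v1 := vv uu i0.succ hint_s0 with hv1
    set vd := vv uu i1.castSucc hint_c1 with hvd
    set C : R := ∏ i ∈ (Finset.univ.erase i0).erase i1,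
        (if h : ¬ BdP d i.castSucc ∧ ¬ BdP d i.succ then
          G i (x i) (vv uu i.castSucc h.1) (vv uu i.succ h.2) else 1) with hCdef
    have hL : ∀ p : β (i0.castSucc) × β (i1.succ),
        (∏ i, G i (x i) (extFun hd uu p.1 p.2 i.castSucc) (extFun hd uu p.1 p.2 i.succ))
        = G i0 (x i0) p.1 v1 * (G i1 (x i1) vd p.2 * C) := by
      intro p
      rw [hsplit]
      congr 1
      · rw [ext_at0, ext_int hd uu p.1 p.2 _ hint_s0]
      congr 1
      · rw [ext_int hd uu p.1 p.2 _ hint_c1, ext_atLast]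
      · refine Finset.prod_congr rfl fun i hi => ?_
        obtain ⟨hne1, hmem⟩ := Finset.mem_erase.mp hi
        obtain ⟨hne0, -⟩ := Finset.mem_erase.mp hmem
        rw [ext_int hd uu p.1 p.2 _ (hc i hne0), ext_int hd uu p.1 p.2 _ (hs i hne1),
          dif_pos ⟨hc i hne0, hs i hne1⟩]
    have hR : (∏ i, evOpt (uu i.castSucc).1 fun A => evOpt (uu i.succ).1 fun B => G i (x i) A B)
        = (∑ A, G i0 (x i0) A v1) * ((∑ B, G i1 (x i1) vd B) * C) := by
      rw [hsplit]
      congr 1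
      · rw [evOpt_none ((uu i0.castSucc).2.mpr hb0)]
        exact Finset.sum_congr rfl fun A _ => evOpt_some (vv_some uu _ hint_s0) _
      congr 1
      · rw [evOpt_some (vv_some uu _ hint_c1), evOpt_none ((uu i1.succ).2.mpr hbl)]
      · refine Finset.prod_congr rfl fun i hi => ?_
        obtain ⟨hne1, hmem⟩ := Finset.mem_erase.mp hi
        obtain ⟨hne0, -⟩ := Finset.mem_erase.mp hmem
        rw [evOpt_some (vv_some uu _ (hc i hne0)), evOpt_some (vv_some uu _ (hs i hne1)),
          dif_pos ⟨hc i hne0, hs i hne1⟩]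
    rw [hR]
    calc (∑ p : β (i0.castSucc) × β (i1.succ),
          ∏ i, G i (x i) (extFun hd uu p.1 p.2 i.castSucc) (extFun hd uu p.1 p.2 i.succ))
        = ∑ p : β (i0.castSucc) × β (i1.succ),
            G i0 (x i0) p.1 v1 * (G i1 (x i1) vd p.2 * C) :=
          Finset.sum_congr rfl fun p _ => hL p
      _ = (∑ A, G i0 (x i0) A v1) * ((∑ B, G i1 (x i1) vd B) * C) := by
          rw [Fintype.sum_prod_type, Finset.sum_mul]
          refine Finset.sum_congr rfl fun A _ => ?_
          rw [Finset.sum_mul, Finset.mul_sum]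
  calc f x = ∑ b : ∀ j, β j, ∏ i, G i (x i) (b i.castSucc) (b i.succ) := hf x
    _ = ∑ t : (∀ j, BC d β j) × (β (i0.castSucc) × β (i1.succ)),
          ∏ i, G i (x i) (extFun hd t.1 t.2.1 t.2.2 i.castSucc)
            (extFun hd t.1 t.2.1 t.2.2 i.succ) := by
        refine Fintype.sum_equiv
          ⟨fun b => (phiFun b, b (i0.castSucc), b (i1.succ)),
           fun t => extFun hd t.1 t.2.1 t.2.2,
           fun b => ext_phi hd b,
           fun t => Prod.ext (phi_ext hd t.1 t.2.1 t.2.2)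
             (Prod.ext (ext_at0 hd t.1 t.2.1 t.2.2) (ext_atLast hd t.1 t.2.1 t.2.2))⟩
          _ _ (fun b => ?_)
        simp only [Equiv.coe_fn_mk]
        rw [ext_phi hd b]
    _ = ∑ uu : ∀ j, BC d β j, ∑ p : β (i0.castSucc) × β (i1.succ),
          ∏ i, G i (x i) (extFun hd uu p.1 p.2 i.castSucc) (extFun hd uu p.1 p.2 i.succ) :=
        Fintype.sum_prod_type _
    _ = ∑ uu : ∀ j, BC d β j, ∏ i, evOpt (uu i.castSucc).1
          fun A => evOpt (uu i.succ).1 fun B => G i (x i) A B :=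
        Finset.sum_congr rfl fun uu _ => key uu

lemma toIsTTRep {R : Type*} [CommRing R] {d : ℕ} {α : Fin d → Type*}
    (β : Fin (d+1) → Type) [∀ j, Fintype (β j)]
    (f : (∀ i, α i) → R)
    (G : ∀ i : Fin d, α i → β i.castSucc → β i.succ → R)
    (hf : ∀ x, f x = ∑ b : ∀ j, β j, ∏ i, G i (x i) (b i.castSucc) (b i.succ))
    (h0 : Fintype.card (β 0) = 1) (hl : Fintype.card (β (Fin.last d)) = 1) :
    IsTTRep f (fun j => Fintype.card (β j)) := by
  refine ⟨h0, hl, fun i xi a b =>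
    G i xi ((Fintype.equivFin _).symm a) ((Fintype.equivFin _).symm b), fun x => ?_⟩
  rw [hf]
  exact Fintype.sum_equiv (Equiv.piCongrRight fun j => Fintype.equivFin (β j)) _ _
    (fun b => Finset.prod_congr rfl fun i _ => by simp)

/-- **TT-rank bound for the truncated CME operator** (Lemma 4.1 of the paper):
if each propensity `w m` has a TT representation with ranks `ρ m`, then the CME
operator `A = Σ_m (J^{z^m} - J^0) diag(w^m)`, written entrywise on the grouped
indices `(x i, x' i) : Fin (N i) × Fin (N i)`, admits a TT representation whose
`i`-th rank is at most `Σ_m 2 * ρ m i` for every interior `i = 1, …, d-1`. -/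
theorem cme_operator_tt_rank_bound {K : Type*} [Field K]
    (d : ℕ) (hd : 2 ≤ d) (M : ℕ)
    (N : Fin d → ℕ) (hN : ∀ i, 0 < N i)
    (z : Fin M → Fin d → ℤ)
    (w : Fin M → ((∀ i, Fin (N i)) → K))
    (ρ : Fin M → Fin (d + 1) → ℕ)
    (hw : ∀ m, IsTTRep (w m) (ρ m))
    (A : (∀ i : Fin d, Fin (N i) × Fin (N i)) → K)
    (hA : ∀ x : ∀ i : Fin d, Fin (N i) × Fin (N i),
      A x = ∑ m : Fin M,
        ((∏ i : Fin d, if (((x i).2 : ℕ) : ℤ) = (((x i).1 : ℕ) : ℤ) + z m i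
            then (1 : K) else 0)
          - ∏ i : Fin d, if (x i).1 = (x i).2 then (1 : K) else 0)
        * w m (fun i => (x i).2)) :
    ∃ r : Fin (d + 1) → ℕ,
      IsTTRep A r ∧
      ∀ i : Fin (d + 1), 0 < (i : ℕ) → (i : ℕ) < d →
        r i ≤ ∑ m : Fin M, 2 * ρ m i := by
  classical
  choose Gw hGw using fun m => (hw m).2.2
  set cc : (Fin M × Bool) → ∀ i : Fin d, (Fin (N i) × Fin (N i)) → K := fun p i y =>
    if p.2 then (if ((y.2 : ℕ) : ℤ) = ((y.1 : ℕ) : ℤ) + z p.1 i then 1 else 0)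
    else ((if (i : ℕ) = 0 then (-1 : K) else 1) * (if y.1 = y.2 then 1 else 0)) with hcc
  have h2 : ∀ x, A x = ∑ p : Fin M × Bool,
      (∏ i, cc p i (x i)) * w p.1 (fun i => (x i).2) := by
    intro x
    rw [hA, Fintype.sum_prod_type]
    refine Finset.sum_congr rfl fun m _ => ?_
    rw [Fintype.sum_bool]
    have ht : (∏ i, cc (m, true) i (x i))
        = ∏ i : Fin d, (if (((x i).2 : ℕ) : ℤ) = (((x i).1 : ℕ) : ℤ) + z m i
            then (1 : K) else 0) :=
      Finset.prod_congr rfl fun i _ => by simp [hcc]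
    have hfa : (∏ i, cc (m, false) i (x i))
        = - ∏ i : Fin d, (if (x i).1 = (x i).2 then (1 : K) else 0) := by
      have hsplit2 : (∏ i, cc (m, false) i (x i))
          = (∏ i : Fin d, (if (i : ℕ) = 0 then (-1 : K) else 1))
            * ∏ i : Fin d, (if (x i).1 = (x i).2 then (1 : K) else 0) := by
        rw [← Finset.prod_mul_distrib]
        exact Finset.prod_congr rfl fun i _ => by simp [hcc]
      have hsign : (∏ i : Fin d, (if (i : ℕ) = 0 then (-1 : K) else 1)) = -1 := by
        calc (∏ i : Fin d, (if (i : ℕ) = 0 then (-1 : K) else 1))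
            = ∏ i : Fin d, (if i = ⟨0, by omega⟩ then (-1 : K) else 1) :=
              Finset.prod_congr rfl fun i _ => by
                congr 1
                simp [Fin.ext_iff]
          _ = -1 := by
              rw [Finset.prod_ite_eq' Finset.univ (⟨0, by omega⟩ : Fin d)
                (fun _ => (-1 : K))]
              simp
      rw [hsplit2, hsign]
      ring
    rw [ht, hfa]
    ring
  have h1 : ∀ (p : Fin M × Bool) (x : ∀ i : Fin d, Fin (N i) × Fin (N i)),
      (∏ i, cc p i (x i)) * w p.1 (fun i => (x i).2)
      = ∑ b : ∀ j, Fin (ρ p.1 j), ∏ i,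
          (cc p i (x i) * Gw p.1 i (x i).2 (b i.castSucc) (b i.succ)) := by
    intro p x
    rw [hGw p.1 (fun i => (x i).2), Finset.mul_sum]
    exact Finset.sum_congr rfl fun b _ => (Finset.prod_mul_distrib).symm
  obtain ⟨Hb, hHb⟩ := blockSum (β := fun (p : Fin M × Bool) j => Fin (ρ p.1 j))
    (f := fun p x => (∏ i, cc p i (x i)) * w p.1 (fun i => (x i).2))
    (G := fun p i y a b => cc p i y * Gw p.1 i y.2 a b) h1
  have hAb : ∀ x, A x = ∑ b : ∀ j, Σ p : Fin M × Bool, Fin (ρ p.1 j),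
      ∏ i, Hb i (x i) (b i.castSucc) (b i.succ) := fun x => (h2 x).trans (hHb x)
  obtain ⟨Hc, hHc⟩ := compress hd (β := fun j => Σ p : Fin M × Bool, Fin (ρ p.1 j)) Hb A hAb
  refine ⟨fun j => Fintype.card (BC d (fun j => Σ p : Fin M × Bool, Fin (ρ p.1 j)) j),
    toIsTTRep (fun j => BC d (fun j => Σ p : Fin M × Bool, Fin (ρ p.1 j)) j) A Hc hHc
      (card_BC_bd (Or.inl (by simp))) (card_BC_bd (Or.inr (by simp))), ?_⟩
  intro i h0 hdd
  have hint : ¬ BdP d i := by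
    simp only [BdP, not_or]
    omega
  show Fintype.card (BC d (fun j => Σ p : Fin M × Bool, Fin (ρ p.1 j)) i)
      ≤ ∑ m : Fin M, 2 * ρ m i
  rw [card_BC_int hint, Fintype.card_sigma]
  refine le_of_eq ?_
  rw [Fintype.sum_prod_type]
  refine Finset.sum_congr rfl fun m _ => ?_
  rw [Fintype.sum_bool]
  simp [two_mul]
end

section
/- Let R be a commutative ring, d ≥ 1, and let β_1,…,β_d be types with decidable equality. If w : β_1 × ⋯ × β_d → R admits a TT representation with ranks (1, r_1, …, r_{d-1}, 1), then the diagonal matrix function D((x_1,x'_1),…,(x_d,x'_d)) = (∏_{i=1}^d [x_i = x'_i]) · w(x_1,…,x_d), where [P] is 1 if P holds and 0 otherwise, admits a TT representation on the grouped index types α_i = β_i × β_i with the same ranks (1, r_1, …, r_{d-1}, 1). -/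
open scoped BigOperators

/-- **TT representation of a diagonal matrix**: if `w` has a TT representation
with ranks `(1, r 1, …, r (d-1), 1)`, then the diagonal matrix `diag(w)`,
written entrywise on the grouped index types `β i × β i`, admits a TT
representation with the same ranks. -/
theorem tt_diag_rank {R : Type*} [CommRing R] (d : ℕ) (hd : 1 ≤ d)
    (β : Fin d → Type*) [∀ i, DecidableEq (β i)]
    (w : (∀ i, β i) → R) (r : Fin (d + 1) → ℕ) (hw : IsTTRep w r)
    (D : (∀ i : Fin d, β i × β i) → R)
    (hD : ∀ x : ∀ i : Fin d, β i × β i,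
      D x = (∏ i : Fin d, if (x i).1 = (x i).2 then (1 : R) else 0)
              * w (fun i => (x i).1)) :
    IsTTRep D r := by
  obtain ⟨h0, hl, G, hG⟩ := hw
  refine ⟨h0, hl, fun i p a b => (if p.1 = p.2 then (1 : R) else 0) * G i p.1 a b, ?_⟩
  intro x
  rw [hD, hG]
  rw [Finset.mul_sum]
  congr 1
  funext βs
  rw [← Finset.prod_mul_distrib]
end

section
/- Let R be a commutative ring, d ≥ 1, and let β_1,…,β_d be finite types. Suppose the matrix function a on grouped indices admits a TT representation with cores A_i : β_i × β_i → Matrix (Fin R_{i-1}) (Fin R_i) R (R_0 = R_d = 1), and the vector function f : β_1 × ⋯ × β_d → R admits a TT representation with cores F_i : β_i → Matrix (Fin r_{i-1}) (Fin r_i) R (r_0 = r_d = 1). Then the matrix-by-vector product g(x_1,…,x_d) = Σ_{(x'_1,…,x'_d)} a((x_1,x'_1),…,(x_d,x'_d)) · f(x'_1,…,x'_d) admits the TT representation with cores G_i(x_i) = Σ_{x'_i ∈ β_i} A_i(x_i,x'_i) ⊗ F_i(x'_i), where ⊗ is the Kronecker product of matrices; in particular g has a TT representation with ranks (1, R_1·r_1,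 …, R_{d-1}·r_{d-1}, 1). -/
open scoped BigOperators

open Kronecker

/-- Splitting a pi type of products into a product of pi types. -/
def piProdSplit {ι : Type*} (P Q : ι → Type*) :
    (∀ j, P j × Q j) ≃ (∀ j, P j) × (∀ j, Q j) where
  toFun γ := (fun j => (γ j).1, fun j => (γ j).2)
  invFun p := fun j => (p.1 j, p.2 j)
  left_inv γ := rfl
  right_inv p := rfl

/-- **TT representation of a matrix-by-vector product** (cf. Section 3.1 of the
paper).  If the matrix `a` (on grouped indices `β i × β i`) is given by TT cores
`A i` with ranks `Ra`, and the vector `f` by TT cores `F i` with ranks `rf`,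
then `g = a · f` is represented by the TT cores
`G i (x i) = Σ_{x'} A i (x i, x') ⊗ₖ F i x'` (Kronecker products), so that `g`
admits a TT representation with ranks `(1, Ra 1 * rf 1, …, Ra (d-1) * rf (d-1), 1)`. -/
theorem tt_matvec_kronecker {R : Type*} [CommRing R] (d : ℕ) (hd : 1 ≤ d)
    (β : Fin d → Type*) [∀ i, Fintype (β i)]
    (Ra rf : Fin (d + 1) → ℕ)
    (hRa0 : Ra 0 = 1) (hRad : Ra (Fin.last d) = 1)
    (hrf0 : rf 0 = 1) (hrfd : rf (Fin.last d) = 1)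
    (A : ∀ i : Fin d, β i × β i → Matrix (Fin (Ra i.castSucc)) (Fin (Ra i.succ)) R)
    (F : ∀ i : Fin d, β i → Matrix (Fin (rf i.castSucc)) (Fin (rf i.succ)) R)
    (a : (∀ i : Fin d, β i × β i) → R) (f : (∀ i, β i) → R)
    (ha : ∀ x : ∀ i : Fin d, β i × β i,
      a x = ∑ γ : ∀ j : Fin (d + 1), Fin (Ra j),
              ∏ i : Fin d, A i (x i) (γ i.castSucc) (γ i.succ))
    (hf : ∀ y : ∀ i, β i,
      f y = ∑ γ : ∀ j : Fin (d + 1), Fin (rf j),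
              ∏ i : Fin d, F i (y i) (γ i.castSucc) (γ i.succ))
    (g : (∀ i, β i) → R)
    (hg : ∀ x : ∀ i, β i,
      g x = ∑ y : ∀ i, β i, a (fun i => (x i, y i)) * f y) :
    (∀ x : ∀ i, β i,
      g x = ∑ γ : ∀ j : Fin (d + 1), Fin (Ra j) × Fin (rf j),
              ∏ i : Fin d,
                (∑ x' : β i, A i (x i, x') ⊗ₖ F i x') (γ i.castSucc) (γ i.succ))
    ∧ ∃ t : Fin (d + 1) → ℕ, (∀ j, t j = Ra j * rf j) ∧ IsTTRep g t := by
  have key : ∀ x : ∀ i, β i,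
      g x = ∑ γ : ∀ j : Fin (d + 1), Fin (Ra j) × Fin (rf j),
              ∏ i : Fin d,
                (∑ x' : β i, A i (x i, x') ⊗ₖ F i x') (γ i.castSucc) (γ i.succ) := by
    intro x
    have hLHS : g x = ∑ y : ∀ i, β i,
        ∑ γ : (∀ j : Fin (d + 1), Fin (Ra j)) × (∀ j : Fin (d + 1), Fin (rf j)),
          ∏ i : Fin d,
            (A i (x i, y i) (γ.1 i.castSucc) (γ.1 i.succ) *
              F i (y i) (γ.2 i.castSucc) (γ.2 i.succ)) := by
      rw [hg]
      refine Finset.sum_congr rfl fun y _ => ?_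
      rw [ha, hf, Finset.sum_mul_sum, ← Fintype.sum_prod_type']
      exact Finset.sum_congr rfl fun γ _ => (Finset.prod_mul_distrib).symm
    rw [hLHS, Finset.sum_comm]
    exact (Fintype.sum_equiv (piProdSplit (fun j => Fin (Ra j)) (fun j => Fin (rf j)))
      _ _ (fun γ => by
        simp only [Matrix.sum_apply, Matrix.kroneckerMap_apply]
        rw [Finset.prod_univ_sum]
        simp [piProdSplit, Fintype.piFinset_univ])).symm
  refine ⟨key, fun j => Ra j * rf j, fun j => rfl, ?_, ?_, ?_⟩
  · simp [hRa0, hrf0]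
  · simp [hRad, hrfd]
  · refine ⟨fun i xi => Matrix.reindex finProdFinEquiv finProdFinEquiv
      (∑ x' : β i, A i (xi, x') ⊗ₖ F i x'), fun x => ?_⟩
    rw [key x]
    exact Fintype.sum_equiv (Equiv.piCongrRight fun j => finProdFinEquiv) _ _
      (fun γ => Finset.prod_congr rfl fun i _ => by
        simp [Matrix.reindex_apply, Equiv.piCongrRight])
end

section
/- Let K be a field, d ≥ 2, and let α_1,…,α_d be finite nonempty types. Every function f : α_1 × ⋯ × α_d → K admits a TT representation with ranks (1, r_1, …, r_{d-1}, 1) where r_i equals the rank of the i-th unfolding matrix of f, for each i = 1,…,d−1. -/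
open scoped BigOperators

/-- The `i`-th unfolding matrix of `f`: rows are indexed by the tuples over the
first `i` variables (`k` with `(k : ℕ) < i`), columns by the tuples over the
remaining variables, and the entry is the value of `f` at the assembled point. -/
def unfoldingMatrix {K : Type*} [Field K] {d : ℕ} {α : Fin d → Type*}
    (f : (∀ i, α i) → K) (i : ℕ) :
    Matrix (∀ k : {k : Fin d // (k : ℕ) < i}, α k.val)
           (∀ k : {k : Fin d // ¬ (k : ℕ) < i}, α k.val) K :=
  fun u v => f (fun k => if h : (k : ℕ) < i then u ⟨k, h⟩ else v ⟨k, h⟩)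

section TTSVDAux

set_option linter.unusedSectionVars false

/-- Telescoping lemma: contracting a chain of matrices against a compatible
family of "tail vectors". -/
lemma TTSVD.tt_master {K : Type*} [CommRing K] : ∀ (n : ℕ) (ρ : ℕ → ℕ)
    (M : ∀ i : ℕ, Matrix (Fin (ρ i)) (Fin (ρ (i+1))) K)
    (F : ∀ j : ℕ, Fin (ρ j) → K),
    (∀ i < n, ∀ β, F i β = ∑ γ, M i β γ * F (i+1) γ) →
    ∀ u : Fin (ρ 0) → K,
    ∑ β : (∀ j : Fin (n+1), Fin (ρ j)),
        (u (β 0) * ∏ i : Fin n, M i (β i.castSucc) (β i.succ)) * F n (β (Fin.last n))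
      = ∑ β0, u β0 * F 0 β0
  | 0, ρ, M, F, hF, u => by
    have hbij : Function.Bijective (fun β : (∀ j : Fin 1, Fin (ρ j)) => β 0) := by
      constructor
      · intro a b h
        funext j
        have hj : j = 0 := Subsingleton.elim _ _
        subst hj
        exact h
      · intro b0
        exact ⟨fun j => (Subsingleton.elim (0 : Fin 1) j) ▸ b0, rfl⟩
    refine Fintype.sum_bijective _ hbij _ _ fun β => ?_
    show (u (β 0) * _) * F 0 (β (Fin.last 0)) = u (β 0) * F 0 (β 0)
    have h0 : β (Fin.last 0) = β 0 := rfl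
    rw [h0, Finset.univ_eq_empty, Finset.prod_empty, mul_one]
  | (n+1), ρ, M, F, hF, u => by
    have hv : ∀ γ, Matrix.vecMul u (M 0) γ = ∑ b0, u b0 * M 0 b0 γ := by
      intro γ; simp [Matrix.vecMul, dotProduct]
    have IH := tt_master n (fun j => ρ (j+1)) (fun i => M (i+1)) (fun j => F (j+1))
      (fun i hi β => hF (i+1) (by omega) β) (Matrix.vecMul u (M 0))
    calc ∑ β : (∀ j : Fin (n+2), Fin (ρ j)),
            (u (β 0) * ∏ i : Fin (n+1), M i (β i.castSucc) (β i.succ)) * F (n+1) (β (Fin.last (n+1)))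
        = ∑ p : ((fun j : Fin (n+2) => Fin (ρ (j : ℕ))) 0) ×
              (∀ j : Fin (n+1), Fin (ρ ((j.succ : Fin (n+2)) : ℕ))),
            (u ((Fin.consEquiv (fun j : Fin (n+2) => Fin (ρ (j : ℕ)))) p 0) *
              ∏ i : Fin (n+1),
                M i ((Fin.consEquiv (fun j : Fin (n+2) => Fin (ρ (j : ℕ)))) p i.castSucc)
                  ((Fin.consEquiv (fun j : Fin (n+2) => Fin (ρ (j : ℕ)))) p i.succ)) *
              F (n+1) ((Fin.consEquiv (fun j : Fin (n+2) => Fin (ρ (j : ℕ)))) p (Fin.last (n+1)))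
          := (Fintype.sum_equiv (Fin.consEquiv (fun j : Fin (n+2) => Fin (ρ (j : ℕ)))) _ _
              fun p => rfl).symm
      _ = ∑ br : (∀ j : Fin (n+1), Fin (ρ ((j : ℕ)+1))), ∑ b0 : Fin (ρ 0),
            (u b0 * (M 0 b0 (br 0) * ∏ i : Fin n, M ((i : ℕ)+1) (br i.castSucc) (br i.succ))) *
              F (n+1) (br (Fin.last n)) := by
          rw [Fintype.sum_prod_type, Finset.sum_comm]
          refine Finset.sum_congr rfl fun br _ => Finset.sum_congr rfl fun b0 _ => ?_
          rw [Fin.prod_univ_succ]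
          rfl
      _ = ∑ br : (∀ j : Fin (n+1), Fin (ρ ((j : ℕ)+1))),
            (Matrix.vecMul u (M 0) (br 0) * ∏ i : Fin n, M ((i : ℕ)+1) (br i.castSucc) (br i.succ)) *
              F (n+1) (br (Fin.last n)) := by
          refine Finset.sum_congr rfl fun br _ => ?_
          rw [hv (br 0), Finset.sum_mul, Finset.sum_mul]
          refine Finset.sum_congr rfl fun b0 _ => by ring
      _ = ∑ β0, Matrix.vecMul u (M 0) β0 * F 1 β0 := IH
      _ = ∑ β0, u β0 * F 0 β0 := by
          have h0 : ∀ β0, u β0 * F 0 β0 = ∑ γ, (u β0 * M 0 β0 γ) * F 1 γ := by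
            intro β0
            rw [hF 0 (Nat.succ_pos n) β0, Finset.mul_sum]
            exact Finset.sum_congr rfl fun γ _ => by ring
          simp_rw [h0]
          rw [Finset.sum_comm]
          refine Finset.sum_congr rfl fun γ _ => ?_
          rw [hv, Finset.sum_mul]

namespace TTSVD

variable {K : Type*} [Field K] {d : ℕ} {α : Fin d → Type*}

/-- tail tuple type -/
abbrev TTail (α : Fin d → Type*) (n : ℕ) : Type _ :=
  ∀ k : {k : Fin d // ¬ (k : ℕ) < n}, α k.val

/-- the row of the `n`-th unfolding matrix determined by a full point `y` -/
def rowF (f : (∀ i, α i) → K) (n : ℕ) (y : ∀ i, α i) : TTail α n → K :=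
  fun v => f (fun k => if h : (k : ℕ) < n then y k else v ⟨k, h⟩)

def rowSpan (f : (∀ i, α i) → K) (n : ℕ) : Submodule K (TTail α n → K) :=
  Submodule.span K (Set.range (rowF f n))

/-- extend a tail tuple at level `n+1` by a value at coordinate `n` -/
def ext1 (n : ℕ) (hn : n < d) (x : α ⟨n, hn⟩) (v : TTail α (n+1)) : TTail α n :=
  fun k => if h : k.1 = (⟨n, hn⟩ : Fin d) then cast (congrArg α h.symm) x
    else v ⟨k.1, fun hlt => h (Fin.ext (show ((k.1 : Fin d) : ℕ) = n from by
      have h2 := k.2; omega))⟩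

lemma tail_ext1 (n : ℕ) (hn : n < d) (x : ∀ i, α i) :
    (fun k => x k.1 : TTail α n) = ext1 n hn (x ⟨n, hn⟩) (fun k => x k.1) := by
  funext k
  obtain ⟨k1, hk⟩ := k
  show x k1 = ext1 n hn (x ⟨n, hn⟩) (fun k => x k.1) ⟨k1, hk⟩
  unfold ext1
  by_cases h : k1 = (⟨n, hn⟩ : Fin d)
  · subst h; simp
  · rw [dif_neg h]

lemma slice_rowF (f : (∀ i, α i) → K) (n : ℕ) (hn : n < d) (x : α ⟨n, hn⟩) (y : ∀ i, α i) :
    (fun v => rowF f n y (ext1 n hn x v)) = rowF f (n+1) (Function.update y ⟨n, hn⟩ x) := by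
  funext v
  show f _ = f _
  congr 1
  funext k
  by_cases h1 : (k : ℕ) < n
  · rw [dif_pos h1, dif_pos (by omega : (k:ℕ) < n + 1),
      Function.update_of_ne (by intro hk; subst hk; simp at h1)]
  · rw [dif_neg h1]
    by_cases h2 : k = (⟨n, hn⟩ : Fin d)
    · subst h2
      simp [ext1, Function.update_self]
    · have hk : ¬ (k : ℕ) < n + 1 := by
        intro hlt
        exact h2 (Fin.ext (show ((k : Fin d) : ℕ) = n from by omega))
      rw [dif_neg hk]
      simp only [ext1, dif_neg h2]

lemma slice_rowSpan_le (f : (∀ i, α i) → K) (n : ℕ) (hn : n < d) (x : α ⟨n, hn⟩) :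
    (rowSpan f n).map (LinearMap.funLeft K K (ext1 n hn x)) ≤ rowSpan f (n+1) := by
  rw [rowSpan, Submodule.map_span]
  apply Submodule.span_le.2
  rintro _ ⟨_, ⟨y, rfl⟩, rfl⟩
  exact Submodule.subset_span ⟨Function.update y ⟨n, hn⟩ x, (slice_rowF f n hn x y).symm⟩

lemma finrank_rowSpan [∀ i, Fintype (α i)] [∀ i, Nonempty (α i)]
    (f : (∀ i, α i) → K) (n : ℕ) :
    Module.finrank K (rowSpan f n) = (unfoldingMatrix f n).rank := by
  classical
  have hr : Set.range (rowF f n) = Set.range (unfoldingMatrix f n) := by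
    ext g
    constructor
    · rintro ⟨y, rfl⟩
      exact ⟨fun k => y k.1, rfl⟩
    · rintro ⟨u, rfl⟩
      refine ⟨fun i => if h : (i : ℕ) < n then u ⟨i, h⟩ else Classical.arbitrary (α i), ?_⟩
      funext v
      show f _ = f _
      congr 1
      funext k
      by_cases h : (k : ℕ) < n <;> simp [h]
  rw [← Matrix.rank_transpose, Matrix.rank_eq_finrank_span_cols]
  change _ = Module.finrank K (Submodule.span K (Set.range (unfoldingMatrix f n)))
  rw [← hr]
  rfl

variable [∀ i, Fintype (α i)] [∀ i, Nonempty (α i)]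

/-- the TT ranks -/
noncomputable def rr (f : (∀ i, α i) → K) (n : ℕ) : ℕ :=
  if n = 0 ∨ n = d then 1 else (unfoldingMatrix f n).rank

/-- the spanning family at level `n` -/
noncomputable def Wfam (f : (∀ i, α i) → K) (n : ℕ) : Fin (rr f n) → (TTail α n → K) :=
  if h : n = 0 ∨ n = d then
    (if n = 0 then fun _ => rowF f n (fun i => Classical.arbitrary (α i)) else fun _ _ => 1)
  else fun β =>
    ((Module.finBasisOfFinrankEq K (rowSpan f n)
      ((finrank_rowSpan f n).trans (by simp only [rr, if_neg h]))) β : TTail α n → K)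

lemma rr_zero (f : (∀ i, α i) → K) : rr f 0 = 1 := by simp [rr]
lemma rr_d (f : (∀ i, α i) → K) : rr f d = 1 := by simp [rr]

lemma Wfam_zero (f : (∀ i, α i) → K) (β : Fin (rr f 0)) :
    Wfam f 0 β = rowF f 0 (fun i => Classical.arbitrary (α i)) := by
  simp [Wfam]

lemma Wfam_d (f : (∀ i, α i) → K) (hd : d ≠ 0) (β : Fin (rr f d)) (v : TTail α d) :
    Wfam f d β v = 1 := by
  unfold Wfam
  rw [dif_pos (Or.inr rfl), if_neg hd]

lemma rowF_zero (f : (∀ i, α i) → K) (y y' : ∀ i, α i) :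
    rowF f 0 y = rowF f 0 y' := by
  funext v
  exact congrArg f (funext fun k => by
    rw [dif_neg (Nat.not_lt_zero _), dif_neg (Nat.not_lt_zero _)])

lemma rowF_d (f : (∀ i, α i) → K) (y : ∀ i, α i) (v : TTail α d) :
    rowF f d y v = f y := by
  exact congrArg f (funext fun k => dif_pos k.isLt)

lemma span_Wfam (f : (∀ i, α i) → K) {n : ℕ} (h : ¬ (n = 0 ∨ n = d)) :
    Submodule.span K (Set.range (Wfam f n)) = rowSpan f n := by
  have hb : Wfam f n = fun β =>
      ((Module.finBasisOfFinrankEq K (rowSpan f n)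
        ((finrank_rowSpan f n).trans (by simp only [rr, if_neg h]))) β : TTail α n → K) := by
    simp only [Wfam, dif_neg h]
  set b := Module.finBasisOfFinrankEq K (rowSpan f n)
      ((finrank_rowSpan f n).trans (show (unfoldingMatrix f n).rank = rr f n by
        simp only [rr, if_neg h])) with hbdef
  rw [hb]
  have : Set.range (fun β => ((b β : TTail α n → K))) = (rowSpan f n).subtype '' Set.range b := by
    rw [← Set.range_comp]; rfl
  rw [this, Submodule.span_image, b.span_eq, Submodule.map_subtype_top]

lemma rowF_mem_span_Wfam (f : (∀ i, α i) → K) (hd0 : 0 < d) (n : ℕ) (y : ∀ i, α i) :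
    rowF f n y ∈ Submodule.span K (Set.range (Wfam f n)) := by
  by_cases h : n = 0 ∨ n = d
  · rcases h with h0 | hdd
    · subst h0
      have hβ : (0 : ℕ) < rr f 0 := by rw [rr_zero]; norm_num
      have : rowF f 0 y = Wfam f 0 ⟨0, hβ⟩ := by
        rw [Wfam_zero]; exact rowF_zero f y _
      rw [this]
      exact Submodule.subset_span (Set.mem_range_self _)
    · subst hdd
      have hβ : (0 : ℕ) < rr f n := by rw [rr_d]; norm_num
      have : rowF f n y = (f y) • Wfam f n ⟨0, hβ⟩ := by
        funext v
        rw [Pi.smul_apply, Wfam_d f (by omega), rowF_d, smul_eq_mul, mul_one]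
      rw [this]
      exact Submodule.smul_mem _ _ (Submodule.subset_span (Set.mem_range_self _))
  · rw [span_Wfam f h]
    exact Submodule.subset_span (Set.mem_range_self _)

lemma Wfam_mem_rowSpan (f : (∀ i, α i) → K) {n : ℕ} (hn : n < d) (β : Fin (rr f n)) :
    Wfam f n β ∈ rowSpan f n := by
  by_cases h : n = 0 ∨ n = d
  · have h0 : n = 0 := by rcases h with h | h; exact h; omega
    subst h0
    rw [Wfam_zero]
    exact Submodule.subset_span (Set.mem_range_self _)
  · have hb : Wfam f n β =
        ((Module.finBasisOfFinrankEq K (rowSpan f n)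
          ((finrank_rowSpan f n).trans (by simp only [rr, if_neg h]))) β : TTail α n → K) := by
      simp only [Wfam, dif_neg h]
    rw [hb]
    exact SetLike.coe_mem _

lemma slice_Wfam_mem (f : (∀ i, α i) → K) {n : ℕ} (hn : n < d) (x : α ⟨n, hn⟩)
    (β : Fin (rr f n)) :
    (fun v => Wfam f n β (ext1 n hn x v)) ∈
      Submodule.span K (Set.range (Wfam f (n+1))) := by
  have h1 : Wfam f n β ∈ rowSpan f n := Wfam_mem_rowSpan f hn β
  have h2 : (LinearMap.funLeft K K (ext1 n hn x)) (Wfam f n β) ∈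
      (rowSpan f n).map (LinearMap.funLeft K K (ext1 n hn x)) :=
    Submodule.mem_map_of_mem h1
  have h3 := slice_rowSpan_le f n hn x h2
  have h4 : rowSpan f (n+1) ≤ Submodule.span K (Set.range (Wfam f (n+1))) := by
    apply Submodule.span_le.2
    rintro _ ⟨y, rfl⟩
    exact rowF_mem_span_Wfam f (by omega) (n+1) y
  exact h4 h3

/-- the TT cores -/
noncomputable def Gcore (f : (∀ i, α i) → K) (n : ℕ) (hn : n < d) (x : α ⟨n, hn⟩) :
    Matrix (Fin (rr f n)) (Fin (rr f (n+1))) K :=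
  fun β => Classical.choose ((Submodule.mem_span_range_iff_exists_fun K).1 (slice_Wfam_mem f hn x β))

lemma Gcore_spec (f : (∀ i, α i) → K) (n : ℕ) (hn : n < d) (x : α ⟨n, hn⟩)
    (β : Fin (rr f n)) (v : TTail α (n+1)) :
    Wfam f n β (ext1 n hn x v) = ∑ γ, Gcore f n hn x β γ * Wfam f (n+1) γ v := by
  have hs := Classical.choose_spec ((Submodule.mem_span_range_iff_exists_fun K).1 (slice_Wfam_mem f hn x β))
  have := congrFun hs v
  simp only [Finset.sum_apply, Pi.smul_apply, smul_eq_mul] at this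
  rw [← this]
  rfl

end TTSVD

end TTSVDAux

/-- **Exact TT representation with unfolding ranks (TT-SVD)**: every function
`f` on a product of finite nonempty types admits a TT representation whose
`i`-th rank equals the rank of the `i`-th unfolding matrix of `f` for every
interior `i = 1, …, d-1` (and equals 1 at the boundary). -/
theorem exists_tt_rep_with_unfolding_ranks {K : Type*} [Field K]
    (d : ℕ) (hd : 2 ≤ d)
    (α : Fin d → Type*) [∀ i, Fintype (α i)] [∀ i, Nonempty (α i)]
    (f : (∀ i, α i) → K) :
    IsTTRep f (fun i : Fin (d + 1) =>
      if (i : ℕ) = 0 ∨ (i : ℕ) = d then 1 else (unfoldingMatrix f (i : ℕ)).rank) := by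
  classical
  refine ⟨by simp, by simp, fun i => TTSVD.Gcore f (i : ℕ) i.isLt, fun x => ?_⟩
  set ρ : ℕ → ℕ := fun n => TTSVD.rr f n with hρ
  set M : ∀ i : ℕ, Matrix (Fin (ρ i)) (Fin (ρ (i+1))) K :=
    fun i => if h : i < d then TTSVD.Gcore f i h (x ⟨i, h⟩) else 0 with hM
  set F : ∀ j : ℕ, Fin (ρ j) → K :=
    fun j β => TTSVD.Wfam f j β (fun k => x k.1) with hF
  have hcompat : ∀ i < d, ∀ β, F i β = ∑ γ, M i β γ * F (i+1) γ := by
    intro i hi β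
    have h1 : F i β = TTSVD.Wfam f i β
        (TTSVD.ext1 i hi (x ⟨i, hi⟩) (fun k => x k.1)) := by
      rw [hF]
      exact congrArg _ (TTSVD.tail_ext1 i hi x)
    rw [h1, TTSVD.Gcore_spec f i hi (x ⟨i, hi⟩) β (fun k => x k.1)]
    refine Finset.sum_congr rfl fun γ _ => ?_
    simp only [hM, hF]
    rw [dif_pos hi]
  have hmaster := TTSVD.tt_master d ρ M F hcompat (fun _ => (1 : K))
  have hF0 : ∀ β0 : Fin (ρ 0), F 0 β0 = f x := by
    intro β0
    simp only [hF]
    rw [TTSVD.Wfam_zero]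
    exact congrArg f (funext fun k => dif_neg (Nat.not_lt_zero _))
  have hFd : ∀ β : (∀ j : Fin (d+1), Fin (ρ (j : ℕ))),
      F d (β (Fin.last d)) = 1 := by
    intro β
    exact TTSVD.Wfam_d f (by omega) _ _
  have hrhs : ∑ β0 : Fin (ρ 0), (1 : K) * F 0 β0 = f x := by
    rw [Finset.sum_congr rfl fun β0 _ => (one_mul _).trans (hF0 β0)]
    rw [Finset.sum_const, Finset.card_univ, Fintype.card_fin]
    show TTSVD.rr f 0 • f x = f x
    rw [TTSVD.rr_zero, one_smul]
  rw [← hrhs, ← hmaster]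
  refine Finset.sum_congr rfl fun β _ => ?_
  rw [hFd β, mul_one, one_mul]
  refine Finset.prod_congr rfl fun i _ => ?_
  simp only [hM]
  rw [dif_pos i.isLt]
end
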